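/- arXiv:1111.4475 — 9 statements merged into one kernel-verified Lean document; each statement's English description precedes it below -/
import Mathlib

section
/- Splitting lemma (real-analytic version): identify a monic complex polynomial z^n + ∑_{j=1}^n (−1)^j a_j z^{n−j} with its coefficient vector a = (a_1,…,a_n) ∈ ℂ^n. Let P_0 be a monic polynomial of degree n with P_0 = P_1^0 · P_2^0, where P_1^0 and P_2^0 are monic of degrees p and n−p respectively and have no common root. Then there exist an open neighborhood U of the coefficient vector of P_0 in ℂ^n and real-analytic maps b : U → ℂ^p and c : U → ℂ^{n−p} such that b and c take at P_0 the values given by the coefficient vectors of P_1^0 and P_2^0, and for every a ∈ U the monic polynomial with coefficient vector a equals the product of the monic polynomials with coefficient vectors b(a) and c(a). -/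
open Polynomial

/-- The monic polynomial `z^n + ∑_{j=1}^n (-1)^j a_j z^{n-j}`, where `a j` (for `j : Fin n`)
corresponds to the coefficient `a_{j+1}`; it is identified with its coefficient vector
`a ∈ ℂ^n`. -/
noncomputable def monicPoly (n : ℕ) (a : Fin n → ℂ) : Polynomial ℂ :=
  X ^ n + ∑ j : Fin n, C ((-1 : ℂ) ^ ((j : ℕ) + 1) * a j) * X ^ (n - ((j : ℕ) + 1))


namespace SplitAux

noncomputable def lowPoly (m : ℕ) (b : Fin m → ℂ) : Polynomial ℂ :=
  ∑ i : Fin m, C ((-1 : ℂ) ^ ((i : ℕ) + 1) * b i) * X ^ (m - ((i : ℕ) + 1))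

lemma monicPoly_eq (m : ℕ) (b : Fin m → ℂ) : monicPoly m b = X ^ m + lowPoly m b := rfl

lemma lowPoly_degree_lt (m : ℕ) (b : Fin m → ℂ) : (lowPoly m b).degree < (m : ℕ) := by
  refine lt_of_le_of_lt (degree_sum_le _ _) ?_
  rw [Finset.sup_lt_iff (by exact WithBot.bot_lt_coe m)]
  intro i _
  refine lt_of_le_of_lt (degree_C_mul_X_pow_le _ _) ?_
  exact_mod_cast (by have := i.2; omega : m - ((i : ℕ) + 1) < m)

lemma lowPoly_coeff (m : ℕ) (b : Fin m → ℂ) (i : Fin m) :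
    (lowPoly m b).coeff (m - ((i : ℕ) + 1)) = (-1 : ℂ) ^ ((i : ℕ) + 1) * b i := by
  rw [lowPoly, finset_sum_coeff]
  rw [Finset.sum_eq_single i]
  · rw [coeff_C_mul_X_pow, if_pos rfl]
  · intro k _ hk
    have hne : ¬ (m - ((i : ℕ) + 1) = m - ((k : ℕ) + 1)) := by
      have := k.2; have := i.2
      have : (k : ℕ) ≠ (i : ℕ) := fun h => hk (Fin.ext h)
      omega
    rw [coeff_C_mul_X_pow, if_neg hne]
  · simp

lemma lowPoly_add (m : ℕ) (b b' : Fin m → ℂ) :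
    lowPoly m (b + b') = lowPoly m b + lowPoly m b' := by
  simp [lowPoly, mul_add, map_add, add_mul, Finset.sum_add_distrib]

lemma lowPoly_smul (m : ℕ) (s : ℂ) (b : Fin m → ℂ) :
    lowPoly m (s • b) = C s * lowPoly m b := by
  simp only [lowPoly, Finset.mul_sum, Pi.smul_apply, smul_eq_mul]
  refine Finset.sum_congr rfl fun i _ => ?_
  rw [mul_left_comm ((-1 : ℂ) ^ ((i : ℕ) + 1)) s, C_mul, mul_assoc]

lemma monicPoly_monic (m : ℕ) (b : Fin m → ℂ) : (monicPoly m b).Monic := by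
  rw [monicPoly_eq]
  exact (monic_X_pow m).add_of_left (by simpa using lowPoly_degree_lt m b)

lemma monicPoly_degree (m : ℕ) (b : Fin m → ℂ) : (monicPoly m b).degree = (m : ℕ) := by
  rw [monicPoly_eq, degree_add_eq_left_of_degree_lt (by simpa using lowPoly_degree_lt m b),
    degree_X_pow]

lemma monicPoly_natDegree (m : ℕ) (b : Fin m → ℂ) : (monicPoly m b).natDegree = m :=
  natDegree_eq_of_degree_eq_some (monicPoly_degree m b)

lemma monicPoly_coeff (m : ℕ) (b : Fin m → ℂ) (i : Fin m) :
    (monicPoly m b).coeff (m - ((i : ℕ) + 1)) = (-1 : ℂ) ^ ((i : ℕ) + 1) * b i := by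
  rw [monicPoly_eq, coeff_add, coeff_X_pow, if_neg (by have := i.2; omega), zero_add,
    lowPoly_coeff]

noncomputable def extractCoeffs (n : ℕ) (R : Polynomial ℂ) : Fin n → ℂ :=
  fun j => (-1 : ℂ) ^ ((j : ℕ) + 1) * R.coeff (n - ((j : ℕ) + 1))

lemma extractCoeffs_add (n : ℕ) (R S : Polynomial ℂ) :
    extractCoeffs n (R + S) = extractCoeffs n R + extractCoeffs n S := by
  funext j; simp [extractCoeffs, mul_add]

lemma extractCoeffs_smul (n : ℕ) (s : ℂ) (R : Polynomial ℂ) :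
    extractCoeffs n (C s * R) = s • extractCoeffs n R := by
  funext j; simp [extractCoeffs, coeff_C_mul]; ring

lemma extractCoeffs_monicPoly (n : ℕ) (a : Fin n → ℂ) :
    extractCoeffs n (monicPoly n a) = a := by
  funext j
  rw [extractCoeffs, monicPoly_coeff, ← mul_assoc, ← mul_pow]
  norm_num

lemma neg_one_pow_ne (k : ℕ) : ((-1 : ℂ) ^ k) ≠ 0 := by
  simp [pow_ne_zero]

lemma monicPoly_extractCoeffs {n : ℕ} {R : Polynomial ℂ} (hR : R.Monic)
    (hdeg : R.natDegree = n) : monicPoly n (extractCoeffs n R) = R := by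
  ext k
  rcases lt_trichotomy k n with hk | hk | hk
  · have hk' : k = n - (((⟨n - k - 1, by omega⟩ : Fin n) : ℕ) + 1) := by
      show k = n - (n - k - 1 + 1); omega
    rw [hk', monicPoly_coeff, extractCoeffs, ← mul_assoc, ← mul_pow]
    norm_num
  · subst hk
    rw [monicPoly_eq, coeff_add, coeff_X_pow, if_pos rfl,
      coeff_eq_zero_of_degree_lt (by simpa using lowPoly_degree_lt k _), add_zero]
    exact (hdeg ▸ hR.coeff_natDegree).symm
  · rw [coeff_eq_zero_of_natDegree_lt (by rw [monicPoly_natDegree]; omega),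
      coeff_eq_zero_of_natDegree_lt (by omega)]




noncomputable def lowL (m : ℕ) : (Fin m → ℂ) →ₗ[ℂ] Polynomial ℂ where
  toFun := lowPoly m
  map_add' := lowPoly_add m
  map_smul' s b := by
    show lowPoly m (s • b) = s • lowPoly m b
    rw [lowPoly_smul, smul_eq_C_mul]

noncomputable def extractL (n : ℕ) : Polynomial ℂ →ₗ[ℂ] (Fin n → ℂ) where
  toFun := extractCoeffs n
  map_add' := extractCoeffs_add n
  map_smul' s R := by
    show extractCoeffs n (s • R) = s • extractCoeffs n R
    rw [smul_eq_C_mul, extractCoeffs_smul]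

noncomputable def DL (n p q : ℕ) (P0 Q0 : Polynomial ℂ) :
    ((Fin p → ℂ) × (Fin q → ℂ)) →ₗ[ℂ] (Fin n → ℂ) :=
  (extractL n).comp
    (((LinearMap.mulRight ℂ Q0).comp ((lowL p).comp (LinearMap.fst ℂ _ _)))
      + ((LinearMap.mulLeft ℂ P0).comp ((lowL q).comp (LinearMap.snd ℂ _ _))))

lemma DL_apply (n p q : ℕ) (P0 Q0 : Polynomial ℂ) (v : (Fin p → ℂ) × (Fin q → ℂ)) :
    DL n p q P0 Q0 v = extractCoeffs n (lowPoly p v.1 * Q0 + P0 * lowPoly q v.2) := rfl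

lemma degree_low_mul_lt {m w : ℕ} (A : Polynomial ℂ) (Q : Polynomial ℂ)
    (hA : A.degree < (m : ℕ)) (hQ : Q.degree = (w : ℕ)) (t : ℕ) (ht : m + w ≤ t) :
    (A * Q).degree < (t : ℕ) := by
  refine lt_of_le_of_lt (degree_mul_le _ _) ?_
  rw [hQ]
  cases hAd : A.degree with
  | bot =>
    rw [WithBot.bot_add]
    exact bot_lt_iff_ne_bot.mpr (by simp)
  | coe a =>
    rw [hAd] at hA
    simp only [Nat.cast_withBot] at hA ⊢
    rw [← WithBot.coe_add]
    have ha : a < m := WithBot.coe_lt_coe.mp hA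
    exact WithBot.coe_lt_coe.mpr (by omega)

lemma DL_bijective (n p q : ℕ) (hpq : p + q = n) (b0 : Fin p → ℂ) (c0 : Fin q → ℂ)
    (hcop : IsCoprime (monicPoly p b0) (monicPoly q c0)) :
    Function.Bijective (DL n p q (monicPoly p b0) (monicPoly q c0)) := by
  set P0 := monicPoly p b0 with hP0
  set Q0 := monicPoly q c0 with hQ0
  have hinj : Function.Injective (DL n p q P0 Q0) := by
    refine (injective_iff_map_eq_zero _).mpr fun v hv => ?_
    rw [DL_apply] at hv
    set S := lowPoly p v.1 * Q0 + P0 * lowPoly q v.2 with hSdef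
    have hdegS : S.degree < (n : ℕ) := by
      refine lt_of_le_of_lt (degree_add_le _ _) (max_lt ?_ ?_)
      · exact degree_low_mul_lt _ _ (lowPoly_degree_lt p v.1) (monicPoly_degree q c0) n
          (by omega)
      · rw [mul_comm]
        exact degree_low_mul_lt _ _ (lowPoly_degree_lt q v.2) (monicPoly_degree p b0) n
          (by omega)
    have hS : S = 0 := by
      ext k
      rcases lt_or_ge k n with hk | hk
      · have hj := congrFun hv (⟨n - k - 1, by omega⟩ : Fin n)
        rw [extractCoeffs] at hj
        have hk' : n - ((n - k - 1) + 1) = k := by omega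
        simp only [Pi.zero_apply] at hj
        rcases mul_eq_zero.mp hj with h | h
        · exact absurd h (neg_one_pow_ne _)
        · rw [coeff_zero, ← hk']; exact h
      · rw [coeff_zero, coeff_eq_zero_of_degree_lt
          (lt_of_lt_of_le hdegS (by exact_mod_cast hk))]
    have hS' : lowPoly p v.1 * Q0 + P0 * lowPoly q v.2 = 0 := hSdef.symm.trans hS
    have hd1 : P0 ∣ lowPoly p v.1 * Q0 := by
      refine ⟨-lowPoly q v.2, ?_⟩
      rw [mul_neg]
      exact eq_neg_of_add_eq_zero_left hS'
    have h10 : lowPoly p v.1 = 0 :=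
      eq_zero_of_dvd_of_degree_lt (hcop.dvd_of_dvd_mul_right hd1)
        (by rw [hP0, monicPoly_degree]; exact lowPoly_degree_lt p v.1)
    have h20 : lowPoly q v.2 = 0 := by
      rw [h10, zero_mul, zero_add] at hS'
      rcases mul_eq_zero.mp hS' with h | h
      · exact absurd h (monicPoly_monic p b0).ne_zero
      · exact h
    have hv1 : v.1 = 0 := by
      funext i
      have := lowPoly_coeff p v.1 i
      rw [h10, coeff_zero] at this
      rcases mul_eq_zero.mp this.symm with h | h
      · exact absurd h (neg_one_pow_ne _)
      · exact h
    have hv2 : v.2 = 0 := by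
      funext i
      have := lowPoly_coeff q v.2 i
      rw [h20, coeff_zero] at this
      rcases mul_eq_zero.mp this.symm with h | h
      · exact absurd h (neg_one_pow_ne _)
      · exact h
    exact Prod.ext_iff.mpr ⟨hv1, hv2⟩
  refine ⟨hinj, ?_⟩
  have hrank : Module.finrank ℂ ((Fin p → ℂ) × (Fin q → ℂ)) = Module.finrank ℂ (Fin n → ℂ) := by
    simp [Module.finrank_prod, hpq]
  exact (LinearMap.injective_iff_surjective_of_finrank_eq_finrank hrank).mp hinj

lemma coprime_of_no_common_root {P Q : Polynomial ℂ}
    (h : ∀ z : ℂ, ¬ (P.IsRoot z ∧ Q.IsRoot z)) : IsCoprime P Q := by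
  rw [Polynomial.isCoprime_iff_aeval_ne_zero_of_isAlgClosed ℂ ℂ P Q]
  intro a
  by_contra hcon
  push_neg at hcon
  exact h a ⟨by simpa [IsRoot, ← Polynomial.aeval_def] using hcon.1,
    by simpa [IsRoot, ← Polynomial.aeval_def] using hcon.2⟩

lemma analyticAt_coeff (m k : ℕ) (x : Fin m → ℂ) :
    AnalyticAt ℝ (fun b : Fin m → ℂ => (monicPoly m b).coeff k) x := by
  have hrw : (fun b : Fin m → ℂ => (monicPoly m b).coeff k) = fun b =>
      (if k = m then (1 : ℂ) else 0) + ∑ i : Fin m,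
        (if k = m - ((i : ℕ) + 1) then (-1 : ℂ) ^ ((i : ℕ) + 1) * b i else 0) := by
    funext b
    rw [monicPoly_eq, coeff_add, coeff_X_pow, lowPoly, finset_sum_coeff]
    congr 1
    exact Finset.sum_congr rfl fun i _ => coeff_C_mul_X_pow _ _ _
  rw [hrw]
  refine analyticAt_const.add (Finset.analyticAt_fun_sum _ fun i _ => ?_)
  by_cases h : k = m - ((i : ℕ) + 1)
  · simp only [if_pos h]
    exact analyticAt_const.mul
      ((ContinuousLinearMap.proj (R := ℝ) (φ := fun _ : Fin m => ℂ) i).analyticAt x)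
  · simp only [if_neg h]
    exact analyticAt_const

lemma analyticAt_Fmap (n p q : ℕ) (x : (Fin p → ℂ) × (Fin q → ℂ)) :
    AnalyticAt ℝ (fun y : (Fin p → ℂ) × (Fin q → ℂ) =>
      extractCoeffs n (monicPoly p y.1 * monicPoly q y.2)) x := by
  have hfst := (ContinuousLinearMap.fst ℝ (Fin p → ℂ) (Fin q → ℂ)).analyticAt x
  have hsnd := (ContinuousLinearMap.snd ℝ (Fin p → ℂ) (Fin q → ℂ)).analyticAt x
  show AnalyticAt ℝ
    (fun y : (Fin p → ℂ) × (Fin q → ℂ) =>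
      (fun j : Fin n => extractCoeffs n (monicPoly p y.1 * monicPoly q y.2) j)) x
  apply AnalyticAt.pi
  intro j
  have hrw : (fun y : (Fin p → ℂ) × (Fin q → ℂ) =>
      extractCoeffs n (monicPoly p y.1 * monicPoly q y.2) j) = fun y =>
      (-1 : ℂ) ^ ((j : ℕ) + 1) * ∑ uv ∈ Finset.HasAntidiagonal.antidiagonal (n - ((j : ℕ) + 1)),
        (monicPoly p y.1).coeff uv.1 * (monicPoly q y.2).coeff uv.2 := by
    funext y
    rw [extractCoeffs, coeff_mul]
  rw [hrw]
  refine analyticAt_const.mul (Finset.analyticAt_fun_sum _ fun uv _ => ?_)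
  exact ((analyticAt_coeff p uv.1 x.1).comp hfst).mul ((analyticAt_coeff q uv.2 x.2).comp hsnd)

lemma real_smul_fun {m : ℕ} (s : ℝ) (b : Fin m → ℂ) : s • b = ((s : ℂ)) • b :=
  funext fun i => by simp [Complex.real_smul]

lemma lowPoly_real_smul (m : ℕ) (s : ℝ) (b : Fin m → ℂ) :
    lowPoly m (s • b) = C ((s : ℂ)) * lowPoly m b := by
  rw [real_smul_fun, lowPoly_smul]

lemma extractCoeffs_real_smul (n : ℕ) (s : ℝ) (R : Polynomial ℂ) :
    extractCoeffs n (C ((s : ℂ)) * R) = s • extractCoeffs n R := by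
  rw [extractCoeffs_smul, ← real_smul_fun]

noncomputable def bilL (n p q : ℕ) :
    (Fin p → ℂ) →ₗ[ℝ] (Fin q → ℂ) →ₗ[ℝ] (Fin n → ℂ) :=
  LinearMap.mk₂ ℝ (fun B C => extractCoeffs n (lowPoly p B * lowPoly q C))
    (fun B B' C => by
      rw [lowPoly_add, add_mul, extractCoeffs_add])
    (fun s B C => by
      rw [lowPoly_real_smul, mul_assoc, extractCoeffs_real_smul])
    (fun B C C' => by
      rw [lowPoly_add, mul_add, extractCoeffs_add])
    (fun s B C => by
      rw [lowPoly_real_smul, mul_left_comm, extractCoeffs_real_smul])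

noncomputable def bilCLM (n p q : ℕ) :
    (Fin p → ℂ) →L[ℝ] (Fin q → ℂ) →L[ℝ] (Fin n → ℂ) :=
  LinearMap.toContinuousLinearMap
    ((LinearMap.toContinuousLinearMap.toLinearMap).comp (bilL n p q))

lemma bilCLM_apply (n p q : ℕ) (B : Fin p → ℂ) (C' : Fin q → ℂ) :
    bilCLM n p q B C' = extractCoeffs n (lowPoly p B * lowPoly q C') := rfl

noncomputable def linCLM (n p q : ℕ) :
    ((Fin p → ℂ) × (Fin q → ℂ)) →L[ℝ] (Fin n → ℂ) :=
  LinearMap.toContinuousLinearMap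
    (((extractL n).comp
      (((LinearMap.mulRight ℂ ((X : Polynomial ℂ) ^ q)).comp
          ((lowL p).comp (LinearMap.fst ℂ _ _)))
        + ((LinearMap.mulLeft ℂ ((X : Polynomial ℂ) ^ p)).comp
            ((lowL q).comp (LinearMap.snd ℂ _ _))))).restrictScalars ℝ)

lemma linCLM_apply (n p q : ℕ) (v : (Fin p → ℂ) × (Fin q → ℂ)) :
    linCLM n p q v
      = extractCoeffs n (lowPoly p v.1 * X ^ q + X ^ p * lowPoly q v.2) := rfl

end SplitAux

open SplitAux

/-- Splitting lemma (real-analytic version): if a monic polynomial `P₀` of degree `n = p + q`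
factors as a product of monic polynomials of degrees `p` and `q` without common root, then
nearby monic polynomials factor accordingly, with factors depending real-analytically on the
coefficient vector. -/
theorem splitting_lemma_real_analytic (n p q : ℕ) (hpq : p + q = n)
    (a0 : Fin n → ℂ) (b0 : Fin p → ℂ) (c0 : Fin q → ℂ)
    (hfac : monicPoly n a0 = monicPoly p b0 * monicPoly q c0)
    (hnocommon : ∀ z : ℂ, ¬ ((monicPoly p b0).IsRoot z ∧ (monicPoly q c0).IsRoot z)) :
    ∃ U : Set (Fin n → ℂ), IsOpen U ∧ a0 ∈ U ∧
      ∃ b : (Fin n → ℂ) → (Fin p → ℂ), ∃ c : (Fin n → ℂ) → (Fin q → ℂ),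
        AnalyticOnNhd ℝ b U ∧ AnalyticOnNhd ℝ c U ∧ b a0 = b0 ∧ c a0 = c0 ∧
        ∀ a ∈ U, monicPoly n a = monicPoly p (b a) * monicPoly q (c a) := by
  classical
  set x0 : (Fin p → ℂ) × (Fin q → ℂ) := (b0, c0) with hx0def
  set Fm : ((Fin p → ℂ) × (Fin q → ℂ)) → (Fin n → ℂ) :=
    fun y => extractCoeffs n (monicPoly p y.1 * monicPoly q y.2) with hFmdef
  have hcop : IsCoprime (monicPoly p b0) (monicPoly q c0) :=
    coprime_of_no_common_root hnocommon
  have hbijR : Function.Bijective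
      ((DL n p q (monicPoly p b0) (monicPoly q c0)).restrictScalars ℝ) :=
    DL_bijective n p q hpq b0 c0 hcop
  set e : ((Fin p → ℂ) × (Fin q → ℂ)) ≃ₗ[ℝ] (Fin n → ℂ) :=
    LinearEquiv.ofBijective _ hbijR with hedef
  set i : ((Fin p → ℂ) × (Fin q → ℂ)) ≃L[ℝ] (Fin n → ℂ) :=
    e.toContinuousLinearEquiv with hidef
  have hie : ∀ v, (i : ((Fin p → ℂ) × (Fin q → ℂ)) →L[ℝ] (Fin n → ℂ)) v
      = DL n p q (monicPoly p b0) (monicPoly q c0) v := fun v => rfl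
  have hbb := (bilCLM n p q).isBoundedBilinearMap
  have hD : HasStrictFDerivAt Fm
      (i : ((Fin p → ℂ) × (Fin q → ℂ)) →L[ℝ] (Fin n → ℂ)) x0 := by
    have h1 : HasStrictFDerivAt
        (fun y : (Fin p → ℂ) × (Fin q → ℂ) =>
          extractCoeffs n ((X : Polynomial ℂ) ^ p * X ^ q)
            + (linCLM n p q y + bilCLM n p q y.1 y.2))
        (0 + (linCLM n p q + hbb.deriv x0)) x0 :=
      (hasStrictFDerivAt_const _ _).add
        ((linCLM n p q).hasStrictFDerivAt.add (hbb.hasStrictFDerivAt x0))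
    have hfun : Fm = fun y : (Fin p → ℂ) × (Fin q → ℂ) =>
        extractCoeffs n ((X : Polynomial ℂ) ^ p * X ^ q)
          + (linCLM n p q y + bilCLM n p q y.1 y.2) := by
      funext y
      rw [hFmdef]
      show extractCoeffs n (monicPoly p y.1 * monicPoly q y.2) = _
      rw [bilCLM_apply, linCLM_apply, ← extractCoeffs_add, ← extractCoeffs_add]
      rw [monicPoly_eq, monicPoly_eq]
      ring_nf
    have hderiv : (0 + (linCLM n p q + hbb.deriv x0))
        = (i : ((Fin p → ℂ) × (Fin q → ℂ)) →L[ℝ] (Fin n → ℂ)) := by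
      refine ContinuousLinearMap.ext fun v => ?_
      rw [hie, ContinuousLinearMap.add_apply, ContinuousLinearMap.zero_apply, zero_add,
        ContinuousLinearMap.add_apply, hbb.deriv_apply, DL_apply, linCLM_apply]
      show extractCoeffs n (lowPoly p v.1 * X ^ q + X ^ p * lowPoly q v.2)
          + (bilCLM n p q b0 v.2 + bilCLM n p q v.1 c0) = _
      rw [bilCLM_apply, bilCLM_apply, ← extractCoeffs_add, ← extractCoeffs_add]
      rw [monicPoly_eq, monicPoly_eq]
      ring_nf
    rw [hfun, ← hderiv]
    exact h1
  have hFan : ∀ y, AnalyticAt ℝ Fm y := fun y => analyticAt_Fmap n p q y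
  set h := hD.toOpenPartialHomeomorph Fm with hhdef
  have hcoe : (h : ((Fin p → ℂ) × (Fin q → ℂ)) → (Fin n → ℂ)) = Fm :=
    hD.toOpenPartialHomeomorph_coe
  have hsource : x0 ∈ h.source := hD.mem_toOpenPartialHomeomorph_source
  have hFx0 : Fm x0 = a0 := by
    show extractCoeffs n (monicPoly p b0 * monicPoly q c0) = a0
    rw [← hfac, extractCoeffs_monicPoly]
  have hx0v : h x0 = a0 := (congrFun hcoe x0).trans hFx0
  have ha0t : a0 ∈ h.target := hx0v ▸ h.map_source hsource
  have hsymm0 : h.symm a0 = x0 := by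
    have hli := h.left_inv hsource
    rw [hx0v] at hli
    exact hli
  have hfd : fderiv ℝ Fm x0 = (i : ((Fin p → ℂ) × (Fin q → ℂ)) →L[ℝ] (Fin n → ℂ)) :=
    hD.hasFDerivAt.fderiv
  have hgan : AnalyticAt ℝ h.symm a0 := by
    refine h.analyticAt_symm (i := i) ha0t ?_ ?_
    · rw [hcoe, hsymm0]
      exact hFan x0
    · rw [hcoe, hsymm0]
      exact hfd
  obtain ⟨V, hVsub, hVopen, ha0V⟩ := mem_nhds_iff.mp hgan.eventually_analyticAt
  refine ⟨V ∩ h.target, hVopen.inter h.open_target, ⟨ha0V, ha0t⟩,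
    fun a => (h.symm a).1, fun a => (h.symm a).2, ?_, ?_, ?_, ?_, ?_⟩
  · intro a ha
    exact ((ContinuousLinearMap.fst ℝ (Fin p → ℂ) (Fin q → ℂ)).analyticAt
      (h.symm a)).comp (hVsub ha.1)
  · intro a ha
    exact ((ContinuousLinearMap.snd ℝ (Fin p → ℂ) (Fin q → ℂ)).analyticAt
      (h.symm a)).comp (hVsub ha.1)
  · show (h.symm a0).1 = b0
    rw [hsymm0]
  · show (h.symm a0).2 = c0
    rw [hsymm0]
  · intro a ha
    have hFsa : Fm (h.symm a) = a := (congrFun hcoe (h.symm a)).symm.trans (h.right_inv ha.2)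
    calc monicPoly n a = monicPoly n (Fm (h.symm a)) := by rw [hFsa]
      _ = monicPoly p (h.symm a).1 * monicPoly q (h.symm a).2 := by
          apply monicPoly_extractCoeffs ((monicPoly_monic p _).mul (monicPoly_monic q _))
          rw [(monicPoly_monic p _).natDegree_mul (monicPoly_monic q _),
            monicPoly_natDegree, monicPoly_natDegree, hpq]
end

section
/- Glueing local choices of roots (real-analytic version): let a_1, …, a_n : ℝ → ℂ be real-analytic functions defining the family of monic polynomials P(t)(z) = z^n + ∑_{j=1}^n (−1)^j a_j(t) z^{n−j}. Assume that for every t_0 ∈ ℝ there exist an open interval I_{t_0} ∋ t_0 and real-analytic functions μ_1, …, μ_n : I_{t_0} → ℂ with P(t)(z) = ∏_{j=1}^n (z − μ_j(t)) for all t ∈ I_{t_0}. Then there exist real-analytic functions λ_1, …, λ_n : ℝ → ℂ with P(t)(z) = ∏_{j=1}^n (z − λ_j(t)) for all t ∈ ℝ. -/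
open Polynomial

open Set Filter

/-- `f` analytically parameterizes the roots of the family `P` on `S`. -/
def SolOn {n : ℕ} (P : ℝ → Polynomial ℂ) (f : Fin n → ℝ → ℂ) (S : Set ℝ) : Prop :=
  (∀ j, AnalyticOnNhd ℝ (f j) S) ∧ ∀ t ∈ S, P t = ∏ j, (X - C (f j t))

lemma SolOn.mono {n : ℕ} {P : ℝ → Polynomial ℂ} {f : Fin n → ℝ → ℂ} {S S' : Set ℝ}
    (h : SolOn P f S) (hsub : S' ⊆ S) : SolOn P f S' :=
  ⟨fun j => (h.1 j).mono hsub, fun t ht => h.2 t (hsub ht)⟩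

lemma exists_index_eqOn {n : ℕ} {S : Set ℝ} (hS : IsOpen S) (hS' : IsPreconnected S)
    {t0 : ℝ} (ht0 : t0 ∈ S) (f : Fin n → ℝ → ℂ) (g : ℝ → ℂ)
    (hf : ∀ j, AnalyticOnNhd ℝ (f j) S) (hg : AnalyticOnNhd ℝ g S)
    (h : ∀ t ∈ S, ∃ j, g t = f j t) : ∃ j, Set.EqOn g (f j) S := by
  have hfreq : ∃ j, ∃ᶠ t in nhdsWithin t0 {t0}ᶜ, g t = f j t := by
    by_contra hcon
    push_neg at hcon
    have hall : ∀ᶠ t in nhdsWithin t0 {t0}ᶜ, ∀ j, ¬ g t = f j t :=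
      Filter.eventually_all.2 hcon
    have hmemS : ∀ᶠ t in nhdsWithin t0 {t0}ᶜ, t ∈ S :=
      Filter.Eventually.filter_mono nhdsWithin_le_nhds (hS.mem_nhds ht0)
    have hfalse : ∀ᶠ t in nhdsWithin t0 {t0}ᶜ, False := by
      filter_upwards [hall, hmemS] with t h1 h2
      obtain ⟨j, hj⟩ := h t h2
      exact h1 j hj
    have : (nhdsWithin t0 {t0}ᶜ).NeBot := by infer_instance
    exact this.ne (Filter.eventually_false_iff_eq_bot.mp hfalse)
  obtain ⟨j, hj⟩ := hfreq
  exact ⟨j, hg.eqOn_of_preconnected_of_frequently_eq (hf j) hS' ht0 hj⟩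

lemma matching {S : Set ℝ} (hS : IsOpen S) (hS' : IsPreconnected S) (hne : S.Nonempty) :
    ∀ (n : ℕ) (f g : Fin n → ℝ → ℂ),
    (∀ j, AnalyticOnNhd ℝ (f j) S) → (∀ j, AnalyticOnNhd ℝ (g j) S) →
    (∀ t ∈ S, (∏ j, (X - C (f j t))) = ∏ j, (X - C (g j t))) →
    ∃ σ : Equiv.Perm (Fin n), ∀ j, Set.EqOn (g j) (f (σ j)) S := by
  intro n
  induction n with
  | zero => intro f g _ _ _; exact ⟨Equiv.refl _, fun j => j.elim0⟩
  | succ n IH =>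
    intro f g hf hg h
    obtain ⟨t0, ht0⟩ := hne
    have hroot : ∀ t ∈ S, ∃ j, g (Fin.last n) t = f j t := by
      intro t ht
      have h0 : (∏ j, (X - C (f j t))).eval (g (Fin.last n) t) = 0 := by
        rw [h t ht, Polynomial.eval_prod]
        apply Finset.prod_eq_zero (Finset.mem_univ (Fin.last n))
        simp
      rw [Polynomial.eval_prod] at h0
      obtain ⟨j, -, hj⟩ := Finset.prod_eq_zero_iff.mp h0
      refine ⟨j, ?_⟩
      simpa [sub_eq_zero] using hj
    obtain ⟨i, hi⟩ := exists_index_eqOn hS hS' ht0 f (g (Fin.last n)) hf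
      (hg (Fin.last n)) hroot
    have hcancel : ∀ t ∈ S,
        (∏ j : Fin n, (X - C (f (i.succAbove j) t))) =
        ∏ j : Fin n, (X - C (g (Fin.castSucc j) t)) := by
      intro t ht
      have h1 : (X - C (f i t)) * ∏ j : Fin n, (X - C (f (i.succAbove j) t)) =
          (X - C (f i t)) * ∏ j : Fin n, (X - C (g (Fin.castSucc j) t)) := by
        rw [← Fin.prod_univ_succAbove (fun j => (X - C (f j t))) i, h t ht,
          Fin.prod_univ_castSucc, hi ht]
        ring
      exact mul_left_cancel₀ (X_sub_C_ne_zero _) h1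
    obtain ⟨σ', hσ'⟩ := IH (fun j => f (i.succAbove j)) (fun j => g (Fin.castSucc j))
      (fun j => hf _) (fun j => hg _) hcancel
    refine ⟨(finSuccEquivLast.trans (Equiv.optionCongr σ')).trans (finSuccEquiv' i).symm,
      fun j => ?_⟩
    refine Fin.lastCases ?_ ?_ j
    · simpa using hi
    · intro k
      simpa using hσ' k

lemma glue_step {n : ℕ} {P : ℝ → Polynomial ℂ} {α β α' β' : ℝ}
    (hov : max α α' < min β β') {f g : Fin n → ℝ → ℂ}
    (hf : SolOn P f (Set.Ioo α β)) (hg : SolOn P g (Set.Ioo α' β')) :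
    ∃ h : Fin n → ℝ → ℂ, SolOn P h (Set.Ioo (min α α') (max β β')) ∧
      ∀ j, Set.EqOn (h j) (f j) (Set.Ioo α β) := by
  set O := Set.Ioo (max α α') (min β β') with hO
  have hOsub1 : O ⊆ Set.Ioo α β := Set.Ioo_subset_Ioo (le_max_left _ _) (min_le_left _ _)
  have hOsub2 : O ⊆ Set.Ioo α' β' := Set.Ioo_subset_Ioo (le_max_right _ _) (min_le_right _ _)
  have hOne : O.Nonempty := Set.nonempty_Ioo.2 hov
  obtain ⟨σ, hσ⟩ := matching isOpen_Ioo isPreconnected_Ioo hOne n g f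
    (fun j => (hg.1 j).mono hOsub2) (fun j => (hf.1 j).mono hOsub1)
    (fun t ht => by rw [← hg.2 t (hOsub2 ht), ← hf.2 t (hOsub1 ht)])
  have hunion : Set.Ioo α β ∪ Set.Ioo α' β' = Set.Ioo (min α α') (max β β') := by
    apply Set.Ioo_union_Ioo'
    · exact lt_of_le_of_lt (le_max_right α α') (hov.trans_le (min_le_left _ _))
    · exact lt_of_le_of_lt (le_max_left α α') (hov.trans_le (min_le_right _ _))
  refine ⟨fun j t => if t ∈ Set.Ioo α β then f j t else g (σ j) t, ⟨?_, ?_⟩, ?_⟩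
  · intro j t ht
    rw [← hunion] at ht
    rcases ht with ht | ht
    · refine ((hf.1 j) t ht).congr ?_
      refine Filter.eventuallyEq_of_mem (isOpen_Ioo.mem_nhds ht) ?_
      intro s hs
      simp [hs]
    · refine ((hg.1 (σ j)) t ht).congr ?_
      refine Filter.eventuallyEq_of_mem (isOpen_Ioo.mem_nhds ht) ?_
      intro s hs
      by_cases hs1 : s ∈ Set.Ioo α β
      · have : s ∈ O := by rw [hO, ← Set.Ioo_inter_Ioo]; exact ⟨hs1, hs⟩
        simp [hs1, hσ j this]
      · simp [hs1]
  · intro t ht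
    rw [← hunion] at ht
    rcases ht with ht | ht
    · rw [hf.2 t ht]
      exact Finset.prod_congr rfl fun j _ => by simp [ht]
    · rw [hg.2 t ht, ← Equiv.prod_comp σ (fun k => (X - C (g k t)))]
      refine Finset.prod_congr rfl fun j _ => ?_
      by_cases hs1 : t ∈ Set.Ioo α β
      · have : t ∈ O := by rw [hO, ← Set.Ioo_inter_Ioo]; exact ⟨hs1, ht⟩
        simp [hs1, hσ j this]
      · simp [hs1]
  · intro j t ht
    simp [ht]

lemma reach {n : ℕ} {P : ℝ → Polynomial ℂ}
    (hloc : ∀ t0 : ℝ, ∃ α β : ℝ, α < t0 ∧ t0 < β ∧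
      ∃ f : Fin n → ℝ → ℂ, SolOn P f (Set.Ioo α β)) :
    ∀ T : ℝ, 0 < T → ∃ f : Fin n → ℝ → ℂ, SolOn P f (Set.Ioo (-T) T) := by
  intro T hT
  set A : Set ℝ := {r | 0 < r ∧ r ≤ T ∧ ∃ f : Fin n → ℝ → ℂ, SolOn P f (Set.Ioo (-r) r)}
    with hA
  obtain ⟨α0, β0, hα0, hβ0, f0, hf0⟩ := hloc 0
  have hr0pos : (0:ℝ) < min (min (-α0) β0) T := by
    simp only [lt_min_iff]
    exact ⟨⟨by linarith, hβ0⟩, hT⟩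
  have hr0 : min (min (-α0) β0) T ∈ A := by
    refine ⟨hr0pos, min_le_right _ _, f0, hf0.mono ?_⟩
    apply Set.Ioo_subset_Ioo
    · have : min (min (-α0) β0) T ≤ -α0 := le_trans (min_le_left _ _) (min_le_left _ _)
      linarith
    · exact le_trans (min_le_left _ _) (min_le_right _ _)
  have hAne : A.Nonempty := ⟨_, hr0⟩
  have hAbdd : BddAbove A := ⟨T, fun r hr => hr.2.1⟩
  set s := sSup A with hs
  have hspos : 0 < s := lt_of_lt_of_le hr0pos (le_csSup hAbdd hr0)
  have hsT : s ≤ T := csSup_le hAne fun r hr => hr.2.1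
  obtain ⟨α1, β1, hα1, hβ1, g1, hg1⟩ := hloc s
  obtain ⟨α2, β2, hα2, hβ2, g2, hg2⟩ := hloc (-s)
  have hm : max (max α1 (-β2)) 0 < s := by
    simp only [max_lt_iff]
    exact ⟨⟨hα1, by linarith⟩, hspos⟩
  obtain ⟨r, hrA, hrm⟩ := exists_lt_of_lt_csSup hAne hm
  have hrs : r ≤ s := le_csSup hAbdd hrA
  obtain ⟨hrpos, hrT, f, hf⟩ := hrA
  have hrα1 : α1 < r := lt_of_le_of_lt (le_trans (le_max_left _ _) (le_max_left _ _)) hrm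
  have hrβ2 : -β2 < r := lt_of_le_of_lt (le_trans (le_max_right _ _) (le_max_left _ _)) hrm
  have hov1 : max (-r) α1 < min r β1 := by
    simp only [max_lt_iff, lt_min_iff]
    exact ⟨⟨by linarith, hrα1⟩, ⟨by linarith, by linarith⟩⟩
  obtain ⟨f1, hf1, -⟩ := glue_step hov1 hf hg1
  set a1 := min (-r) α1 with ha1
  set b1 := max r β1 with hb1
  have ha1r : a1 ≤ -r := min_le_left _ _
  have hb1s : s < b1 := lt_of_lt_of_le hβ1 (le_max_right _ _)
  have hov2 : max a1 α2 < min b1 β2 := by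
    simp only [max_lt_iff, lt_min_iff]
    refine ⟨⟨?_, ?_⟩, ⟨?_, by linarith⟩⟩
    · linarith
    · linarith
    · linarith
  obtain ⟨f2, hf2, -⟩ := glue_step hov2 hf1 hg2
  set a2 := min a1 α2 with ha2
  set b2 := max b1 β2 with hb2
  have ha2s : a2 < -s := lt_of_le_of_lt (min_le_right _ _) hα2
  have hb2s : s < b2 := lt_of_lt_of_le hb1s (le_max_left _ _)
  set s' := min (-a2) b2 with hs'
  have hs's : s < s' := by
    simp only [hs', lt_min_iff]
    exact ⟨by linarith, hb2s⟩
  have hsub : ∀ u : ℝ, u ≤ s' → Set.Ioo (-u) u ⊆ Set.Ioo a2 b2 := by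
    intro u hu
    apply Set.Ioo_subset_Ioo
    · have : u ≤ -a2 := le_trans hu (min_le_left _ _)
      linarith
    · exact le_trans hu (min_le_right _ _)
  by_cases hcase : T ≤ s'
  · exact ⟨f2, hf2.mono (hsub T hcase)⟩
  · push_neg at hcase
    have : s' ∈ A := ⟨by linarith, le_of_lt hcase, f2, hf2.mono (hsub s' le_rfl)⟩
    have := le_csSup hAbdd this
    linarith


/-- Glueing local choices of roots (real-analytic version): if a family of monic polynomials
with real-analytic coefficients on `ℝ` admits, around each point, a local real-analytic
parameterization of its roots, then it admits a global real-analytic parameterization of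
its roots on all of `ℝ`. -/
theorem glue_local_roots_real_analytic (n : ℕ)
    (a : Fin n → ℝ → ℂ) (ha : ∀ j, ∀ t : ℝ, AnalyticAt ℝ (a j) t)
    (hloc : ∀ t0 : ℝ, ∃ α β : ℝ, α < t0 ∧ t0 < β ∧
      ∃ μ : Fin n → ℝ → ℂ, (∀ j, AnalyticOnNhd ℝ (μ j) (Set.Ioo α β)) ∧
        ∀ t ∈ Set.Ioo α β,
          monicPoly n (fun j => a j t) = ∏ j : Fin n, (X - C (μ j t))) :
    ∃ l : Fin n → ℝ → ℂ, (∀ j, ∀ t : ℝ, AnalyticAt ℝ (l j) t) ∧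
      ∀ t : ℝ, monicPoly n (fun j => a j t) = ∏ j : Fin n, (X - C (l j t)) := by
  classical
  set P : ℝ → Polynomial ℂ := fun t => monicPoly n (fun j => a j t) with hP
  have hloc' : ∀ t0 : ℝ, ∃ α β : ℝ, α < t0 ∧ t0 < β ∧
      ∃ f : Fin n → ℝ → ℂ, SolOn P f (Set.Ioo α β) := by
    intro t0
    obtain ⟨α, β, h1, h2, μ, h3, h4⟩ := hloc t0
    exact ⟨α, β, h1, h2, μ, h3, h4⟩
  set J : ℕ → Set ℝ := fun k => Set.Ioo (-(k + 1 : ℝ)) (k + 1) with hJ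
  have hJmono : ∀ {k m : ℕ}, k ≤ m → J k ⊆ J m := by
    intro k m hkm
    apply Set.Ioo_subset_Ioo
    · have : (k : ℝ) ≤ m := Nat.cast_le.2 hkm
      linarith
    · have : (k : ℝ) ≤ m := Nat.cast_le.2 hkm
      linarith
  have hJsol : ∀ k : ℕ, ∃ f : Fin n → ℝ → ℂ, SolOn P f (J k) := by
    intro k
    exact reach hloc' (k + 1) (by positivity)
  have hJopen : ∀ k, IsOpen (J k) := fun k => isOpen_Ioo
  have hJne : ∀ k, (J k).Nonempty := fun k => Set.nonempty_Ioo.2 (by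
    have : (0:ℝ) ≤ k := Nat.cast_nonneg k
    linarith)
  have step : ∀ (k : ℕ) (f : Fin n → ℝ → ℂ), SolOn P f (J k) →
      ∃ g : Fin n → ℝ → ℂ, SolOn P g (J (k+1)) ∧ ∀ j, Set.EqOn (g j) (f j) (J k) := by
    intro k f hf
    obtain ⟨h, hh⟩ := hJsol (k + 1)
    have hsub : J k ⊆ J (k+1) := hJmono (Nat.le_succ k)
    obtain ⟨σ, hσ⟩ := matching (hJopen k) isPreconnected_Ioo (hJne k) n h f
      (fun j => (hh.1 j).mono hsub) (fun j => hf.1 j)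
      (fun t ht => by rw [← hh.2 t (hsub ht), ← hf.2 t ht])
    refine ⟨fun j => h (σ j), ⟨fun j => hh.1 (σ j), fun t ht => ?_⟩,
      fun j t ht => (hσ j ht).symm⟩
    rw [hh.2 t ht, ← Equiv.prod_comp σ (fun k => (X - C (h k t)))]
  let D : ℕ → Type := fun k => {f : Fin n → ℝ → ℂ // SolOn P f (J k)}
  let F : ∀ k, D k → D (k+1) := fun k d =>
    ⟨(step k d.1 d.2).choose, (step k d.1 d.2).choose_spec.1⟩
  let ν : ∀ k, D k := fun k => Nat.rec ⟨(hJsol 0).choose, (hJsol 0).choose_spec⟩ F k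
  have hcompat : ∀ k j, Set.EqOn ((ν (k+1)).1 j) ((ν k).1 j) (J k) := by
    intro k j
    exact (step k (ν k).1 (ν k).2).choose_spec.2 j
  have hmono : ∀ k m : ℕ, k ≤ m → ∀ j, Set.EqOn ((ν m).1 j) ((ν k).1 j) (J k) := by
    intro k m hkm
    induction m, hkm using Nat.le_induction with
    | base => intro j t ht; rfl
    | succ m hm ih =>
      intro j t ht
      rw [hcompat m j (hJmono hm ht)]
      exact ih j ht
  have memJ : ∀ t : ℝ, t ∈ J ⌈|t|⌉₊ := by
    intro t
    have h1 : |t| ≤ (⌈|t|⌉₊ : ℝ) := Nat.le_ceil _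
    rw [hJ]
    simp only [Set.mem_Ioo]
    constructor
    · linarith [neg_abs_le t, abs_nonneg t]
    · linarith [le_abs_self t]
  refine ⟨fun j t => (ν ⌈|t|⌉₊).1 j t, ?_, ?_⟩
  · intro j t
    set K : ℕ := ⌈|t|⌉₊ + 1 with hK
    have htK : |t| < K := by
      have := Nat.le_ceil |t|
      push_cast [hK]
      linarith
    have htJ : t ∈ J K := by
      rw [hJ]; simp only [Set.mem_Ioo]
      constructor
      · linarith [neg_abs_le t]
      · linarith [le_abs_self t]
    have hAn : AnalyticAt ℝ ((ν K).1 j) t := (ν K).2.1 j t htJ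
    refine hAn.congr ?_
    have hopen : IsOpen {s : ℝ | |s| < (K:ℝ)} := by
      have : {s : ℝ | |s| < (K:ℝ)} = Set.Ioo (-(K:ℝ)) K := by
        ext s; simp [abs_lt]
      rw [this]; exact isOpen_Ioo
    refine Filter.eventuallyEq_of_mem (hopen.mem_nhds htK) ?_
    intro s hs
    have hcs : ⌈|s|⌉₊ ≤ K := Nat.ceil_le.2 (le_of_lt hs)
    show ((ν K).1 j) s = ((ν ⌈|s|⌉₊).1 j) s
    exact hmono _ K hcs j (memJ s)
  · intro t
    exact (ν ⌈|t|⌉₊).2.2 t (memJ t)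
end

section
/- Uniqueness of root parameterizations up to a constant permutation (real-analytic version): let I ⊆ ℝ be an open interval (in particular connected), and let f_1, …, f_n : I → ℂ and g_1, …, g_n : I → ℂ be real-analytic functions such that for every t ∈ I and every z ∈ ℂ the number of indices j with f_j(t) = z equals the number of indices j with g_j(t) = z. Then there exists a permutation σ of {1, …, n} such that g_j = f_{σ(j)} on all of I, for every j. -/
open Filter

private lemma exists_perm_of_card_fibers {n : ℕ} (F G : Fin n → ℂ)
    (h : ∀ z, Nat.card {j : Fin n // G j = z} = Nat.card {j : Fin n // F j = z}) :
    ∃ σ : Equiv.Perm (Fin n), ∀ j, F (σ j) = G j := by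
  classical
  have e : ∀ z : ℂ, {j : Fin n // G j = z} ≃ {j : Fin n // F j = z} := by
    intro z
    have hz := h z
    rw [Nat.card_eq_fintype_card, Nat.card_eq_fintype_card] at hz
    exact Fintype.equivOfCardEq hz
  refine ⟨(Equiv.sigmaFiberEquiv G).symm.trans
    ((Equiv.sigmaCongrRight e).trans (Equiv.sigmaFiberEquiv F)), fun j => ?_⟩
  simpa [Equiv.sigmaFiberEquiv, Equiv.sigmaCongrRight] using (e (G j) ⟨j, rfl⟩).2

/-- Uniqueness of root parameterizations up to a constant permutation (real-analytic version):
if two families of real-analytic functions on an open interval `I ⊆ ℝ` (an open preconnected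
subset of `ℝ`) take every complex value with the same multiplicities at every point of `I`,
then they differ by a constant permutation. -/
theorem roots_unique_up_to_constant_permutation (n : ℕ)
    (I : Set ℝ) (hIopen : IsOpen I) (hIconn : IsPreconnected I)
    (f g : Fin n → ℝ → ℂ)
    (hf : ∀ j, AnalyticOnNhd ℝ (f j) I) (hg : ∀ j, AnalyticOnNhd ℝ (g j) I)
    (hcard : ∀ t ∈ I, ∀ z : ℂ,
      Nat.card {j : Fin n // f j t = z} = Nat.card {j : Fin n // g j t = z}) :
    ∃ σ : Equiv.Perm (Fin n), ∀ j : Fin n, ∀ t ∈ I, g j t = f (σ j) t := by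
  classical
  rcases Set.eq_empty_or_nonempty I with hI | ⟨t₀, ht₀⟩
  · exact ⟨1, fun j t ht => absurd ht (by simp [hI])⟩
  set P : Fin n → Fin n → Prop := fun i j => Set.EqOn (g j) (f i) I with hP
  have key : ∀ i j, ¬ P i j → ∀ᶠ t in nhdsWithin t₀ {t₀}ᶜ, f i t - g j t ≠ 0 := by
    intro i j hPij
    have hA : AnalyticOnNhd ℝ (fun t => f i t - g j t) I := (hf i).sub (hg j)
    rcases (hA t₀ ht₀).eventually_eq_zero_or_eventually_ne_zero with h0 | h1
    · exfalso
      apply hPij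
      have hz := hA.eqOn_zero_of_preconnected_of_eventuallyEq_zero hIconn ht₀ h0
      intro t ht
      have := hz ht
      simp only [Pi.zero_apply, sub_eq_zero] at this
      exact this.symm
    · exact h1
  have hmem : ∀ᶠ t in nhdsWithin t₀ {t₀}ᶜ, t ∈ I :=
    eventually_nhdsWithin_of_eventually_nhds (hIopen.eventually_mem ht₀)
  have hall : ∀ᶠ t in nhdsWithin t₀ {t₀}ᶜ, ∀ i j, ¬ P i j → f i t - g j t ≠ 0 := by
    rw [eventually_all]
    intro i
    rw [eventually_all]
    intro j
    by_cases hpq : P i j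
    · filter_upwards with t ht; exact absurd hpq ht
    · filter_upwards [key i j hpq] with t ht _; exact ht
  obtain ⟨t₁, ht₁I, ht₁⟩ := (hmem.and hall).exists
  obtain ⟨σ, hσ⟩ := exists_perm_of_card_fibers (fun j => f j t₁) (fun j => g j t₁)
    (fun z => (hcard t₁ ht₁I z).symm)
  refine ⟨σ, fun j t ht => ?_⟩
  have hPj : P (σ j) j := by
    by_contra hc
    exact ht₁ (σ j) j hc (by simp [sub_eq_zero, hσ j])
  exact hPj ht
end

section
/- Continuous eigenvalue parameterizations of Lipschitz curves of normal matrices are Lipschitz: let A : ℝ → M_n(ℂ) be a locally Lipschitz map (with respect to the operator norm on M_n(ℂ)) such that A(t) is normal for every t ∈ ℝ, and let λ_1, …, λ_n : ℝ → ℂ be continuous functions such that for every t ∈ ℝ the multiset {λ_1(t), …, λ_n(t)} equals the multiset of roots, counted with multiplicity, of the characteristic polynomial of A(t). Then each λ_j is locally Lipschitz. -/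
open Matrix

/-- The operator norm of a complex `n × n` matrix, i.e. the norm of the induced continuous
linear endomorphism of the Euclidean space `ℂ^n`. -/
noncomputable def matrixOpNorm {n : ℕ} (M : Matrix (Fin n) (Fin n) ℂ) : ℝ :=
  ‖Matrix.toEuclideanCLM (𝕜 := ℂ) M‖

section Aux

open Polynomial

/-- Evaluating the characteristic polynomial. -/
lemma aux_eval_charpoly {n : ℕ} (M : Matrix (Fin n) (Fin n) ℂ) (μ : ℂ) :
    M.charpoly.eval μ = (algebraMap ℂ (Matrix (Fin n) (Fin n) ℂ) μ - M).det := by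
  rw [Matrix.charpoly, ← Polynomial.coe_evalRingHom, RingHom.map_det]
  congr 1
  ext i j
  by_cases h : i = j
  · subst h
    simp [charmatrix_apply_eq, Matrix.algebraMap_matrix_apply]
  · simp [charmatrix_apply_ne _ _ _ h, Matrix.algebraMap_matrix_apply, h]

/-- The spectrum of a complex matrix is the set of roots of its characteristic polynomial. -/
lemma aux_mem_spectrum_iff_mem_roots {n : ℕ} (M : Matrix (Fin n) (Fin n) ℂ) (μ : ℂ) :
    μ ∈ spectrum ℂ M ↔ μ ∈ M.charpoly.roots := by
  rw [Polynomial.mem_roots', spectrum.mem_iff, Matrix.isUnit_iff_isUnit_det,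
    isUnit_iff_ne_zero, not_ne_iff, Polynomial.IsRoot, aux_eval_charpoly]
  exact (and_iff_right M.charpoly_monic.ne_zero).symm

/-- In a unital C⋆-algebra, every spectral value of `b` is within `‖b - a‖` of the spectrum
of a normal element `a`. -/
lemma aux_spec_perturb {A : Type*} [CStarAlgebra A] (a b : A)
    (ha : star a * a = a * star a) {lam : ℂ} (hlam : lam ∈ spectrum ℂ b) :
    ∃ μ ∈ spectrum ℂ a, ‖lam - μ‖ ≤ ‖b - a‖ := by
  have hnt : Nontrivial A := by
    rcases subsingleton_or_nontrivial A with hs | hn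
    · exact absurd (isUnit_of_subsingleton _) (spectrum.mem_iff.mp hlam)
    · exact hn
  have hne : (spectrum ℂ a).Nonempty := spectrum.nonempty a
  obtain ⟨μ, hμ, hdist⟩ := (spectrum.isCompact (𝕜 := ℂ) a).exists_infDist_eq_dist hne lam
  refine ⟨μ, hμ, ?_⟩
  rw [← dist_eq_norm, ← hdist]
  set d := Metric.infDist lam (spectrum ℂ a) with hd
  by_contra hcon
  push_neg at hcon
  have hd0 : 0 < d := lt_of_le_of_lt (norm_nonneg _) hcon
  have hlamnot : lam ∉ spectrum ℂ a := fun hmem =>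
    hd0.ne' (Metric.infDist_zero_of_mem hmem)
  have hunit : IsUnit (algebraMap ℂ A lam - a) := spectrum.notMem_iff.mp hlamnot
  set u := hunit.unit with hu
  have hue : (↑u : A) = algebraMap ℂ A lam - a := hunit.unit_spec
  -- normality of `u`
  have hcomm : star (↑u : A) * ↑u = ↑u * star (↑u : A) := by
    rw [hue, star_sub, ← algebraMap_star_comm]
    rw [sub_mul, mul_sub, mul_sub, sub_mul]
    rw [Algebra.commutes (star lam) (algebraMap ℂ A lam),
      Algebra.commutes (star lam) a, ha]
    rw [← Algebra.commutes lam (star a)]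
    noncomm_ring
  -- normality of `u⁻¹`
  have hv1 : (↑u⁻¹ : A) * ↑u = 1 := u.inv_mul
  have hv2 : (↑u : A) * ↑u⁻¹ = 1 := u.mul_inv
  set v := (↑u⁻¹ : A) with hv
  set f := star (↑u : A) with hf
  have hsv1 : star v * f = 1 := by rw [hf, ← StarMul.star_mul, hv2, star_one]
  have hsv2 : f * star v = 1 := by rw [hf, ← StarMul.star_mul, hv1, star_one]
  have hvf : v * f = f * v := by
    have h1 : v * f * ↑u = f := by
      calc v * f * ↑u = v * (↑u * f) := by rw [mul_assoc, ← hcomm]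
      _ = f := by rw [← mul_assoc, hv1, one_mul]
    calc v * f = v * f * (↑u * v) := by rw [hv2, mul_one]
    _ = f * v := by rw [← mul_assoc, h1]
  have hvcomm : star v * v = v * star v := by
    have h1 : star v * (v * f) * star v = star v * (f * v) * star v := by rw [hvf]
    calc star v * v = star v * v * (f * star v) := by rw [hsv2, mul_one]
    _ = star v * (v * f) * star v := by noncomm_ring
    _ = star v * (f * v) * star v := h1
    _ = (star v * f) * (v * star v) := by noncomm_ring
    _ = v * star v := by rw [hsv1, one_mul]
  have hnv : IsStarNormal v := ⟨hvcomm⟩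
  -- norm bound on `v` from the spectral radius formula for normal elements
  have hnorm_v : ‖v‖ ≤ d⁻¹ := by
    have hsr := IsStarNormal.spectralRadius_eq_nnnorm v
    have hspecv : spectrum ℂ v = (spectrum ℂ (↑u : A))⁻¹ := (spectrum.map_inv u).symm
    have hbound : ∀ k ∈ spectrum ℂ v, (‖k‖₊ : ENNReal) ≤ ENNReal.ofReal d⁻¹ := by
      intro k hk
      rw [hspecv, Set.mem_inv] at hk
      have hmem : k⁻¹ ∈ spectrum ℂ (↑u : A) := hk
      rw [hue, ← spectrum.singleton_sub_eq] at hmem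
      obtain ⟨x, hx, ν, hν, hkinv⟩ := hmem
      simp only [Set.mem_singleton_iff] at hx
      subst hx
      have hge : d ≤ ‖k⁻¹‖ := by
        rw [← hkinv, ← dist_eq_norm]
        exact Metric.infDist_le_dist_of_mem hν
      have hkle : ‖k‖ ≤ d⁻¹ := by
        rw [← inv_inv (‖k‖), ← norm_inv]
        exact inv_anti₀ hd0 hge
      calc (‖k‖₊ : ENNReal) = ENNReal.ofReal ‖k‖ := (ofReal_norm k).symm
      _ ≤ ENNReal.ofReal d⁻¹ := ENNReal.ofReal_le_ofReal hkle
    have hsrle : spectralRadius ℂ v ≤ ENNReal.ofReal d⁻¹ := iSup₂_le hbound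
    rw [hsr] at hsrle
    rw [← ENNReal.ofReal_coe_nnreal, coe_nnnorm] at hsrle
    rw [ENNReal.ofReal_le_ofReal_iff (inv_nonneg.mpr hd0.le)] at hsrle
    exact hsrle
  -- contradiction: `lam` would be outside the spectrum of `b`
  have hnorm_prod : ‖v * (b - a)‖ < 1 := by
    calc ‖v * (b - a)‖ ≤ ‖v‖ * ‖b - a‖ := norm_mul_le _ _
    _ ≤ d⁻¹ * ‖b - a‖ := mul_le_mul_of_nonneg_right hnorm_v (norm_nonneg _)
    _ < 1 := by rw [← div_eq_inv_mul]; exact (div_lt_one hd0).mpr hcon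
  have hu2 : IsUnit (1 - v * (b - a)) := isUnit_one_sub_of_norm_lt_one hnorm_prod
  have heq : algebraMap ℂ A lam - b = ↑u * (1 - v * (b - a)) := by
    rw [mul_sub, mul_one, ← mul_assoc, hv2, one_mul, hue]
    abel
  exact spectrum.mem_iff.mp hlam (heq ▸ hunit.mul hu2)

/-- Matrix version of the spectral perturbation estimate. -/
lemma aux_matrix_spec_perturb {n : ℕ} (M N : Matrix (Fin n) (Fin n) ℂ)
    (hM : M * Mᴴ = Mᴴ * M) {lam : ℂ} (hlam : lam ∈ spectrum ℂ N) :
    ∃ μ ∈ spectrum ℂ M, ‖lam - μ‖ ≤ matrixOpNorm (N - M) := by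
  set φ := Matrix.toEuclideanCLM (𝕜 := ℂ) (n := Fin n)
  have hspecM : spectrum ℂ (φ M) = spectrum ℂ M := AlgEquiv.spectrum_eq φ M
  have hspecN : spectrum ℂ (φ N) = spectrum ℂ N := AlgEquiv.spectrum_eq φ N
  have hstar : star (φ M) * φ M = φ M * star (φ M) := by
    rw [← map_star, ← _root_.map_mul, ← _root_.map_mul, Matrix.star_eq_conjTranspose, hM]
  obtain ⟨μ, hμ, hle⟩ := aux_spec_perturb (φ M) (φ N) hstar (hspecN ▸ hlam)
  exact ⟨μ, hspecM ▸ hμ, by rwa [← map_sub] at hle⟩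

/-- A continuous function on a closed interval which satisfies a pointwise local Lipschitz
estimate (with a uniform constant) is Lipschitz on the interval, with the same constant. -/
lemma aux_lipschitz_of_pointwise {f : ℝ → ℂ} {K a b : ℝ}
    (hf : ContinuousOn f (Set.Icc a b))
    (h : ∀ t ∈ Set.Icc a b, ∃ δ > 0, ∀ s ∈ Set.Icc a b,
      |s - t| < δ → ‖f s - f t‖ ≤ K * |s - t|) :
    ∀ x ∈ Set.Icc a b, ∀ y ∈ Set.Icc a b, ‖f y - f x‖ ≤ K * |y - x| := by
  have main : ∀ x ∈ Set.Icc a b, ∀ y ∈ Set.Icc a b, x ≤ y → ‖f y - f x‖ ≤ K * (y - x) := by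
    intro x hx y hy hxy
    set E := {z ∈ Set.Icc x y | ‖f z - f x‖ ≤ K * (z - x)} with hE
    have hxE : x ∈ E := by
      refine ⟨Set.left_mem_Icc.mpr hxy, ?_⟩
      simp
    have hIccsub : Set.Icc x y ⊆ Set.Icc a b := Set.Icc_subset_Icc hx.1 hy.2
    have hEclosed : IsClosed E := by
      have hg : ContinuousOn (fun z => ‖f z - f x‖ - K * (z - x)) (Set.Icc x y) := by
        apply ContinuousOn.sub
        · exact ((hf.mono hIccsub).sub continuousOn_const).norm
        · exact (continuousOn_const.mul (continuousOn_id.sub continuousOn_const))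
      have : E = Set.Icc x y ∩ (fun z => ‖f z - f x‖ - K * (z - x)) ⁻¹' Set.Iic 0 := by
        ext z
        simp only [hE, Set.mem_sep_iff, Set.mem_inter_iff, Set.mem_preimage, Set.mem_Iic,
          sub_nonpos]
      rw [this]
      exact hg.preimage_isClosed_of_isClosed isClosed_Icc isClosed_Iic
    have hEbdd : BddAbove E := ⟨y, fun z hz => hz.1.2⟩
    have hEne : E.Nonempty := ⟨x, hxE⟩
    set c := sSup E with hc
    have hcE : c ∈ E := hEclosed.csSup_mem hEne hEbdd
    have hcy : c ≤ y := csSup_le hEne fun z hz => hz.1.2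
    have hxc : x ≤ c := le_csSup hEbdd hxE
    have hcb : c ∈ Set.Icc a b := hIccsub ⟨hxc, hcy⟩
    have hcyeq : c = y := by
      by_contra hne
      have hcylt : c < y := lt_of_le_of_ne hcy hne
      obtain ⟨δ, hδ, hδp⟩ := h c hcb
      set s := min (c + δ / 2) y with hs
      have hsc : c < s := lt_min (by linarith) hcylt
      have hsy : s ≤ y := min_le_right _ _
      have hsI : s ∈ Set.Icc x y := ⟨le_trans hxc hsc.le, hsy⟩
      have hsdist : |s - c| < δ := by
        rw [abs_of_pos (by linarith)]
        have : s ≤ c + δ / 2 := min_le_left _ _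
        linarith
      have hstep : ‖f s - f c‖ ≤ K * |s - c| := hδp s (hIccsub hsI) hsdist
      have hsE : s ∈ E := by
        refine ⟨hsI, ?_⟩
        calc ‖f s - f x‖ ≤ ‖f s - f c‖ + ‖f c - f x‖ := norm_sub_le_norm_sub_add_norm_sub _ _ _
        _ ≤ K * |s - c| + K * (c - x) := add_le_add hstep hcE.2
        _ = K * (s - x) := by
            rw [abs_of_pos (by linarith)]
            ring
      exact absurd (le_csSup hEbdd hsE) (not_le.mpr hsc)
    have := hcE.2
    rwa [hcyeq] at this
  intro x hx y hy
  rcases le_total x y with hxy | hyx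
  · rw [abs_of_nonneg (by linarith)]
    exact main x hx y hy hxy
  · rw [abs_of_nonpos (by linarith)]
    rw [← norm_neg, neg_sub]
    have := main y hy x hx hyx
    linarith [this]

end Aux

/-- Continuous eigenvalue parameterizations of locally Lipschitz (operator norm) curves of
normal matrices are locally Lipschitz. -/
theorem continuous_eigenvalues_of_lipschitz_normal_curve_are_lipschitz (n : ℕ)
    (A : ℝ → Matrix (Fin n) (Fin n) ℂ)
    (hLip : ∀ t0 : ℝ, ∃ K : ℝ, ∃ ε : ℝ, 0 < ε ∧ ∀ s t : ℝ,
      |s - t0| < ε → |t - t0| < ε → matrixOpNorm (A s - A t) ≤ K * |s - t|)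
    (hnormal : ∀ t : ℝ, A t * (A t)ᴴ = (A t)ᴴ * A t)
    (l : Fin n → ℝ → ℂ) (hcont : ∀ j, Continuous (l j))
    (hroots : ∀ t : ℝ, ((A t).charpoly).roots = Finset.univ.val.map (fun j => l j t)) :
    ∀ j : Fin n, ∀ t0 : ℝ, ∃ K : ℝ, ∃ ε : ℝ, 0 < ε ∧ ∀ s t : ℝ,
      |s - t0| < ε → |t - t0| < ε → ‖l j s - l j t‖ ≤ K * |s - t| := by
  intro j t0
  obtain ⟨K0, ε, hε, hK⟩ := hLip t0
  set K := max K0 0 with hKdef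
  have hK0 : (0:ℝ) ≤ K := le_max_right _ _
  have hKbnd : ∀ s t : ℝ, |s - t0| < ε → |t - t0| < ε →
      matrixOpNorm (A s - A t) ≤ K * |s - t| := fun s t hs ht =>
    le_trans (hK s t hs ht) (mul_le_mul_of_nonneg_right (le_max_left _ _) (abs_nonneg _))
  set a := t0 - ε/2 with ha
  set b := t0 + ε/2 with hb
  have hmem : ∀ z ∈ Set.Icc a b, |z - t0| < ε := by
    intro z hz
    rw [Set.mem_Icc, ha, hb] at hz
    rw [abs_lt]
    constructor <;> [linarith [hz.1]; linarith [hz.2]]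
  have hspec : ∀ (i : Fin n) (s : ℝ), l i s ∈ spectrum ℂ (A s) := by
    intro i s
    rw [aux_mem_spectrum_iff_mem_roots, hroots]
    exact Multiset.mem_map_of_mem _ (Finset.mem_univ_val _)
  -- pointwise local Lipschitz estimate for `l j`
  have hpointwise : ∀ t ∈ Set.Icc a b, ∃ δ > 0, ∀ s ∈ Set.Icc a b,
      |s - t| < δ → ‖l j s - l j t‖ ≤ K * |s - t| := by
    intro t htI
    set S := Finset.univ.filter (fun i : Fin n => l i t ≠ l j t) with hS
    rcases Finset.eq_empty_or_nonempty S with hSe | hSne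
    · -- all eigenvalues coincide at `t`
      refine ⟨1, one_pos, ?_⟩
      intro s hsI _
      obtain ⟨μ, hμ, hle⟩ := aux_matrix_spec_perturb (A t) (A s) (hnormal t) (hspec j s)
      have hle' : ‖l j s - μ‖ ≤ K * |s - t| :=
        le_trans hle (hKbnd s t (hmem s hsI) (hmem t htI))
      rw [aux_mem_spectrum_iff_mem_roots, hroots] at hμ
      obtain ⟨i, _, hi⟩ := Multiset.mem_map.mp hμ
      have hieq : l i t = l j t := by
        by_contra hne
        have : i ∈ S := Finset.mem_filter.mpr ⟨Finset.mem_univ _, hne⟩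
        rw [hSe] at this
        exact absurd this (Finset.notMem_empty _)
      rwa [← hieq, hi]
    · -- the minimal gap between `l j t` and the other eigenvalues at `t`
      set γ := S.inf' hSne (fun i => ‖l i t - l j t‖) with hγdef
      have hγpos : 0 < γ := by
        rw [hγdef]
        apply Finset.lt_inf'_iff hSne |>.mpr
        intro i hi
        have : l i t ≠ l j t := (Finset.mem_filter.mp hi).2
        exact norm_pos_iff.mpr (sub_ne_zero.mpr this)
      obtain ⟨δ₁, hδ₁pos, hδ₁⟩ := Metric.continuous_iff.mp (hcont j) t (γ/2) (by linarith)
      refine ⟨min δ₁ (γ / (2*(K+1))), lt_min hδ₁pos (by positivity), ?_⟩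
      intro s hsI hsδ
      have hsδ₁ : |s - t| < δ₁ := lt_of_lt_of_le hsδ (min_le_left _ _)
      have hsδ₂ : |s - t| < γ / (2*(K+1)) := lt_of_lt_of_le hsδ (min_le_right _ _)
      have hKs : K * |s - t| < γ / 2 := by
        have h1 : K * |s - t| ≤ K * (γ / (2*(K+1))) :=
          mul_le_mul_of_nonneg_left hsδ₂.le hK0
        have h2 : K * (γ / (2*(K+1))) < γ / 2 := by
          rw [show K * (γ / (2*(K+1))) = (K*γ)/(2*(K+1)) by ring,
            div_lt_div_iff₀ (by positivity) (by norm_num : (0:ℝ) < 2)]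
          nlinarith [hγpos]
        linarith
      obtain ⟨μ, hμ, hle⟩ := aux_matrix_spec_perturb (A t) (A s) (hnormal t) (hspec j s)
      have hle' : ‖l j s - μ‖ ≤ K * |s - t| :=
        le_trans hle (hKbnd s t (hmem s hsI) (hmem t htI))
      rw [aux_mem_spectrum_iff_mem_roots, hroots] at hμ
      obtain ⟨i, _, hi⟩ := Multiset.mem_map.mp hμ
      by_cases hieq : l i t = l j t
      · rwa [← hieq, hi]
      · exfalso
        have hiS : i ∈ S := Finset.mem_filter.mpr ⟨Finset.mem_univ _, hieq⟩
        have hγle : γ ≤ ‖l i t - l j t‖ := Finset.inf'_le _ hiS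
        have hc1 : ‖l j s - l j t‖ < γ/2 := by
          have := hδ₁ s (by rwa [Real.dist_eq])
          rwa [Complex.dist_eq] at this
        have hc2 : ‖l i t - l j s‖ ≤ K * |s - t| := by
          rw [← hi, norm_sub_rev] at hle'
          exact hle'
        have : ‖l i t - l j t‖ ≤ ‖l i t - l j s‖ + ‖l j s - l j t‖ :=
          norm_sub_le_norm_sub_add_norm_sub _ _ _
        linarith
  -- conclude via the local-to-global Lipschitz lemma
  refine ⟨K, ε/2, by linarith, ?_⟩
  intro s t hs ht
  have hsI : s ∈ Set.Icc a b := by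
    rw [abs_lt] at hs
    rw [Set.mem_Icc, ha, hb]
    constructor <;> linarith [hs.1, hs.2]
  have htI : t ∈ Set.Icc a b := by
    rw [abs_lt] at ht
    rw [Set.mem_Icc, ha, hb]
    constructor <;> linarith [ht.1, ht.2]
  have := aux_lipschitz_of_pointwise (hcont j).continuousOn hpointwise t htI s hsI
  exact this
end

section
/- Extension lemma, continuous case: let I ⊆ ℝ be an interval, let n ≤ N, and let μ_1, …, μ_N : I → ℂ and λ_1, …, λ_n : I → ℂ be continuous functions such that for every t ∈ I and z ∈ ℂ the number of indices j ≤ n with λ_j(t) = z is at most the number of indices j ≤ N with μ_j(t) = z. Then there exist continuous functions λ_{n+1}, …, λ_N : I → ℂ such that for every t ∈ I and z ∈ ℂ the number of indices j ≤ N with λ_j(t) = z equals the number of indices j ≤ N with μ_j(t) = z. -/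
open Multiset in
/-- strengthen a relation with memberships -/
theorem rel_mem_strengthen {α β : Type*} {r : α → β → Prop} {A : Multiset α} {B : Multiset β}
    (h : Multiset.Rel r A B) : Multiset.Rel (fun a b => r a b ∧ a ∈ A ∧ b ∈ B) A B := by
  refine h.mono fun a ha b hb hr => ⟨hr, ha, hb⟩

open Multiset in
theorem rel_of_map_eq {α β γ : Type*} {f : α → γ} {g : β → γ} {A : Multiset α} {B : Multiset β}
    (h : A.map f = B.map g) : Multiset.Rel (fun a b => f a = g b) A B := by
  rw [← Multiset.rel_map]
  rw [h]
  exact Multiset.rel_eq.2 rfl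

open Multiset in
/-- turn a Rel against an enumerated multiset into an enumeration -/
theorem rel_to_tuple {α β : Type*} {r : α → β → Prop} :
    ∀ (M : ℕ) (A : Multiset α) (v : Fin M → β),
    Multiset.Rel r A (Multiset.map v Finset.univ.val) →
    ∃ u : Fin M → α, A = Multiset.map u Finset.univ.val ∧ ∀ j, r (u j) (v j) := by
  intro M
  induction M with
  | zero =>
    intro A v h
    refine ⟨Fin.elim0, ?_, fun j => j.elim0⟩
    have hc := Multiset.card_eq_card_of_rel h
    simp only [Multiset.card_map] at hc
    simpa using Multiset.card_eq_zero.1 (by simpa using hc)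
  | succ M ih =>
    intro A v h
    have hus : (Finset.univ : Finset (Fin (M+1))).val
        = 0 ::ₘ (Finset.univ.val.map Fin.succ) := by
      rw [Fin.univ_succ, Finset.cons_val, Finset.map_val]; rfl
    have huniv : (Finset.univ.val : Multiset (Fin (M + 1))).map v
        = v 0 ::ₘ (Finset.univ.val : Multiset (Fin M)).map (v ∘ Fin.succ) := by
      rw [hus, Multiset.map_cons, Multiset.map_map]
    rw [huniv, Multiset.rel_cons_right] at h
    obtain ⟨a, A', hra, hrel, hA⟩ := h
    obtain ⟨u', hu', hru'⟩ := ih A' (v ∘ Fin.succ) hrel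
    refine ⟨Fin.cases a u', ?_, ?_⟩
    · rw [hA, hu', hus, Multiset.map_cons, Multiset.map_map]
      rfl
    · intro j
      induction j using Fin.cases with
      | zero => exact hra
      | succ j => exact hru' j

theorem multiset_to_tuple {α : Type*} : ∀ {M : ℕ} {A : Multiset α}, Multiset.card A = M →
    ∃ u : Fin M → α, A = Multiset.map u Finset.univ.val := by
  intro M
  induction M with
  | zero => intro A h; exact ⟨Fin.elim0, by simpa using Multiset.card_eq_zero.1 h⟩
  | succ M ih =>
    intro A h
    obtain ⟨a, ha⟩ := Multiset.card_pos_iff_exists_mem.1 (by rw [h]; omega)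
    obtain ⟨A', rfl⟩ := Multiset.exists_cons_of_mem ha
    obtain ⟨u', hu'⟩ := ih (A := A') (by simpa using h)
    refine ⟨Fin.cases a u', ?_⟩
    have hus : (Finset.univ : Finset (Fin (M+1))).val
        = 0 ::ₘ (Finset.univ.val.map Fin.succ) := by
      rw [Fin.univ_succ, Finset.cons_val, Finset.map_val]; rfl
    rw [hu', hus, Multiset.map_cons, Multiset.map_map]
    rfl

open Multiset in
theorem rel_dist_sum_le {E : Type*} [SeminormedAddCommGroup E] {ε : ℝ} :
    ∀ {A B : Multiset E}, Multiset.Rel (fun a b => dist a b ≤ ε) A B →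
      dist A.sum B.sum ≤ (Multiset.card B : ℝ) * ε := by
  intro A B h
  induction h with
  | zero => simp
  | @cons a b as bs hab _ ih =>
    simp only [Multiset.sum_cons, Multiset.card_cons]
    calc dist (a + as.sum) (b + bs.sum) ≤ dist a b + dist as.sum bs.sum := dist_add_add_le _ _ _ _
    _ ≤ ε + (Multiset.card bs : ℝ) * ε := add_le_add hab ih
    _ = ((Multiset.card bs : ℝ) + 1) * ε := by ring
    _ = _ := by push_cast; ring

open Multiset in
theorem rel_filter_card_eq {α β : Type*} {r : α → β → Prop} {A : Multiset α} {B : Multiset β}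
    (h : Multiset.Rel r A B) (P : α → Prop) (Q : β → Prop) [DecidablePred P] [DecidablePred Q]
    (hPQ : ∀ a b, r a b → (P a ↔ Q b)) :
    Multiset.card (A.filter P) = Multiset.card (B.filter Q) := by
  induction h with
  | zero => simp
  | @cons a b as bs hab _ ih =>
    by_cases hPa : P a
    · rw [Multiset.filter_cons_of_pos _ hPa, Multiset.filter_cons_of_pos _ ((hPQ a b hab).1 hPa)]
      simp [ih]
    · rw [Multiset.filter_cons_of_neg _ hPa,
        Multiset.filter_cons_of_neg _ (fun hQ => hPa ((hPQ a b hab).2 hQ))]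
      exact ih

open Multiset in
theorem rel_filter_rel {α β : Type*} {r : α → β → Prop} {A : Multiset α} {B : Multiset β}
    (h : Multiset.Rel r A B) (P : α → Prop) (Q : β → Prop) [DecidablePred P] [DecidablePred Q]
    (hPQ : ∀ a b, r a b → (P a ↔ Q b)) :
    Multiset.Rel r (A.filter P) (B.filter Q) := by
  induction h with
  | zero => simp
  | @cons a b as bs hab _ ih =>
    by_cases hPa : P a
    · rw [Multiset.filter_cons_of_pos _ hPa, Multiset.filter_cons_of_pos _ ((hPQ a b hab).1 hPa)]
      exact Multiset.Rel.cons hab ih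
    · rw [Multiset.filter_cons_of_neg _ hPa,
        Multiset.filter_cons_of_neg _ (fun hQ => hPa ((hPQ a b hab).2 hQ))]
      exact ih
theorem multiset_filter_sub {α : Type*} [DecidableEq α] (P : α → Prop) [DecidablePred P]
    {A B : Multiset α} (h : B ≤ A) :
    (A - B).filter P = A.filter P - B.filter P := by
  ext z
  rw [Multiset.count_filter, Multiset.count_sub, Multiset.count_sub,
    Multiset.count_filter, Multiset.count_filter]
  by_cases hz : P z <;> simp [hz]

/-- separation constant for a finite set in a metric space -/
theorem exists_sep (V : Finset ℂ) : ∃ ε0 > 0, ∀ w ∈ V, ∀ w' ∈ V, w ≠ w' → 3 * ε0 ≤ dist w w' := by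
  classical
  set S := (V.offDiag).image (fun p => dist p.1 p.2) with hS
  rcases S.eq_empty_or_nonempty with hSe | hSn
  · refine ⟨1, one_pos, fun w hw w' hw' hne => ?_⟩
    exfalso
    have : dist w w' ∈ S := Finset.mem_image.2 ⟨(w, w'), Finset.mem_offDiag.2 ⟨hw, hw', hne⟩, rfl⟩
    simp [hSe] at this
  · have hpos : 0 < S.min' hSn := by
      obtain ⟨p, hp, hd⟩ := Finset.mem_image.1 (S.min'_mem hSn)
      obtain ⟨_, _, hne⟩ := Finset.mem_offDiag.1 hp
      rw [← hd]
      exact dist_pos.2 hne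
    refine ⟨S.min' hSn / 3, by linarith, fun w hw w' hw' hne => ?_⟩
    have : S.min' hSn ≤ dist w w' :=
      S.min'_le _ (Finset.mem_image.2 ⟨(w, w'), Finset.mem_offDiag.2 ⟨hw, hw', hne⟩, rfl⟩)
    linarith

open Multiset in
/-- build a matching from local counting data (B1) -/
theorem rel_of_counts {ε : ℝ} :
    ∀ (C₀ C : Multiset ℂ),
    (∀ w ∈ C₀, ∀ w' ∈ C₀, w ≠ w' → 2 * ε ≤ dist w w') →
    (∀ w ∈ C₀, Multiset.count w C₀ = Multiset.card (C.filter (fun z => dist z w < ε))) →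
    (∀ z ∈ C, ∃ w ∈ C₀, dist z w < ε) →
    Multiset.Rel (fun a b => dist a b < ε) C C₀ := by
  classical
  intro C₀
  induction C₀ using Multiset.strongInductionOn with
  | ih C₀ ih =>
  intro C h3 h1 h2
  rcases C₀.empty_or_exists_mem with h0 | ⟨w, hw⟩
  · subst h0
    have : C = 0 := by
      rcases C.empty_or_exists_mem with h | ⟨z, hz⟩
      · exact h
      · obtain ⟨w, hw, -⟩ := h2 z hz
        exact absurd hw (by simp)
    simp [this]
  · obtain ⟨C₀', rfl⟩ := Multiset.exists_cons_of_mem hw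
    -- find z in C near w
    have hcnt : 0 < Multiset.card (C.filter (fun z => dist z w < ε)) := by
      rw [← h1 w (Multiset.mem_cons_self _ _)]
      simp [Multiset.count_cons]
    obtain ⟨z, hzf⟩ := Multiset.card_pos_iff_exists_mem.1 hcnt
    have hzC : z ∈ C := Multiset.mem_of_mem_filter hzf
    have hzw : dist z w < ε := (Multiset.mem_filter.1 hzf).2
    obtain ⟨C', rfl⟩ := Multiset.exists_cons_of_mem hzC
    refine Multiset.Rel.cons hzw (ih C₀' (Multiset.lt_cons_self _ _) C' ?_ ?_ ?_)
    · intro a ha b hb hne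
      exact h3 a (Multiset.mem_cons_of_mem ha) b (Multiset.mem_cons_of_mem hb) hne
    · intro w' hw'
      have hw'mem : w' ∈ w ::ₘ C₀' := Multiset.mem_cons_of_mem hw'
      have hkey := h1 w' hw'mem
      by_cases hww' : w' = w
      · subst hww'
        rw [Multiset.count_cons_self] at hkey
        have hfz : dist z w' < ε := hzw
        rw [Multiset.filter_cons_of_pos (p := fun u => dist u w' < ε) _ hfz] at hkey
        simp only [Multiset.card_cons] at hkey
        omega
      · rw [Multiset.count_cons_of_ne hww'] at hkey
        have hfz : ¬ (dist z w' < ε) := by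
          intro hlt
          have := h3 w' hw'mem w (Multiset.mem_cons_self _ _) hww'
          have : 2 * ε ≤ dist z w' + dist z w := le_trans this (by
            calc dist w' w ≤ dist w' z + dist z w := dist_triangle _ _ _
            _ = dist z w' + dist z w := by rw [dist_comm w' z])
          linarith
        rw [Multiset.filter_cons_of_neg (p := fun u => dist u w' < ε) _ hfz] at hkey
        exact hkey
    · intro z' hz'
      obtain ⟨w', hw', hdz⟩ := h2 z' (Multiset.mem_cons_of_mem hz')
      rcases Multiset.mem_cons.1 hw' with rfl | hmem
      · -- w' = w ; need w ∈ C₀', else contradiction with counts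
        by_cases hmem : w' ∈ C₀'
        · exact ⟨w', hmem, hdz⟩
        · exfalso
          have hcw : Multiset.count w' (w' ::ₘ C₀') = 1 := by
            rw [Multiset.count_cons_self, Multiset.count_eq_zero.2 hmem]
          have := h1 w' (Multiset.mem_cons_self _ _)
          rw [hcw, Multiset.filter_cons_of_pos (p := fun u => dist u w' < ε) _ hzw] at this
          have hz'f : z' ∈ C'.filter (fun z => dist z w' < ε) := Multiset.mem_filter.2 ⟨hz', hdz⟩
          have : 1 = Multiset.card (C'.filter (fun z => dist z w' < ε)) + 1 := by
            simpa using this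
          have hpos : 0 < Multiset.card (C'.filter (fun z => dist z w' < ε)) :=
            Multiset.card_pos_iff_exists_mem.2 ⟨z', hz'f⟩
          omega
      · exact ⟨w', hmem, hdz⟩
open Multiset in
theorem rel_exists_right {α β : Type*} {r : α → β → Prop} {A : Multiset α} {B : Multiset β}
    (h : Multiset.Rel r A B) {a : α} (ha : a ∈ A) : ∃ b ∈ B, r a b := by
  induction h with
  | zero => exact absurd ha (by simp)
  | @cons x y as bs hxy _ ih =>
    rcases Multiset.mem_cons.1 ha with rfl | hmem
    · exact ⟨y, Multiset.mem_cons_self _ _, hxy⟩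
    · obtain ⟨b, hb, hrb⟩ := ih hmem
      exact ⟨b, Multiset.mem_cons_of_mem hb, hrb⟩

/-- matching-continuity of a multiset-valued map -/
def MClike (I : Set ℝ) (F : ℝ → Multiset ℂ) : Prop :=
  ∀ t0 ∈ I, ∀ ε > 0, ∃ δ > 0, ∀ t ∈ I, |t - t0| < δ →
    Multiset.Rel (fun a b => dist a b < ε) (F t) (F t0)

def IsLift (U : Set ℝ) (F : ℝ → Multiset ℂ) (H : Multiset (ℝ → ℂ)) : Prop :=
  (∀ g ∈ H, ContinuousOn g U) ∧ ∀ t ∈ U, F t = H.map (fun g => g t)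

def IsLiftT (U : Set ℝ) (F : ℝ → Multiset ℂ) {N : ℕ} (G : Fin N → ℝ → ℂ) : Prop :=
  (∀ j, ContinuousOn (G j) U) ∧
    ∀ t ∈ U, F t = Multiset.map (fun j => G j t) Finset.univ.val

theorem IsLift.mono {U S : Set ℝ} {F H} (h : IsLift U F H) (hS : S ⊆ U) : IsLift S F H :=
  ⟨fun g hg => (h.1 g hg).mono hS, fun t ht => h.2 t (hS ht)⟩

theorem IsLiftT.isLift {U F N} {G : Fin N → ℝ → ℂ} (h : IsLiftT U F G) :
    IsLift U F (Multiset.map G Finset.univ.val) := by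
  refine ⟨fun g hg => ?_, fun t ht => ?_⟩
  · obtain ⟨j, -, rfl⟩ := Multiset.mem_map.1 hg
    exact h.1 j
  · rw [h.2 t ht, Multiset.map_map]
    rfl

theorem IsLift.toTuple {U F H} {N : ℕ} (h : IsLift U F H) (hc : Multiset.card H = N) :
    ∃ G : Fin N → ℝ → ℂ, IsLiftT U F G := by
  obtain ⟨u, hu⟩ := multiset_to_tuple hc
  refine ⟨u, fun j => h.1 _ (by rw [hu]; exact Multiset.mem_map_of_mem _ (by simp)), ?_⟩
  intro t ht
  rw [h.2 t ht, hu, Multiset.map_map]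
  rfl

theorem IsLift.card_eq {U F H} {N : ℕ} (h : IsLift U F H) {t : ℝ} (ht : t ∈ U)
    (hc : Multiset.card (F t) = N) : Multiset.card H = N := by
  rw [← hc, h.2 t ht, Multiset.card_map]

open Multiset in
theorem MClike.diff {I : Set ℝ} {A B : ℝ → Multiset ℂ} (hA : MClike I A) (hB : MClike I B)
    (hle : ∀ t ∈ I, B t ≤ A t) : MClike I (fun t => A t - B t) := by
  classical
  intro t0 ht0 ε hε
  obtain ⟨ε0, hε0, hsep⟩ := exists_sep (A t0).toFinset
  set ε' := min ε ε0 with hε'def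
  have hε' : 0 < ε' := lt_min hε hε0
  obtain ⟨δA, hδA, hA'⟩ := hA t0 ht0 ε' hε'
  obtain ⟨δB, hδB, hB'⟩ := hB t0 ht0 ε' hε'
  refine ⟨min δA δB, lt_min hδA hδB, fun t ht hd => ?_⟩
  have hrelA := hA' t ht (lt_of_lt_of_le hd (min_le_left _ _))
  have hrelB := hB' t ht (lt_of_lt_of_le hd (min_le_right _ _))
  -- counting in small balls
  have hcountA : ∀ w ∈ (A t0).toFinset,
      Multiset.card ((A t).filter (fun z => dist z w < ε')) = Multiset.count w (A t0) := by
    intro w hwV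
    rw [Multiset.count_eq_card_filter_eq]
    refine rel_filter_card_eq (rel_mem_strengthen hrelA)
      (fun z => dist z w < ε') (fun b => w = b) ?_
    rintro a b ⟨hab, -, hbA⟩
    constructor
    · intro haw
      by_contra hne
      have h3 := hsep w hwV b (Multiset.mem_toFinset.2 hbA) hne
      have : dist w b ≤ dist a w + dist a b := by
        calc dist w b ≤ dist w a + dist a b := dist_triangle _ _ _
        _ = dist a w + dist a b := by rw [dist_comm w a]
      have hh : ε' ≤ ε0 := min_le_right _ _
      linarith
    · rintro rfl
      exact hab
  have hcountB : ∀ w ∈ (A t0).toFinset,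
      Multiset.card ((B t).filter (fun z => dist z w < ε')) = Multiset.count w (B t0) := by
    intro w hwV
    rw [Multiset.count_eq_card_filter_eq]
    refine rel_filter_card_eq (rel_mem_strengthen hrelB)
      (fun z => dist z w < ε') (fun b => w = b) ?_
    rintro a b ⟨hab, -, hbB⟩
    have hbA : b ∈ A t0 := Multiset.mem_of_le (hle t0 ht0) hbB
    constructor
    · intro haw
      by_contra hne
      have h3 := hsep w hwV b (Multiset.mem_toFinset.2 hbA) hne
      have : dist w b ≤ dist a w + dist a b := by
        calc dist w b ≤ dist w a + dist a b := dist_triangle _ _ _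
        _ = dist a w + dist a b := by rw [dist_comm w a]
      have hh : ε' ≤ ε0 := min_le_right _ _
      linarith
    · rintro rfl
      exact hab
  have hcountD : ∀ w ∈ (A t0).toFinset,
      Multiset.card ((A t - B t).filter (fun z => dist z w < ε'))
        = Multiset.count w (A t0 - B t0) := by
    intro w hwV
    rw [multiset_filter_sub _ (hle t ht),
      Multiset.card_sub (Multiset.filter_le_filter _ (hle t ht)),
      hcountA w hwV, hcountB w hwV, Multiset.count_sub]
  have hmain : Multiset.Rel (fun a b => dist a b < ε') (A t - B t) (A t0 - B t0) := by
    refine rel_of_counts _ _ ?_ ?_ ?_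
    · intro w hw w' hw' hne
      have hwV := Multiset.mem_toFinset.2 (Multiset.mem_of_le (Multiset.sub_le_self _ _) hw)
      have hw'V := Multiset.mem_toFinset.2 (Multiset.mem_of_le (Multiset.sub_le_self _ _) hw')
      have := hsep w hwV w' hw'V hne
      have hh : ε' ≤ ε0 := min_le_right _ _
      linarith
    · intro w hw
      exact (hcountD w (Multiset.mem_toFinset.2
        (Multiset.mem_of_le (Multiset.sub_le_self _ _) hw))).symm
    · intro z hz
      have hzA : z ∈ A t := Multiset.mem_of_le (Multiset.sub_le_self _ _) hz
      obtain ⟨b, hbA, hab⟩ := rel_exists_right hrelA hzA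
      have hbV := Multiset.mem_toFinset.2 hbA
      have hbD : b ∈ A t0 - B t0 := by
        rw [← Multiset.count_pos, ← hcountD b hbV]
        exact Multiset.card_pos_iff_exists_mem.2 ⟨z, Multiset.mem_filter.2 ⟨hz, hab⟩⟩
      exact ⟨b, hbD, hab⟩
  exact hmain.mono fun a _ b _ hab => lt_of_lt_of_le hab (min_le_left _ _)
theorem glue_cont {c : ℝ} {S₁ S₂ : Set ℝ} {f g : ℝ → ℂ}
    (hS₁ : S₁ ⊆ Set.Iic c) (hS₂ : S₂ ⊆ Set.Ici c) (hc₁ : c ∈ S₁) (hc₂ : c ∈ S₂)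
    (hf : ContinuousOn f S₁) (hg : ContinuousOn g S₂) (hfg : f c = g c) :
    ContinuousOn (fun t => if t < c then f t else g t) (S₁ ∪ S₂) := by
  have hEq₁ : Set.EqOn (fun t => if t < c then f t else g t) f S₁ := by
    intro t ht
    rcases lt_or_eq_of_le (Set.mem_Iic.1 (hS₁ ht)) with h | h
    · simp [h]
    · simp [h, hfg]
  have hEq₂ : Set.EqOn (fun t => if t < c then f t else g t) g S₂ := by
    intro t ht
    have : ¬ t < c := not_lt.2 (hS₂ ht)
    simp [this]
  intro t ht
  have h₁ : ContinuousWithinAt (fun u => if u < c then f u else g u) S₁ t := by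
    rcases Classical.em (t ∈ S₁) with htS | htS
    · exact (hf t htS).congr hEq₁ (hEq₁ htS)
    · have htS₂ : t ∈ S₂ := ht.resolve_left htS
      have htc : c < t := lt_of_le_of_ne (hS₂ htS₂) (fun h => htS (h ▸ hc₁))
      refine continuousWithinAt_of_notMem_closure ?_
      intro hcl
      have : t ∈ Set.Iic c := closure_minimal hS₁ isClosed_Iic hcl
      exact absurd this (not_le.2 htc)
  have h₂ : ContinuousWithinAt (fun u => if u < c then f u else g u) S₂ t := by
    rcases Classical.em (t ∈ S₂) with htS | htS
    · exact (hg t htS).congr hEq₂ (hEq₂ htS)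
    · have htS₁ : t ∈ S₁ := ht.resolve_right htS
      have htc : t < c := lt_of_le_of_ne (hS₁ htS₁) (fun h => htS (h ▸ hc₂))
      refine continuousWithinAt_of_notMem_closure ?_
      intro hcl
      have : t ∈ Set.Ici c := closure_minimal hS₂ isClosed_Ici hcl
      exact absurd this (not_le.2 htc)
  simpa using h₁.union h₂

open Multiset in
theorem isLift_glue {F : ℝ → Multiset ℂ} {c : ℝ} {S₁ S₂ : Set ℝ}
    (hS₁ : S₁ ⊆ Set.Iic c) (hS₂ : S₂ ⊆ Set.Ici c) (hc₁ : c ∈ S₁) (hc₂ : c ∈ S₂)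
    {H₁ H₂ : Multiset (ℝ → ℂ)} (h₁ : IsLift S₁ F H₁) (h₂ : IsLift S₂ F H₂) :
    ∃ H, IsLift (S₁ ∪ S₂) F H ∧ Multiset.card H = Multiset.card H₁ := by
  classical
  obtain ⟨N, hN⟩ : ∃ N, Multiset.card H₁ = N := ⟨_, rfl⟩
  obtain ⟨u, hu⟩ := multiset_to_tuple hN
  have hmapeq : H₂.map (fun g => g c) = Multiset.map (fun j => u j c) Finset.univ.val := by
    have e1 : H₂.map (fun g => g c) = F c := (h₂.2 c hc₂).symm
    have e2 : F c = H₁.map (fun g => g c) := h₁.2 c hc₁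
    have e3 : H₁.map (fun g => g c) = (Multiset.map u Finset.univ.val).map (fun g => g c) :=
      congrArg _ hu
    rw [e1, e2, e3, Multiset.map_map]
    rfl
  have hrel : Multiset.Rel (fun (g : ℝ → ℂ) (z : ℂ) => g c = z) H₂
      (Multiset.map (fun j => u j c) Finset.univ.val) := by
    have h := rel_of_map_eq (f := fun (g : ℝ → ℂ) => g c) (g := id)
      (B := Multiset.map (fun j => u j c) Finset.univ.val)
      (by rw [Multiset.map_id]; exact hmapeq)
    exact h.mono (fun a _ b _ hr => hr)
  obtain ⟨u₂, hu₂, hjc⟩ := rel_to_tuple _ H₂ (fun j => u j c) hrel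
  set w : Fin N → ℝ → ℂ := fun j t => if t < c then u j t else u₂ j t with hw
  refine ⟨Multiset.map w Finset.univ.val, ⟨?_, ?_⟩, by simp [hN]⟩
  · intro g hg
    obtain ⟨j, -, rfl⟩ := Multiset.mem_map.1 hg
    exact glue_cont hS₁ hS₂ hc₁ hc₂
      (h₁.1 _ (by rw [hu]; exact Multiset.mem_map_of_mem _ (by simp)))
      (h₂.1 _ (by rw [hu₂]; exact Multiset.mem_map_of_mem _ (by simp)))
      ((hjc j).symm)
  · intro t ht
    rcases ht with ht | ht
    · rw [h₁.2 t ht, hu, Multiset.map_map, Multiset.map_map]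
      refine Multiset.map_congr rfl ?_
      intro j _
      rcases lt_or_eq_of_le (Set.mem_Iic.1 (hS₁ ht)) with h | h
      · simp [hw, h]
      · simp [hw, h, hjc j]
    · rw [h₂.2 t ht, hu₂, Multiset.map_map, Multiset.map_map]
      refine Multiset.map_congr rfl ?_
      intro j _
      have : ¬ t < c := not_lt.2 (hS₂ ht)
      simp [hw, this]

open Set in
theorem lift_on_Icc {U : Set ℝ} (hU : U.OrdConnected) {F : ℝ → Multiset ℂ}
    (hloc : ∀ s ∈ U, ∃ δ > 0, ∃ H, IsLift (Set.Ioo (s - δ) (s + δ) ∩ U) F H)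
    {a b : ℝ} (ha : a ∈ U) (hb : b ∈ U) (hab : a ≤ b) :
    ∃ H, IsLift (U ∩ Set.Icc a b) F H := by
  classical
  set P := {c | c ∈ Set.Icc a b ∧ c ∈ U ∧ ∃ H, IsLift (U ∩ Set.Icc a c) F H} with hP
  have haP : a ∈ P := by
    obtain ⟨δ, hδ, H, hH⟩ := hloc a ha
    refine ⟨⟨le_refl a, hab⟩, ha, H, hH.mono ?_⟩
    rintro t ⟨htU, ht1, ht2⟩
    have : t = a := le_antisymm ht2 ht1
    subst this
    exact ⟨⟨by linarith, by linarith⟩, htU⟩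
  have hbdd : BddAbove P := ⟨b, fun c hc => hc.1.2⟩
  set s := sSup P with hs
  have hsa : a ≤ s := le_csSup hbdd haP
  have hsb : s ≤ b := csSup_le ⟨a, haP⟩ (fun c hc => hc.1.2)
  have hsU : s ∈ U := hU.out ha hb ⟨hsa, hsb⟩
  obtain ⟨δ, hδ, Hs, hHs⟩ := hloc s hsU
  have hcex : ∃ c ∈ P, s - δ < c := by
    by_cases hsP : s ∈ P
    · exact ⟨s, hsP, by linarith⟩
    · obtain ⟨c, hc, hlt⟩ := exists_lt_of_lt_csSup ⟨a, haP⟩ (by linarith : s - δ < sSup P)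
      exact ⟨c, hc, hlt⟩
  obtain ⟨c, hcP, hcδ⟩ := hcex
  have hcs : c ≤ s := le_csSup hbdd hcP
  obtain ⟨H₁, hH₁⟩ := hcP.2.2
  set d := min b (s + δ / 2) with hd
  have hcd : c ≤ d := le_min hcP.1.2 (by linarith)
  have hdb : d ≤ b := min_le_left _ _
  have hda : a ≤ d := le_trans hcP.1.1 hcd
  have hdU : d ∈ U := hU.out ha hb ⟨hda, hdb⟩
  -- glue
  have hglue := isLift_glue (c := c) (S₁ := U ∩ Set.Icc a c)
    (S₂ := (Set.Ioo (s - δ) (s + δ) ∩ U) ∩ Set.Icc c d)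
    (fun t ht => ht.2.2) (fun t ht => ht.2.1)
    ⟨hcP.2.1, hcP.1.1, le_refl c⟩
    ⟨⟨⟨hcδ, by linarith⟩, hcP.2.1⟩, le_refl c, hcd⟩
    hH₁ (hHs.mono Set.inter_subset_left)
  obtain ⟨Hg, hHg, -⟩ := hglue
  have hsub : U ∩ Set.Icc a d ⊆ (U ∩ Set.Icc a c) ∪ ((Set.Ioo (s - δ) (s + δ) ∩ U) ∩ Set.Icc c d) := by
    rintro t ⟨htU, hta, htd⟩
    rcases le_or_gt t c with h | h
    · exact Or.inl ⟨htU, hta, h⟩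
    · refine Or.inr ⟨⟨⟨by linarith, ?_⟩, htU⟩, le_of_lt h, htd⟩
      have : t ≤ s + δ / 2 := le_trans htd (min_le_right _ _)
      linarith
  have hdP : d ∈ P := ⟨⟨hda, hdb⟩, hdU, Hg, hHg.mono hsub⟩
  have hds : d ≤ s := le_csSup hbdd hdP
  rcases le_or_gt b (s + δ / 2) with hbs | hbs
  · have hdb' : d = b := min_eq_left hbs
    rw [hdb'] at hdP
    exact hdP.2.2
  · exfalso
    have : d = s + δ / 2 := min_eq_right (by linarith)
    rw [this] at hds
    linarith
theorem monotonize {S : Set ℝ} (c : ℕ → ℝ) (hc : ∀ k, c k ∈ S) :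
    ∃ b : ℕ → ℝ, (∀ k, b k ∈ S) ∧ Monotone b ∧ ∀ k, c k ≤ b k := by
  set b : ℕ → ℝ := fun k => Nat.rec (c 0) (fun k bk => max bk (c (k + 1))) k with hb
  have hstep : ∀ k, b (k + 1) = max (b k) (c (k + 1)) := fun k => rfl
  have hmem : ∀ k, b k ∈ S := by
    intro k
    induction k with
    | zero => exact hc 0
    | succ k ih =>
      rw [hstep]
      rcases max_cases (b k) (c (k + 1)) with ⟨h, -⟩ | ⟨h, -⟩ <;> rw [h]
      · exact ih
      · exact hc (k + 1)
  have hmono : Monotone b := monotone_nat_of_le_succ (fun k => by rw [hstep]; exact le_max_left _ _)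
  have hle : ∀ k, c k ≤ b k := by
    intro k
    cases k with
    | zero => exact le_refl _
    | succ k => rw [hstep]; exact le_max_right _ _
  exact ⟨b, hmem, hmono, hle⟩

theorem cofinal_above {S : Set ℝ} (hS : S.Nonempty) :
    ∃ b : ℕ → ℝ, (∀ k, b k ∈ S) ∧ Monotone b ∧ ∀ u ∈ S, ∃ k, u ≤ b k := by
  by_cases hbdd : BddAbove S
  · by_cases hsup : sSup S ∈ S
    · exact ⟨fun _ => sSup S, fun _ => hsup, monotone_const, fun u hu => ⟨0, le_csSup hbdd hu⟩⟩
    · have hex : ∀ k : ℕ, ∃ x ∈ S, sSup S - 1 / (k + 1) < x := by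
        intro k
        refine exists_lt_of_lt_csSup hS ?_
        have : (0:ℝ) < 1 / (k + 1) := by positivity
        linarith
      choose c hcS hclt using hex
      obtain ⟨b, hbS, hbmono, hble⟩ := monotonize c hcS
      refine ⟨b, hbS, hbmono, fun u hu => ?_⟩
      have hus : u < sSup S := lt_of_le_of_ne (le_csSup hbdd hu) (fun h => hsup (h ▸ hu))
      obtain ⟨k, hk⟩ := exists_nat_one_div_lt (by linarith : 0 < sSup S - u)
      refine ⟨k, le_trans (le_of_lt ?_) (hble k)⟩
      have := hclt k
      have hk' : (1:ℝ) / (k + 1) < sSup S - u := hk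
      linarith
  · have hex : ∀ k : ℕ, ∃ x ∈ S, (k : ℝ) < x := by
      intro k
      obtain ⟨x, hxS, hx⟩ := not_bddAbove_iff.1 hbdd (k : ℝ)
      exact ⟨x, hxS, hx⟩
    choose c hcS hclt using hex
    obtain ⟨b, hbS, hbmono, hble⟩ := monotonize c hcS
    refine ⟨b, hbS, hbmono, fun u hu => ?_⟩
    obtain ⟨k, hk⟩ := exists_nat_ge u
    exact ⟨k, le_trans hk (le_trans (le_of_lt (hclt k)) (hble k))⟩

theorem cofinal_below {S : Set ℝ} (hS : S.Nonempty) :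
    ∃ a : ℕ → ℝ, (∀ k, a k ∈ S) ∧ Antitone a ∧ ∀ u ∈ S, ∃ k, a k ≤ u := by
  obtain ⟨x0, hx0⟩ := hS
  obtain ⟨b, hbS, hbmono, hbcof⟩ := cofinal_above (S := Neg.neg '' S) ⟨-x0, x0, hx0, rfl⟩
  refine ⟨fun k => - b k, fun k => ?_, fun i j hij => by simpa using hbmono hij, fun u hu => ?_⟩
  · obtain ⟨y, hyS, hy⟩ := hbS k
    simp only [← hy, neg_neg]
    exact hyS
  · obtain ⟨k, hk⟩ := hbcof (-u) ⟨u, hu, rfl⟩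
    refine ⟨k, ?_⟩
    simp only
    linarith
open Set in
theorem step_ex {U : Set ℝ} (hU : U.OrdConnected) {F : ℝ → Multiset ℂ}
    (hloc : ∀ s ∈ U, ∃ δ > 0, ∃ H, IsLift (Set.Ioo (s - δ) (s + δ) ∩ U) F H)
    {N : ℕ} {a' b' a'' b'' : ℝ} (ha'' : a'' ∈ U) (hb'' : b'' ∈ U)
    (h1 : a'' ≤ a') (h2 : a' ≤ b') (h3 : b' ≤ b'') (ha' : a' ∈ U) (hb' : b' ∈ U)
    {X : Fin N → ℝ → ℂ} (hX : IsLiftT (U ∩ Set.Icc a' b') F X) :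
    ∃ Y : Fin N → ℝ → ℂ, IsLiftT (U ∩ Set.Icc a'' b'') F Y ∧
      ∀ j t, a' ≤ t → t ≤ b' → Y j t = X j t := by
  classical
  obtain ⟨HL, hHL⟩ := lift_on_Icc hU hloc ha'' ha' h1
  obtain ⟨HR, hHR⟩ := lift_on_Icc hU hloc hb' hb'' h3
  have ha'L : a' ∈ U ∩ Set.Icc a'' a' := ⟨ha', h1, le_refl _⟩
  have ha'X : a' ∈ U ∩ Set.Icc a' b' := ⟨ha', le_refl _, h2⟩
  have hb'X : b' ∈ U ∩ Set.Icc a' b' := ⟨hb', h2, le_refl _⟩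
  have hb'R : b' ∈ U ∩ Set.Icc b' b'' := ⟨hb', le_refl _, h3⟩
  -- pair HL with X at a'
  have hrelL : Multiset.Rel (fun (g : ℝ → ℂ) (z : ℂ) => g a' = z) HL
      (Multiset.map (fun j => X j a') Finset.univ.val) := by
    have hmapeq : HL.map (fun g => g a') = Multiset.map (fun j => X j a') Finset.univ.val := by
      rw [← hHL.2 a' ha'L, hX.2 a' ha'X]
    have h := rel_of_map_eq (f := fun (g : ℝ → ℂ) => g a') (g := id)
      (B := Multiset.map (fun j => X j a') Finset.univ.val)
      (by rw [Multiset.map_id]; exact hmapeq)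
    exact h.mono (fun a _ b _ hr => hr)
  obtain ⟨uL, huL, hjL⟩ := rel_to_tuple _ HL (fun j => X j a') hrelL
  have hrelR : Multiset.Rel (fun (g : ℝ → ℂ) (z : ℂ) => g b' = z) HR
      (Multiset.map (fun j => X j b') Finset.univ.val) := by
    have hmapeq : HR.map (fun g => g b') = Multiset.map (fun j => X j b') Finset.univ.val := by
      rw [← hHR.2 b' hb'R, hX.2 b' hb'X]
    have h := rel_of_map_eq (f := fun (g : ℝ → ℂ) => g b') (g := id)
      (B := Multiset.map (fun j => X j b') Finset.univ.val)
      (by rw [Multiset.map_id]; exact hmapeq)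
    exact h.mono (fun a _ b _ hr => hr)
  obtain ⟨uR, huR, hjR⟩ := rel_to_tuple _ HR (fun j => X j b') hrelR
  set Y : Fin N → ℝ → ℂ := fun j t => if t < a' then uL j t else if t ≤ b' then X j t else uR j t
    with hY
  have hYX : ∀ j t, a' ≤ t → t ≤ b' → Y j t = X j t := by
    intro j t hta htb
    simp [hY, not_lt.2 hta, htb]
  have hmemL : ∀ j, uL j ∈ HL := fun j => by
    rw [huL]; exact Multiset.mem_map_of_mem _ (by simp)
  have hmemR : ∀ j, uR j ∈ HR := fun j => by
    rw [huR]; exact Multiset.mem_map_of_mem _ (by simp)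
  refine ⟨Y, ⟨?_, ?_⟩, hYX⟩
  · -- continuity
    intro j
    have hZ : ContinuousOn (fun t => if t < a' then uL j t else X j t)
        ((U ∩ Set.Icc a'' a') ∪ (U ∩ Set.Icc a' b')) :=
      glue_cont (fun t ht => ht.2.2) (fun t ht => ht.2.1) ha'L ha'X
        (hHL.1 _ (hmemL j)) (hX.1 j) (hjL j)
    have hfull : ContinuousOn
        (fun t => if t < b' then (if t < a' then uL j t else X j t) else uR j t)
        (((U ∩ Set.Icc a'' a') ∪ (U ∩ Set.Icc a' b')) ∪ (U ∩ Set.Icc b' b'')) := by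
      refine glue_cont (c := b') ?_ (fun t ht => ht.2.1) (Or.inr hb'X) hb'R hZ
        (hHR.1 _ (hmemR j)) ?_
      · rintro t (ht | ht)
        · exact le_trans ht.2.2 h2
        · exact ht.2.2
      · show (if b' < a' then uL j b' else X j b') = uR j b'
        rw [if_neg (not_lt.2 h2)]
        exact (hjR j).symm
    have hYeq : Y j = fun t => if t < b' then (if t < a' then uL j t else X j t) else uR j t := by
      funext t
      rcases lt_trichotomy t b' with h | h | h
      · simp [hY, h, le_of_lt h]
      · subst h
        simp [hY, lt_irrefl, not_lt.2 h2, hjR j]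
      · have h4 : ¬ t < a' := not_lt.2 (le_trans h2 (le_of_lt h))
        have h5 : ¬ t ≤ b' := not_le.2 h
        simp [hY, h4, h5, not_lt.2 (le_of_lt h)]
    rw [hYeq]
    refine hfull.mono ?_
    rintro t ⟨htU, hta, htb⟩
    rcases le_or_gt t a' with h | h
    · exact Or.inl (Or.inl ⟨htU, hta, h⟩)
    · rcases le_or_gt t b' with h' | h'
      · exact Or.inl (Or.inr ⟨htU, le_of_lt h, h'⟩)
      · exact Or.inr ⟨htU, le_of_lt h', htb⟩
  · -- multiset values
    intro t ⟨htU, hta, htb⟩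
    rcases lt_or_ge t a' with h | h
    · have : F t = HL.map (fun g => g t) := hHL.2 t ⟨htU, hta, le_of_lt h⟩
      rw [this, huL, Multiset.map_map]
      refine Multiset.map_congr rfl (fun j _ => ?_)
      simp [hY, h]
    · rcases le_or_gt t b' with h' | h'
      · rw [hX.2 t ⟨htU, h, h'⟩]
        refine Multiset.map_congr rfl (fun j _ => ?_)
        simp [hY, not_lt.2 h, h']
      · have : F t = HR.map (fun g => g t) := hHR.2 t ⟨htU, le_of_lt h', htb⟩
        rw [this, huR, Multiset.map_map]
        refine Multiset.map_congr rfl (fun j _ => ?_)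
        simp [hY, not_lt.2 (le_trans h2 (le_of_lt h')), not_le.2 h']
open Set in
theorem lift_full {U : Set ℝ} (hU : U.OrdConnected) {F : ℝ → Multiset ℂ} {N : ℕ}
    (hcard : ∀ t ∈ U, Multiset.card (F t) = N)
    (hloc : ∀ s ∈ U, ∃ δ > 0, ∃ H, IsLift (Set.Ioo (s - δ) (s + δ) ∩ U) F H) :
    ∃ G : Fin N → ℝ → ℂ, IsLiftT U F G := by
  classical
  rcases U.eq_empty_or_nonempty with rfl | hne
  · exact ⟨fun _ _ => 0, fun j => continuousOn_empty _, fun t ht => absurd ht (by simp)⟩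
  obtain ⟨b, hbU, hbmono, hbcof⟩ := cofinal_above hne
  obtain ⟨a0, ha0U, ha0anti, ha0cof⟩ := cofinal_below hne
  set a : ℕ → ℝ := fun k => min (a0 k) (b 0) with ha
  have haU : ∀ k, a k ∈ U := by
    intro k
    rcases min_cases (a0 k) (b 0) with ⟨h, -⟩ | ⟨h, -⟩ <;> rw [ha] <;> simp only [h]
    · exact ha0U k
    · exact hbU 0
  have haanti : Antitone a := fun i j hij => min_le_min (ha0anti hij) (le_refl _)
  have hacof : ∀ u ∈ U, ∃ k, a k ≤ u := by
    intro u hu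
    obtain ⟨k, hk⟩ := ha0cof u hu
    exact ⟨k, le_trans (min_le_left _ _) hk⟩
  have hab : ∀ k, a k ≤ b k := fun k => le_trans (min_le_right _ _) (hbmono (Nat.zero_le k))
  -- base lift
  obtain ⟨H0, hH0⟩ := lift_on_Icc hU hloc (haU 0) (hbU 0) (hab 0)
  have hH0card : Multiset.card H0 = N :=
    hH0.card_eq ⟨haU 0, le_refl _, hab 0⟩ (hcard _ (haU 0))
  obtain ⟨X0, hX0⟩ := hH0.toTuple hH0card
  -- step function via choice
  have hstep : ∀ (k : ℕ) (X : Fin N → ℝ → ℂ), ∃ Y : Fin N → ℝ → ℂ,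
      IsLiftT (U ∩ Set.Icc (a k) (b k)) F X →
        (IsLiftT (U ∩ Set.Icc (a (k+1)) (b (k+1))) F Y ∧
          ∀ j t, a k ≤ t → t ≤ b k → Y j t = X j t) := by
    intro k X
    by_cases hX : IsLiftT (U ∩ Set.Icc (a k) (b k)) F X
    · obtain ⟨Y, hY1, hY2⟩ := step_ex hU hloc (haU (k+1)) (hbU (k+1))
        (haanti (Nat.le_succ k)) (hab k) (hbmono (Nat.le_succ k)) (haU k) (hbU k) hX
      exact ⟨Y, fun _ => ⟨hY1, hY2⟩⟩
    · exact ⟨X, fun h => absurd h hX⟩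
  choose step hstepspec using hstep
  set T : ℕ → (Fin N → ℝ → ℂ) := fun k => Nat.rec X0 (fun k Xk => step k Xk) k with hT
  have hTstep : ∀ k, T (k + 1) = step k (T k) := fun k => rfl
  have hTlift : ∀ k, IsLiftT (U ∩ Set.Icc (a k) (b k)) F (T k) := by
    intro k
    induction k with
    | zero => exact hX0
    | succ k ih => rw [hTstep]; exact (hstepspec k (T k) ih).1
  have hTagree : ∀ k j t, a k ≤ t → t ≤ b k → T (k + 1) j t = T k j t := by
    intro k j t h1 h2
    rw [hTstep]
    exact (hstepspec k (T k) (hTlift k)).2 j t h1 h2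
  have hTagree2 : ∀ k m j t, a k ≤ t → t ≤ b k → T (k + m) j t = T k j t := by
    intro k m
    induction m with
    | zero => intro j t _ _; rfl
    | succ m ih =>
      intro j t h1 h2
      have e1 : k + (m + 1) = (k + m) + 1 := rfl
      rw [e1, hTagree (k + m) j t (le_trans (haanti (Nat.le_add_right k m)) h1)
        (le_trans h2 (hbmono (Nat.le_add_right k m)))]
      exact ih j t h1 h2
  have hTagree3 : ∀ k k' j t, a k ≤ t → t ≤ b k → a k' ≤ t → t ≤ b k' →
      T k j t = T k' j t := by
    intro k k' j t h1 h2 h1' h2'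
    have e1 := hTagree2 k (max k k' - k) j t h1 h2
    have e2 := hTagree2 k' (max k k' - k') j t h1' h2'
    rw [Nat.add_sub_cancel' (le_max_left k k')] at e1
    rw [Nat.add_sub_cancel' (le_max_right k k')] at e2
    rw [← e1, e2]
  set G : Fin N → ℝ → ℂ := fun j t =>
    if h : ∃ k, a k ≤ t ∧ t ≤ b k then T (Nat.find h) j t else 0 with hG
  have hGT : ∀ k t, a k ≤ t → t ≤ b k → ∀ j, G j t = T k j t := by
    intro k t h1 h2 j
    have hex : ∃ k, a k ≤ t ∧ t ≤ b k := ⟨k, h1, h2⟩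
    rw [hG]
    simp only [dif_pos hex]
    exact hTagree3 _ k j t (Nat.find_spec hex).1 (Nat.find_spec hex).2 h1 h2
  have hwit : ∀ t ∈ U, ∃ k, a k ≤ t ∧ t ≤ b k := by
    intro t ht
    obtain ⟨k1, hk1⟩ := hacof t ht
    obtain ⟨k2, hk2⟩ := hbcof t ht
    exact ⟨max k1 k2, le_trans (haanti (le_max_left _ _)) hk1,
      le_trans hk2 (hbmono (le_max_right _ _))⟩
  refine ⟨G, ?_, ?_⟩
  · -- continuity
    intro j t ht
    -- find an open set O around t and an index k with U ∩ O ⊆ Icc (a k) (b k)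
    have hO : ∃ O : Set ℝ, IsOpen O ∧ t ∈ O ∧ ∃ k, U ∩ O ⊆ Set.Icc (a k) (b k) := by
      obtain ⟨k0, hk01, hk02⟩ := hwit t ht
      by_cases hA : ∃ k, a k < t
      · by_cases hB : ∃ k, t < b k
        · obtain ⟨k1, hk1⟩ := hA
          obtain ⟨k2, hk2⟩ := hB
          refine ⟨Set.Ioo (a k1) (b k2), isOpen_Ioo, ⟨hk1, hk2⟩, max k1 k2, ?_⟩
          rintro s ⟨-, hs1, hs2⟩
          exact ⟨le_trans (haanti (le_max_left _ _)) (le_of_lt hs1),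
            le_trans (le_of_lt hs2) (hbmono (le_max_right _ _))⟩
        · push_neg at hB
          obtain ⟨k1, hk1⟩ := hA
          refine ⟨Set.Ioi (a k1), isOpen_Ioi, hk1, max k1 k0, ?_⟩
          rintro s ⟨hsU, hs1⟩
          refine ⟨le_trans (haanti (le_max_left _ _)) (le_of_lt hs1), ?_⟩
          obtain ⟨k3, hk3⟩ := hbcof s hsU
          exact le_trans (le_trans hk3 (hB k3)) (le_trans hk02 (hbmono (le_max_right _ _)))
      · push_neg at hA
        by_cases hB : ∃ k, t < b k
        · obtain ⟨k2, hk2⟩ := hB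
          refine ⟨Set.Iio (b k2), isOpen_Iio, hk2, max k0 k2, ?_⟩
          rintro s ⟨hsU, hs2⟩
          refine ⟨?_, le_trans (le_of_lt hs2) (hbmono (le_max_right _ _))⟩
          obtain ⟨k3, hk3⟩ := hacof s hsU
          exact le_trans (haanti (le_max_left _ _)) (le_trans hk01 (le_trans (hA k3) hk3))
        · push_neg at hB
          refine ⟨Set.univ, isOpen_univ, trivial, k0, ?_⟩
          rintro s ⟨hsU, -⟩
          obtain ⟨k3, hk3⟩ := hacof s hsU
          obtain ⟨k4, hk4⟩ := hbcof s hsU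
          exact ⟨le_trans hk01 (le_trans (hA k3) hk3), le_trans hk4 (le_trans (hB k4) hk02)⟩
    obtain ⟨O, hOopen, htO, k, hOk⟩ := hO
    have hsub : U ∩ O ⊆ U ∩ Set.Icc (a k) (b k) := fun s hs => ⟨hs.1, hOk hs⟩
    have hTcont : ContinuousWithinAt (T k j) (U ∩ O) t :=
      ((hTlift k).1 j t (hsub ⟨ht, htO⟩)).mono hsub
    have hGcont : ContinuousWithinAt (G j) (U ∩ O) t := by
      refine hTcont.congr (fun s hs => ?_) ?_
      · exact hGT k s (hOk hs).1 (hOk hs).2 j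
      · exact hGT k t (hOk ⟨ht, htO⟩).1 (hOk ⟨ht, htO⟩).2 j
    exact (continuousWithinAt_inter (hOopen.mem_nhds htO)).1 hGcont
  · -- values
    intro t ht
    obtain ⟨k, hk1, hk2⟩ := hwit t ht
    rw [(hTlift k).2 t ⟨ht, hk1, hk2⟩]
    exact Multiset.map_congr rfl (fun j _ => (hGT k t hk1 hk2 j).symm)
theorem multiset_map_finsetSum {α β γ : Type*} (s : Finset α) (f : α → Multiset β) (g : β → γ) :
    (∑ w ∈ s, f w).map g = ∑ w ∈ s, (f w).map g := by
  classical
  induction s using Finset.cons_induction with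
  | empty => simp
  | cons a s ha ih => rw [Finset.sum_cons, Finset.sum_cons, Multiset.map_add, ih]

open Set in
theorem loc_split {N : ℕ}
    (IH : ∀ M, M < N → ∀ (W : Set ℝ), W.OrdConnected → ∀ C : ℝ → Multiset ℂ,
      (∀ t ∈ W, Multiset.card (C t) = M) → MClike W C → ∃ g : Fin M → ℝ → ℂ, IsLiftT W C g)
    {I : Set ℝ} (hI : I.OrdConnected) {F : ℝ → Multiset ℂ}
    (hcard : ∀ t ∈ I, Multiset.card (F t) = N) (hMC : MClike I F)
    {s : ℝ} (hs : s ∈ I) (hsplit : ∃ x ∈ F s, ∃ y ∈ F s, x ≠ y) :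
    ∃ δ > 0, (∀ t ∈ Set.Ioo (s - δ) (s + δ) ∩ I, ∃ x ∈ F t, ∃ y ∈ F t, x ≠ y) ∧
      ∃ H, IsLift (Set.Ioo (s - δ) (s + δ) ∩ I) F H := by
  classical
  obtain ⟨x1, hx1, x2, hx2, hx12⟩ := hsplit
  set V := (F s).toFinset with hV
  have hw1 : x1 ∈ V := Multiset.mem_toFinset.2 hx1
  have hw2 : x2 ∈ V := Multiset.mem_toFinset.2 hx2
  obtain ⟨ε0, hε0, hsep⟩ := exists_sep V
  obtain ⟨δ, hδ, hδspec⟩ := hMC s hs ε0 hε0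
  set W := Set.Ioo (s - δ) (s + δ) ∩ I with hWdef
  have hWI : W ⊆ I := Set.inter_subset_right
  have hsW : s ∈ W := ⟨⟨by linarith, by linarith⟩, hs⟩
  have hmatch : ∀ t ∈ W, Multiset.Rel (fun a b => dist a b < ε0) (F t) (F s) := by
    intro t ht
    refine hδspec t ht.2 ?_
    have h1 := ht.1.1
    have h2 := ht.1.2
    rw [abs_sub_lt_iff]
    constructor <;> linarith
  have hub : ∀ z : ℂ, ∀ w ∈ V, ∀ w' ∈ V, dist z w < ε0 → dist z w' < ε0 → w = w' := by
    intro z w hw w' hw' h1 h2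
    by_contra hne
    have := hsep w hw w' hw' hne
    have : dist w w' ≤ dist z w + dist z w' := by
      calc dist w w' ≤ dist w z + dist z w' := dist_triangle _ _ _
      _ = dist z w + dist z w' := by rw [dist_comm w z]
    linarith
  have hex : ∀ t ∈ W, ∀ z ∈ F t, ∃ w ∈ V, dist z w < ε0 := by
    intro t ht z hz
    obtain ⟨w, hwF, hd⟩ := rel_exists_right (hmatch t ht) hz
    exact ⟨w, Multiset.mem_toFinset.2 hwF, hd⟩
  set Cw : ℂ → ℝ → Multiset ℂ := fun w t => (F t).filter (fun z => dist z w < ε0) with hCw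
  -- partition
  have f1 : ∀ t ∈ W, F t = ∑ w ∈ V, Cw w t := by
    intro t ht
    ext z
    rw [Multiset.count_sum']
    by_cases hz : z ∈ F t
    · obtain ⟨w0, hw0, hd0⟩ := hex t ht z hz
      rw [Finset.sum_eq_single_of_mem w0 hw0]
      · rw [hCw]
        simp only [Multiset.count_filter, if_pos hd0]
      · intro w' hw' hne
        simp only [hCw, Multiset.count_filter]
        rw [if_neg]
        intro hd'
        exact hne (hub z w' hw' w0 hw0 hd' hd0)
    · have h0 : Multiset.count z (F t) = 0 := Multiset.count_eq_zero.2 hz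
      rw [h0]
      refine (Finset.sum_eq_zero ?_).symm
      intro w _
      simp only [hCw, Multiset.count_filter]
      split
      · exact h0
      · rfl
  -- cardinalities
  have f2 : ∀ w ∈ V, ∀ t ∈ W, Multiset.card (Cw w t) = Multiset.count w (F s) := by
    intro w hw t ht
    rw [Multiset.count_eq_card_filter_eq]
    refine rel_filter_card_eq (rel_mem_strengthen (hmatch t ht))
      (fun z => dist z w < ε0) (fun b => w = b) ?_
    rintro a b ⟨hab, haF, hbF⟩
    constructor
    · intro haw
      have hbV : b ∈ V := Multiset.mem_toFinset.2 hbF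
      refine (hub a w hw b hbV haw hab)
    · rintro rfl
      exact hab
  have f3 : ∀ w ∈ V, 1 ≤ Multiset.count w (F s) := by
    intro w hw
    exact Multiset.count_pos.2 (Multiset.mem_toFinset.1 hw)
  have f4 : ∀ w ∈ V, Multiset.count w (F s) < N := by
    intro w hw
    set w' := if w = x1 then x2 else x1 with hw'def
    have hw'V : w' ∈ V := by
      rw [hw'def]; split <;> assumption
    have hww' : w ≠ w' := by
      rw [hw'def]
      split
      · subst ‹w = x1›; exact hx12
      · exact ‹¬ w = x1›
    have hsum : ∑ v ∈ V, Multiset.count v (F s) = N := by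
      rw [hV, Multiset.toFinset_sum_count_eq]
      exact hcard s hs
    have hpair : Multiset.count w (F s) + Multiset.count w' (F s) ≤ N := by
      have hsub : ∑ v ∈ ({w, w'} : Finset ℂ), Multiset.count v (F s)
          ≤ ∑ v ∈ V, Multiset.count v (F s) := by
        refine Finset.sum_le_sum_of_subset ?_
        intro v hv
        rcases Finset.mem_insert.1 hv with rfl | hv'
        · exact hw
        · rw [Finset.mem_singleton.1 hv']; exact hw'V
      rw [Finset.sum_pair hww'] at hsub
      omega
    have := f3 w' hw'V
    omega
  -- MClike of clusters
  have f5 : ∀ w ∈ V, MClike W (Cw w) := by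
    intro w hw t2 ht2 ε1 hε1
    set ε2 := min ε1 ε0 with hε2def
    have hε2 : 0 < ε2 := lt_min hε1 hε0
    obtain ⟨δ2, hδ2, hδ2spec⟩ := hMC t2 (hWI ht2) ε2 hε2
    refine ⟨δ2, hδ2, fun t ht hd => ?_⟩
    have hrel := hδ2spec t (hWI ht) hd
    have hfil : Multiset.Rel (fun a b => dist a b < ε2 ∧ a ∈ F t ∧ b ∈ F t2)
        ((F t).filter (fun z => dist z w < ε0)) ((F t2).filter (fun z => dist z w < ε0)) := by
      refine rel_filter_rel (rel_mem_strengthen hrel) _ _ ?_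
      rintro a b ⟨hab, haF, hbF⟩
      obtain ⟨wa, hwa, hda⟩ := hex t ht a haF
      obtain ⟨wb, hwb, hdb⟩ := hex t2 ht2 b hbF
      have hwawb : wa = wb := by
        by_contra hne
        have h3 := hsep wa hwa wb hwb hne
        have : dist wa wb ≤ dist a wa + dist a b + dist b wb := by
          calc dist wa wb ≤ dist wa a + dist a wb := dist_triangle _ _ _
          _ ≤ dist wa a + (dist a b + dist b wb) := by
            have := dist_triangle a b wb
            linarith
          _ = dist a wa + dist a b + dist b wb := by rw [dist_comm wa a]; ring
        have hε2ε0 : ε2 ≤ ε0 := min_le_right _ _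
        linarith
      constructor
      · intro haw
        have : w = wa := hub a w hw wa hwa haw hda
        rw [this, hwawb]
        exact hdb
      · intro hbw
        have : w = wb := hub b w hw wb hwb hbw hdb
        rw [this, ← hwawb]
        exact hda
    exact hfil.mono (fun a _ b _ hr => lt_of_lt_of_le hr.1 (min_le_left _ _))
  -- lifts per cluster
  have hWord : W.OrdConnected := (Set.ordConnected_Ioo).inter hI
  have f6 : ∀ w ∈ V, ∃ H, IsLift W (Cw w) H := by
    intro w hw
    obtain ⟨g, hg⟩ := IH (Multiset.count w (F s)) (f4 w hw) W hWord (Cw w)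
      (fun t ht => f2 w hw t ht) (f5 w hw)
    exact ⟨Multiset.map g Finset.univ.val, hg.isLift⟩
  choose HH hHH using f6
  set H : Multiset (ℝ → ℂ) := ∑ w ∈ V.attach, HH w.1 w.2 with hH
  refine ⟨δ, hδ, ?_, H, ⟨?_, ?_⟩⟩
  · -- nondegeneracy on the window
    intro t ht
    have hc1 : 0 < Multiset.card (Cw x1 t) := by
      rw [f2 x1 hw1 t ht]; exact f3 x1 hw1
    have hc2 : 0 < Multiset.card (Cw x2 t) := by
      rw [f2 x2 hw2 t ht]; exact f3 x2 hw2
    obtain ⟨z1, hz1⟩ := Multiset.card_pos_iff_exists_mem.1 hc1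
    obtain ⟨z2, hz2⟩ := Multiset.card_pos_iff_exists_mem.1 hc2
    have hz1F : z1 ∈ F t := Multiset.mem_of_mem_filter hz1
    have hz2F : z2 ∈ F t := Multiset.mem_of_mem_filter hz2
    have hd1 : dist z1 x1 < ε0 := (Multiset.mem_filter.1 hz1).2
    have hd2 : dist z2 x2 < ε0 := (Multiset.mem_filter.1 hz2).2
    refine ⟨z1, hz1F, z2, hz2F, ?_⟩
    intro heq
    subst heq
    exact hx12 (hub z1 x1 hw1 x2 hw2 hd1 hd2)
  · intro g hg
    rw [hH] at hg
    obtain ⟨w, -, hgw⟩ := Multiset.mem_sum.1 hg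
    exact (hHH w.1 w.2).1 g hgw
  · intro t ht
    rw [hH, multiset_map_finsetSum]
    have : ∀ w ∈ V.attach, (HH w.1 w.2).map (fun g => g t) = Cw w.1 t := by
      intro w _
      exact ((hHH w.1 w.2).2 t ht).symm
    rw [Finset.sum_congr rfl this, Finset.sum_attach V (fun w => Cw w t)]
    exact f1 t ht
theorem lift_exists : ∀ N : ℕ, ∀ I : Set ℝ, I.OrdConnected → ∀ F : ℝ → Multiset ℂ,
    (∀ t ∈ I, Multiset.card (F t) = N) → MClike I F →
    ∃ G : Fin N → ℝ → ℂ, IsLiftT I F G := by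
  intro N
  induction N using Nat.strong_induction_on with
  | _ N IH =>
  intro I hI F hcard hMC
  classical
  rcases Nat.eq_zero_or_pos N with rfl | hNpos
  · refine ⟨fun j => j.elim0, fun j => j.elim0, fun t ht => ?_⟩
    have h0 : F t = 0 := Multiset.card_eq_zero.1 (hcard t ht)
    rw [h0]
    have : (Finset.univ : Finset (Fin 0)) = ∅ := rfl
    rw [this]
    rfl
  have hNC : ((N : ℂ)) ≠ 0 := Nat.cast_ne_zero.2 (by omega)
  have hNR : (0 : ℝ) < N := by exact_mod_cast hNpos
  set m : ℝ → ℂ := fun t => (F t).sum / (N : ℂ) with hm_def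
  have hmdist : ∀ {t t0 : ℝ} {ε' : ℝ}, t0 ∈ I →
      Multiset.Rel (fun a b => dist a b < ε') (F t) (F t0) → dist (m t) (m t0) ≤ ε' := by
    intro t t0 ε' ht0 hrel
    have h1 : dist (F t).sum (F t0).sum ≤ (Multiset.card (F t0) : ℝ) * ε' :=
      rel_dist_sum_le (hrel.mono (fun a _ b _ h => le_of_lt h))
    rw [hcard t0 ht0] at h1
    have h2 : dist (m t) (m t0) = dist (F t).sum (F t0).sum / (N : ℝ) := by
      rw [hm_def]
      simp only [dist_eq_norm, div_sub_div_same, norm_div]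
      norm_num
    rw [h2, div_le_iff₀ hNR]
    calc dist (F t).sum (F t0).sum ≤ (N : ℝ) * ε' := h1
    _ = ε' * N := by ring
  have hmcont : ContinuousOn m I := by
    intro t0 ht0
    rw [Metric.continuousWithinAt_iff]
    intro ε hε
    obtain ⟨δ, hδ, hspec⟩ := hMC t0 ht0 (ε / 2) (by linarith)
    refine ⟨δ, hδ, fun t ht hd => ?_⟩
    have := hmdist ht0 (hspec t ht (by rwa [Real.dist_eq] at hd))
    linarith
  set ρ : ℝ → ℝ := fun t => ((F t).map (fun z => dist z (m t))).sum with hρ_def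
  have hρnn : ∀ t, 0 ≤ ρ t := by
    intro t
    refine Multiset.sum_nonneg ?_
    intro x hx
    obtain ⟨z, -, rfl⟩ := Multiset.mem_map.1 hx
    exact dist_nonneg
  have hρbound : ∀ z t, z ∈ F t → dist z (m t) ≤ ρ t := by
    intro z t hz
    refine Multiset.single_le_sum ?_ _ (Multiset.mem_map_of_mem _ hz)
    intro x hx
    obtain ⟨z', -, rfl⟩ := Multiset.mem_map.1 hx
    exact dist_nonneg
  have hρcont : ContinuousOn ρ I := by
    intro t0 ht0
    rw [Metric.continuousWithinAt_iff]
    intro ε hε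
    set ε1 := ε / (2 * ((N : ℝ) + 1)) with hε1def
    have hε1 : 0 < ε1 := by
      rw [hε1def]; positivity
    obtain ⟨δ1, hδ1, hspec⟩ := hMC t0 ht0 ε1 hε1
    obtain ⟨δ2, hδ2, hmspec⟩ := Metric.continuousWithinAt_iff.1 (hmcont t0 ht0) ε1 hε1
    refine ⟨min δ1 δ2, lt_min hδ1 hδ2, fun t ht hd => ?_⟩
    have hrel := hspec t ht (by rw [← Real.dist_eq]; exact lt_of_lt_of_le hd (min_le_left _ _))
    have hmd : dist (m t) (m t0) < ε1 := hmspec ht (lt_of_lt_of_le hd (min_le_right _ _))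
    have hrel2 : Multiset.Rel (fun x y => dist x y ≤ 2 * ε1)
        ((F t).map (fun z => dist z (m t))) ((F t0).map (fun z => dist z (m t0))) := by
      rw [Multiset.rel_map]
      refine hrel.mono ?_
      intro a _ b _ hab
      rw [Real.dist_eq, abs_sub_le_iff]
      constructor
      · have t1 : dist a (m t) ≤ dist a b + dist b (m t0) + dist (m t0) (m t) := by
          calc dist a (m t) ≤ dist a b + dist b (m t) := dist_triangle _ _ _
          _ ≤ dist a b + (dist b (m t0) + dist (m t0) (m t)) := by
            have := dist_triangle b (m t0) (m t); linarith
          _ = dist a b + dist b (m t0) + dist (m t0) (m t) := by ring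
        have := dist_comm (m t0) (m t)
        linarith
      · have t1 : dist b (m t0) ≤ dist a b + dist a (m t) + dist (m t) (m t0) := by
          calc dist b (m t0) ≤ dist b a + dist a (m t0) := dist_triangle _ _ _
          _ ≤ dist b a + (dist a (m t) + dist (m t) (m t0)) := by
            have := dist_triangle a (m t) (m t0); linarith
          _ = dist a b + dist a (m t) + dist (m t) (m t0) := by rw [dist_comm b a]; ring
        linarith
    have hsum := rel_dist_sum_le hrel2
    rw [Multiset.card_map, hcard t0 ht0] at hsum
    have hfinal : (N : ℝ) * (2 * ε1) < ε := by
      rw [hε1def]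
      rw [div_eq_mul_inv]
      have h1 : (0:ℝ) < 2 * ((N:ℝ) + 1) := by positivity
      rw [show (N : ℝ) * (2 * (ε * (2 * ((N:ℝ) + 1))⁻¹)) = ε * ((N:ℝ) * (2 * (2 * ((N:ℝ) + 1))⁻¹)) from by ring]
      have h2 : (N : ℝ) * (2 * (2 * ((N:ℝ) + 1))⁻¹) < 1 := by
        rw [show (N:ℝ) * (2 * (2 * ((N:ℝ)+1))⁻¹) = (2 * (N:ℝ)) * (2 * ((N:ℝ)+1))⁻¹ from by ring]
        rw [mul_inv_lt_iff₀' h1]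
        linarith
      nlinarith
    calc dist (ρ t) (ρ t0) ≤ (N : ℝ) * (2 * ε1) := hsum
    _ < ε := hfinal
  set D := {t | t ∈ I ∧ ρ t ≠ 0} with hD_def
  have hDI : D ⊆ I := fun t ht => ht.1
  have hdeg : ∀ t ∈ I, ρ t = 0 → F t = Multiset.replicate N (m t) := by
    intro t ht h0
    rw [Multiset.eq_replicate]
    refine ⟨hcard t ht, fun z hz => ?_⟩
    have h1 := hρbound z t hz
    rw [h0] at h1
    exact dist_eq_zero.1 (le_antisymm h1 dist_nonneg)
  have hsplitD : ∀ t ∈ D, ∃ x ∈ F t, ∃ y ∈ F t, x ≠ y := by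
    rintro t ⟨htI, htρ⟩
    by_contra hall
    push_neg at hall
    obtain ⟨z0, hz0⟩ := Multiset.card_pos_iff_exists_mem.1 (by rw [hcard t htI]; exact hNpos)
    have hallz : ∀ z ∈ F t, z = z0 := fun z hz => by
      by_contra hne
      exact hne (hall z hz z0 hz0)
    have hrepl : F t = Multiset.replicate N z0 := Multiset.eq_replicate.2 ⟨hcard t htI, hallz⟩
    have hsum : (F t).sum = (N : ℂ) * z0 := by
      rw [hrepl, Multiset.sum_replicate, nsmul_eq_mul]
    have hmz : m t = z0 := by
      rw [hm_def]
      simp only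
      rw [hsum]
      field_simp
    apply htρ
    rw [hρ_def]
    simp only
    rw [hrepl, Multiset.map_replicate, hmz, dist_self, Multiset.sum_replicate, smul_zero]
  have hW1 : ∀ s ∈ D, ∃ δ > 0, (Set.Ioo (s - δ) (s + δ) ∩ I ⊆ D) ∧
      ∃ H, IsLift (Set.Ioo (s - δ) (s + δ) ∩ I) F H := by
    intro s hsD
    obtain ⟨δ, hδ, hnd, H, hH⟩ := loc_split (fun M hM => IH M hM) hI hcard hMC (hDI hsD)
      (hsplitD s hsD)
    refine ⟨δ, hδ, ?_, H, hH⟩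
    intro t ht
    refine ⟨ht.2, ?_⟩
    intro h0
    obtain ⟨x, hx, y, hy, hxy⟩ := hnd t ht
    rw [hdeg t ht.2 h0] at hx hy
    exact hxy ((Multiset.eq_of_mem_replicate hx).trans (Multiset.eq_of_mem_replicate hy).symm)
  -- windows are inside components
  have hwin : ∀ t0 ∈ D, ∀ s ∈ connectedComponentIn D t0, ∃ δ > 0,
      (Set.Ioo (s - δ) (s + δ) ∩ I ⊆ connectedComponentIn D t0) ∧
      ∃ H, IsLift (Set.Ioo (s - δ) (s + δ) ∩ I) F H := by
    intro t0 ht0 s hsU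
    have hsD : s ∈ D := connectedComponentIn_subset _ _ hsU
    obtain ⟨δ, hδ, hsub, H, hH⟩ := hW1 s hsD
    refine ⟨δ, hδ, ?_, H, hH⟩
    have hWpre : IsPreconnected (Set.Ioo (s - δ) (s + δ) ∩ I) :=
      ((Set.ordConnected_Ioo).inter hI).isPreconnected
    have hsmem : s ∈ Set.Ioo (s - δ) (s + δ) ∩ I := ⟨⟨by linarith, by linarith⟩, hDI hsD⟩
    have hUpre : IsPreconnected (connectedComponentIn D t0) := isPreconnected_connectedComponentIn
    have huni : IsPreconnected ((Set.Ioo (s - δ) (s + δ) ∩ I) ∪ connectedComponentIn D t0) :=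
      IsPreconnected.union s hsmem hsU hWpre hUpre
    have hsubD : (Set.Ioo (s - δ) (s + δ) ∩ I) ∪ connectedComponentIn D t0 ⊆ D :=
      Set.union_subset hsub (connectedComponentIn_subset _ _)
    have ht0mem : t0 ∈ (Set.Ioo (s - δ) (s + δ) ∩ I) ∪ connectedComponentIn D t0 :=
      Or.inr (mem_connectedComponentIn ht0)
    have hWU := huni.subset_connectedComponentIn ht0mem hsubD
    exact fun t ht => hWU (Or.inl ht)
  -- lift on each component
  have hcomp : ∀ S : Set ℝ, ∃ G : Fin N → ℝ → ℂ,
      (∃ t0 ∈ D, S = connectedComponentIn D t0) → IsLiftT S F G := by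
    intro S
    by_cases hS : ∃ t0 ∈ D, S = connectedComponentIn D t0
    · obtain ⟨t0, ht0, rfl⟩ := hS
      have hUD : connectedComponentIn D t0 ⊆ D := connectedComponentIn_subset _ _
      have hUord : (connectedComponentIn D t0).OrdConnected :=
        isPreconnected_connectedComponentIn.ordConnected
      have hUloc : ∀ s ∈ connectedComponentIn D t0, ∃ δ > 0,
          ∃ H, IsLift (Set.Ioo (s - δ) (s + δ) ∩ connectedComponentIn D t0) F H := by
        intro s hsU
        obtain ⟨δ, hδ, hsub, H, hH⟩ := hwin t0 ht0 s hsU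
        refine ⟨δ, hδ, H, hH.mono ?_⟩
        rintro t ⟨ht1, ht2⟩
        exact ⟨ht1, hDI (hUD ht2)⟩
      have hUcard : ∀ t ∈ connectedComponentIn D t0, Multiset.card (F t) = N :=
        fun t ht => hcard t (hDI (hUD ht))
      obtain ⟨G, hG⟩ := lift_full hUord hUcard hUloc
      exact ⟨G, fun _ => hG⟩
    · exact ⟨fun _ _ => 0, fun h => absurd h hS⟩
  choose ψ hψ using hcomp
  set G : Fin N → ℝ → ℂ :=
    fun j t => if h : t ∈ D then ψ (connectedComponentIn D t) j t else m t with hG_def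
  have hGcomp : ∀ t0 ∈ D, ∀ t ∈ connectedComponentIn D t0, ∀ j,
      G j t = ψ (connectedComponentIn D t0) j t := by
    intro t0 ht0 t ht j
    have htD : t ∈ D := connectedComponentIn_subset _ _ ht
    have he : connectedComponentIn D t0 = connectedComponentIn D t := connectedComponentIn_eq ht
    rw [hG_def]
    simp only [dif_pos htD]
    rw [← he]
  have hGF : ∀ t ∈ I, F t = Multiset.map (fun j => G j t) Finset.univ.val := by
    intro t ht
    by_cases htD : t ∈ D
    · have hl := hψ (connectedComponentIn D t) ⟨t, htD, rfl⟩
      have htU : t ∈ connectedComponentIn D t := mem_connectedComponentIn htD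
      rw [hl.2 t htU]
      exact Multiset.map_congr rfl (fun j _ => (hGcomp t htD t htU j).symm)
    · have h0 : ρ t = 0 := by
        by_contra h
        exact htD ⟨ht, h⟩
      rw [hdeg t ht h0]
      have hGm : ∀ j : Fin N, G j t = m t := fun j => by
        rw [hG_def]; simp only [dif_neg htD]
      rw [show Multiset.map (fun j : Fin N => G j t) Finset.univ.val
          = Multiset.map (fun _ : Fin N => m t) Finset.univ.val from
          Multiset.map_congr rfl (fun j _ => hGm j)]
      rw [Multiset.map_const']
      congr 1
      simp
  have hGmem : ∀ t ∈ I, ∀ j, dist (G j t) (m t) ≤ ρ t := by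
    intro t ht j
    have : G j t ∈ F t := by
      rw [hGF t ht]
      exact Multiset.mem_map_of_mem _ (by simp)
    exact hρbound _ t this
  refine ⟨G, ?_, hGF⟩
  intro j t0 ht0
  by_cases ht0D : t0 ∈ D
  · obtain ⟨δ, hδ, hsub, -⟩ := hwin t0 ht0D t0 (mem_connectedComponentIn ht0D)
    have hl := hψ (connectedComponentIn D t0) ⟨t0, ht0D, rfl⟩
    have ht0U : t0 ∈ connectedComponentIn D t0 := mem_connectedComponentIn ht0D
    have hcw : ContinuousWithinAt (ψ (connectedComponentIn D t0) j)
        (Set.Ioo (t0 - δ) (t0 + δ) ∩ I) t0 := (hl.1 j t0 ht0U).mono hsub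
    have hcwG : ContinuousWithinAt (G j) (Set.Ioo (t0 - δ) (t0 + δ) ∩ I) t0 := by
      refine hcw.congr (fun s hs => ?_) ?_
      · exact hGcomp t0 ht0D s (hsub hs) j
      · exact hGcomp t0 ht0D t0 ht0U j
    have hIoo : Set.Ioo (t0 - δ) (t0 + δ) ∈ nhds t0 :=
      isOpen_Ioo.mem_nhds ⟨by linarith, by linarith⟩
    rw [Set.inter_comm] at hcwG
    exact (continuousWithinAt_inter hIoo).1 hcwG
  · have h0 : ρ t0 = 0 := by
      by_contra h
      exact ht0D ⟨ht0, h⟩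
    have hGt0 : G j t0 = m t0 := by
      rw [hG_def]; simp only [dif_neg ht0D]
    rw [Metric.continuousWithinAt_iff]
    intro ε hε
    obtain ⟨δ1, hδ1, hρspec⟩ := Metric.continuousWithinAt_iff.1 (hρcont t0 ht0) (ε / 2)
      (by linarith)
    obtain ⟨δ2, hδ2, hmspec⟩ := Metric.continuousWithinAt_iff.1 (hmcont t0 ht0) (ε / 2)
      (by linarith)
    refine ⟨min δ1 δ2, lt_min hδ1 hδ2, fun t ht hd => ?_⟩
    have hρt : ρ t < ε / 2 := by
      have := hρspec ht (lt_of_lt_of_le hd (min_le_left _ _))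
      rw [Real.dist_eq, h0, sub_zero] at this
      exact lt_of_le_of_lt (le_abs_self _) this
    have hmt : dist (m t) (m t0) < ε / 2 := hmspec ht (lt_of_lt_of_le hd (min_le_right _ _))
    rw [hGt0]
    calc dist (G j t) (m t0) ≤ dist (G j t) (m t) + dist (m t) (m t0) := dist_triangle _ _ _
    _ ≤ ρ t + dist (m t) (m t0) := by
        have := hGmem t ht j
        linarith
    _ < ε / 2 + ε / 2 := by
        have := hGmem t ht j
        linarith
    _ = ε := by ring
theorem rel_refl_mem {α : Type*} {r : α → α → Prop} {s : Multiset α} (h : ∀ a ∈ s, r a a) :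
    Multiset.Rel r s s :=
  Multiset.rel_refl_of_refl_on h

theorem natCard_eq_count {M : ℕ} (f : Fin M → ℂ) (z : ℂ) :
    Nat.card {j : Fin M // f j = z} = Multiset.count z (Multiset.map f Finset.univ.val) := by
  classical
  rw [Multiset.count_map]
  have h1 : Multiset.card (Multiset.filter (fun j => z = f j) Finset.univ.val)
      = (Finset.filter (fun j => z = f j) Finset.univ).card := rfl
  rw [h1, ← Fintype.card_subtype, Nat.card_eq_fintype_card]
  exact Fintype.card_congr (Equiv.subtypeEquivRight (fun j => by simp [eq_comm]))

theorem mc_of_continuousOn {M : ℕ} {I : Set ℝ} (f : Fin M → ℝ → ℂ)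
    (hf : ∀ j, ContinuousOn (f j) I) :
    MClike I (fun t => Multiset.map (fun j => f j t) Finset.univ.val) := by
  intro t0 ht0 ε hε
  have hev : ∀ᶠ t in nhdsWithin t0 I, ∀ j, dist (f j t) (f j t0) < ε := by
    rw [Filter.eventually_all]
    intro j
    have := hf j t0 ht0
    exact Metric.tendsto_nhds.1 this ε hε
  obtain ⟨δ, hδ, hsub⟩ := Metric.mem_nhdsWithin_iff.1 hev
  refine ⟨δ, hδ, fun t ht hd => ?_⟩
  have htmem : t ∈ {t | ∀ j, dist (f j t) (f j t0) < ε} := by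
    refine hsub ⟨?_, ht⟩
    rw [Metric.mem_ball, Real.dist_eq]
    exact hd
  rw [Multiset.rel_map]
  refine rel_refl_mem ?_
  intro j _
  exact htmem j

/-- Extension lemma, continuous case: let `I ⊆ ℝ` be an interval, `n ≤ N`, and let
`μ_1, …, μ_N` and `λ_1, …, λ_n` be continuous complex-valued functions on `I` such that at
every `t ∈ I` every value is attained by the `λ`'s at most as often as by the `μ`'s. Then the
`λ`'s can be completed by continuous functions `λ_{n+1}, …, λ_N` so that at every `t ∈ I`
every value is attained by the `λ`'s exactly as often as by the `μ`'s. -/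
theorem extension_lemma_continuous (N n : ℕ) (hn : n ≤ N)
    (I : Set ℝ) (hI : I.OrdConnected)
    (μ : Fin N → ℝ → ℂ) (l : Fin n → ℝ → ℂ)
    (hμ : ∀ j, ContinuousOn (μ j) I) (hl : ∀ j, ContinuousOn (l j) I)
    (hcard : ∀ t ∈ I, ∀ z : ℂ,
      Nat.card {j : Fin n // l j t = z} ≤ Nat.card {j : Fin N // μ j t = z}) :
    ∃ L : Fin N → ℝ → ℂ,
      (∀ j, ContinuousOn (L j) I) ∧
      (∀ j : Fin n, ∀ t ∈ I, L (Fin.castLE hn j) t = l j t) ∧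
      (∀ t ∈ I, ∀ z : ℂ,
        Nat.card {j : Fin N // L j t = z} = Nat.card {j : Fin N // μ j t = z}) := by
  classical
  set Mμ : ℝ → Multiset ℂ := fun t => Multiset.map (fun j => μ j t) Finset.univ.val with hMμdef
  set Ml : ℝ → Multiset ℂ := fun t => Multiset.map (fun j => l j t) Finset.univ.val with hMldef
  have hle : ∀ t ∈ I, Ml t ≤ Mμ t := by
    intro t ht
    rw [Multiset.le_iff_count]
    intro z
    rw [← natCard_eq_count (fun j => l j t) z, ← natCard_eq_count (fun j => μ j t) z]
    exact hcard t ht z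
  have hMμc : MClike I Mμ := mc_of_continuousOn μ hμ
  have hMlc : MClike I Ml := mc_of_continuousOn l hl
  set R : ℝ → Multiset ℂ := fun t => Mμ t - Ml t with hRdef
  have hRc : MClike I R := MClike.diff hMμc hMlc hle
  have hRcard : ∀ t ∈ I, Multiset.card (R t) = N - n := by
    intro t ht
    rw [hRdef]
    simp only
    rw [Multiset.card_sub (hle t ht)]
    simp [hMμdef, hMldef]
  obtain ⟨G, hG⟩ := lift_exists (N - n) I hI R hRcard hRc
  set e : Fin n ⊕ Fin (N - n) ≃ Fin N :=
    finSumFinEquiv.trans (finCongr (by omega)) with he_def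
  set L : Fin N → ℝ → ℂ := fun i => Sum.elim l G (e.symm i) with hL_def
  have heinl : ∀ j : Fin n, e (Sum.inl j) = Fin.castLE hn j := by
    intro j
    apply Fin.ext
    simp [he_def]
  have hLval : ∀ i t, L i t = Sum.elim (fun j => l j t) (fun j => G j t) (e.symm i) := by
    intro i t
    rw [hL_def]
    cases h : e.symm i <;> simp [h]
  refine ⟨L, ?_, ?_, ?_⟩
  · intro i
    rw [hL_def]
    cases h : e.symm i with
    | inl j => simp only [h, Sum.elim_inl]; exact hl j
    | inr j => simp only [h, Sum.elim_inr]; exact hG.1 j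
  · intro j t _
    rw [hL_def]
    simp only
    rw [← heinl j, Equiv.symm_apply_apply]
    rfl
  · intro t ht z
    -- multiset identity
    have hsplit : Multiset.map (fun i => L i t) Finset.univ.val = Ml t + R t := by
      have h1 : (Finset.univ.val : Multiset (Fin N))
          = Multiset.map e (Finset.univ.val : Multiset (Fin n ⊕ Fin (N - n))) := by
        have := Finset.map_univ_equiv e
        rw [← this, Finset.map_val]
        rfl
      rw [h1, Multiset.map_map]
      have h2 : (Finset.univ : Finset (Fin n ⊕ Fin (N - n)))
          = (Finset.univ : Finset (Fin n)).disjSum (Finset.univ : Finset (Fin (N - n))) :=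
        (Finset.univ_disjSum_univ).symm
      rw [h2, Finset.val_disjSum]
      have h3 : (Finset.univ.val : Multiset (Fin n)).disjSum
          (Finset.univ.val : Multiset (Fin (N - n)))
          = Multiset.map Sum.inl Finset.univ.val + Multiset.map Sum.inr Finset.univ.val := rfl
      rw [h3, Multiset.map_add, Multiset.map_map, Multiset.map_map]
      have h4 : Multiset.map (((fun i => L i t) ∘ e) ∘ Sum.inl)
          (Finset.univ.val : Multiset (Fin n)) = Multiset.map (fun j => l j t) Finset.univ.val :=
        Multiset.map_congr rfl (fun j _ => by
          simp only [Function.comp_apply]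
          rw [hLval, Equiv.symm_apply_apply]
          simp)
      have h5 : Multiset.map (((fun i => L i t) ∘ e) ∘ Sum.inr)
          (Finset.univ.val : Multiset (Fin (N - n)))
          = Multiset.map (fun j => G j t) Finset.univ.val :=
        Multiset.map_congr rfl (fun j _ => by
          simp only [Function.comp_apply]
          rw [hLval, Equiv.symm_apply_apply]
          simp)
      rw [h4, h5, ← hG.2 t ht]
    have hRcount : R t + Ml t = Mμ t := by
      rw [hRdef]
      simp only
      exact tsub_add_cancel_of_le (hle t ht)
    rw [natCard_eq_count (fun j => L j t) z, natCard_eq_count (fun j => μ j t) z]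
    have : Multiset.map (fun j => L j t) Finset.univ.val = Mμ t := by
      rw [hsplit, add_comm, hRcount]
    rw [this]
end

section
/- Weyl-type Lipschitz bound for ordered eigenvalues of Hermitian matrices: for a Hermitian n×n complex matrix A, let λ₁^↑(A) ≤ λ₂^↑(A) ≤ … ≤ λ_n^↑(A) denote its (real) eigenvalues repeated according to multiplicity and arranged increasingly. Then for all Hermitian n×n complex matrices A and B, max_{1 ≤ j ≤ n} |λ_j^↑(A) − λ_j^↑(B)| ≤ ‖A − B‖, where ‖·‖ is the operator norm. In other words, the map λ^↑ from the real vector space of Hermitian n×n matrices to ℝ^n (with the sup norm) is globally Lipschitz with Lipschitz constant 1. -/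
open Matrix

section WeylAux

open Polynomial


lemma charpoly_unitary_conj (n : ℕ) (U : Matrix.unitaryGroup (Fin n) ℂ)
    (D : Matrix (Fin n) (Fin n) ℂ) :
    ((U : Matrix (Fin n) (Fin n) ℂ) * D * star (U : Matrix (Fin n) (Fin n) ℂ)).charpoly
      = D.charpoly := by
  set U' : Matrix (Fin n) (Fin n) ℂ := (U : Matrix (Fin n) (Fin n) ℂ)
  have h1 : U' * star U' = 1 := Matrix.mem_unitaryGroup_iff.mp U.2
  have h2 : star U' * U' = 1 := Matrix.mem_unitaryGroup_iff'.mp U.2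
  have key : charmatrix (U' * D * star U')
      = U'.map C * charmatrix D * (star U').map C := by
    unfold charmatrix
    rw [Matrix.mul_sub, Matrix.sub_mul]
    congr 1
    · have hc : (U'.map (C : ℂ →+* ℂ[X])) * (Matrix.scalar (Fin n) (X : ℂ[X]))
          = (Matrix.scalar (Fin n) (X : ℂ[X])) * U'.map C :=
        (Matrix.scalar_commute (X : ℂ[X]) (fun r' => Commute.all _ _) _).symm
      rw [hc, Matrix.mul_assoc, ← Matrix.map_mul, h1, Matrix.map_one _ (map_zero _) (map_one _),
        Matrix.mul_one]
    · simp only [RingHom.mapMatrix_apply, ← Matrix.map_mul]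
  rw [Matrix.charpoly, Matrix.charpoly, key, Matrix.det_mul, Matrix.det_mul, mul_comm,
    ← mul_assoc, ← Matrix.det_mul, ← Matrix.map_mul, h2,
    Matrix.map_one _ (map_zero _) (map_one _), Matrix.det_one, one_mul]

lemma charpoly_diag (n : ℕ) (d : Fin n → ℂ) :
    (Matrix.diagonal d).charpoly = ∏ i : Fin n, (X - C (d i)) := by
  rw [Matrix.charpoly_of_upperTriangular _ (Matrix.blockTriangular_diagonal d)]
  simp

lemma roots_charpoly_herm (n : ℕ) (A : Matrix (Fin n) (Fin n) ℂ) (hA : A.IsHermitian) :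
    A.charpoly.roots = Finset.univ.val.map (fun i => (hA.eigenvalues i : ℂ)) := by
  conv_lhs => rw [hA.spectral_theorem]
  rw [Unitary.conjStarAlgAut_apply, charpoly_unitary_conj, charpoly_diag]
  have : (∏ i : Fin n, (X - C ((RCLike.ofReal ∘ hA.eigenvalues) i)))
      = ((Finset.univ.val.map (fun i => ((hA.eigenvalues i : ℝ) : ℂ))).map
          (fun a => X - C a)).prod := by
    simp [Finset.prod, Multiset.map_map, Function.comp]
    rfl
  rw [this, Polynomial.roots_multiset_prod_X_sub_C]

open RCLike in
lemma euclidean_clm_eigen (n : ℕ) {A : Matrix (Fin n) (Fin n) ℂ} (hA : A.IsHermitian) (i : Fin n) :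
    Matrix.toEuclideanCLM (𝕜 := ℂ) A (hA.eigenvectorBasis i)
      = (hA.eigenvalues i : ℂ) • hA.eigenvectorBasis i := by
  have h := hA.mulVec_eigenvectorBasis i
  have : Matrix.toEuclideanLin A (hA.eigenvectorBasis i)
      = (hA.eigenvalues i : ℂ) • (hA.eigenvectorBasis i : EuclideanSpace ℂ (Fin n)) := by
    rw [toEuclideanLin_apply]
    apply (WithLp.equiv 2 (Fin n → ℂ)).injective
    simp only [WithLp.equiv_apply, WithLp.ofLp_toLp]
    ext j
    have := congrFun h j
    simpa using this
  rw [← this, ← Matrix.coe_toEuclideanCLM_eq_toEuclideanLin]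
  rfl

open ComplexOrder in
lemma coeff_zero_of_mem_span (n : ℕ) (b : OrthonormalBasis (Fin n) ℂ (EuclideanSpace ℂ (Fin n)))
    (S : Finset (Fin n)) (x : EuclideanSpace ℂ (Fin n))
    (hx : x ∈ Submodule.span ℂ (b '' (S : Set (Fin n)))) (i : Fin n) (hi : i ∉ S) :
    (inner ℂ (b i) x : ℂ) = 0 := by
  induction hx using Submodule.span_induction with
  | mem y hy =>
      obtain ⟨k, hk, rfl⟩ := hy
      have : i ≠ k := fun h => hi (h ▸ hk)
      simpa [this] using b.orthonormal.2 this
  | zero => simp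
  | add y z _ _ hy hz => simp [inner_add_right, hy, hz]
  | smul c y _ hy => simp [inner_smul_right, hy]

lemma rayleigh_repr (n : ℕ) {A : Matrix (Fin n) (Fin n) ℂ} (hA : A.IsHermitian)
    (S : Finset (Fin n)) (x : EuclideanSpace ℂ (Fin n))
    (hx : x ∈ Submodule.span ℂ (hA.eigenvectorBasis '' (S : Set (Fin n)))) :
    Complex.re (inner ℂ x (Matrix.toEuclideanCLM (𝕜 := ℂ) A x) : ℂ)
        = ∑ i ∈ S, hA.eigenvalues i * ‖(inner ℂ (hA.eigenvectorBasis i) x : ℂ)‖ ^ 2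
      ∧ ‖x‖ ^ 2 = ∑ i ∈ S, ‖(inner ℂ (hA.eigenvectorBasis i) x : ℂ)‖ ^ 2 := by
  set b := hA.eigenvectorBasis with hb
  set T := Matrix.toEuclideanCLM (𝕜 := ℂ) A with hT
  have hsym : ∀ u v : EuclideanSpace ℂ (Fin n), (inner ℂ (T u) v : ℂ) = inner ℂ u (T v) := by
    intro u v
    have := (Matrix.isHermitian_iff_isSymmetric.1 hA) u v
    simpa [← Matrix.coe_toEuclideanCLM_eq_toEuclideanLin] using this
  set c : Fin n → ℂ := fun i => (inner ℂ (b i) x : ℂ) with hc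
  have hbi : ∀ i, (inner ℂ (b i) (T x) : ℂ) = (hA.eigenvalues i : ℂ) * c i := by
    intro i
    rw [← hsym, euclidean_clm_eigen n hA i, inner_smul_left]
    simp [hc, hb]
  have hcz : ∀ i ∉ S, c i = 0 := fun i hi => coeff_zero_of_mem_span n b S x hx i hi
  have expand : ∀ y : EuclideanSpace ℂ (Fin n),
      (inner ℂ x y : ℂ) = ∑ i : Fin n, (starRingEnd ℂ) (c i) * (inner ℂ (b i) y : ℂ) := by
    intro y
    rw [← b.sum_inner_mul_inner x y]
    refine Finset.sum_congr rfl fun i _ => ?_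
    rw [hc, inner_conj_symm]
  constructor
  · have : (inner ℂ x (T x) : ℂ) = ∑ i : Fin n, (starRingEnd ℂ) (c i)
        * ((hA.eigenvalues i : ℂ) * c i) := by
      rw [expand (T x)]; congr 1; ext i; rw [hbi]
    rw [this, Complex.re_sum]
    rw [← Finset.sum_subset (Finset.subset_univ S)]
    · apply Finset.sum_congr rfl
      intro i _
      have : (starRingEnd ℂ) (c i) * ((hA.eigenvalues i : ℂ) * c i)
          = (hA.eigenvalues i : ℂ) * ((starRingEnd ℂ) (c i) * c i) := by ring
      rw [this, Complex.re_ofReal_mul]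
      congr 1
      have : (starRingEnd ℂ) (c i) * c i = c i * (starRingEnd ℂ) (c i) := mul_comm _ _
      rw [this, Complex.mul_conj, Complex.ofReal_re, ← Complex.sq_norm]
    · intro i _ hi
      simp [hcz i hi]
  · have : (inner ℂ x x : ℂ) = ∑ i : Fin n, (starRingEnd ℂ) (c i) * c i := by
      exact expand x
    have h2 : (‖x‖ : ℝ) ^ 2 = Complex.re (inner ℂ x x : ℂ) := by
      have := inner_self_eq_norm_sq (𝕜 := ℂ) x
      simpa using this.symm
    rw [h2, this, Complex.re_sum, ← Finset.sum_subset (Finset.subset_univ S)]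
    · apply Finset.sum_congr rfl
      intro i _
      have : (starRingEnd ℂ) (c i) * c i = c i * (starRingEnd ℂ) (c i) := mul_comm _ _
      rw [this, Complex.mul_conj, Complex.ofReal_re, ← Complex.sq_norm]
    · intro i _ hi
      simp [hcz i hi]

lemma multiset_eq_of_roots (n : ℕ) {A : Matrix (Fin n) (Fin n) ℂ} (hA : A.IsHermitian)
    {μ : Fin n → ℝ} (hr : A.charpoly.roots = Finset.univ.val.map (fun j => (μ j : ℂ))) :
    Finset.univ.val.map hA.eigenvalues = Finset.univ.val.map μ := by
  have h1 := roots_charpoly_herm n A hA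
  rw [hr] at h1
  apply Multiset.map_injective (f := (Complex.ofReal : ℝ → ℂ)) Complex.ofReal_injective
  rw [Multiset.map_map, Multiset.map_map]
  exact h1.symm

lemma count_ge (n : ℕ) (lam μ : Fin n → ℝ)
    (hm : Monotone μ)
    (heq : Finset.univ.val.map lam = Finset.univ.val.map μ) (j : Fin n) :
    n - (j : ℕ) ≤ (Finset.univ.filter (fun i => μ j ≤ lam i)).card := by
  have h1 : (Finset.univ.filter (fun i => μ j ≤ lam i)).card
      = Multiset.countP (fun r => μ j ≤ r) (Finset.univ.val.map lam) := by
    rw [Multiset.countP_map]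
    rfl
  have h2 : (Finset.univ.filter (fun i => μ j ≤ μ i)).card
      = Multiset.countP (fun r => μ j ≤ r) (Finset.univ.val.map μ) := by
    rw [Multiset.countP_map]
    rfl
  rw [h1, heq, ← h2]
  calc n - (j : ℕ) = (Finset.Ici j).card := (Fin.card_Ici j).symm
    _ ≤ _ := by
        apply Finset.card_le_card
        intro i hi
        simp only [Finset.mem_Ici] at hi
        simp only [Finset.mem_filter, Finset.mem_univ, true_and]
        exact hm hi

lemma count_le (n : ℕ) (lam μ : Fin n → ℝ)
    (hm : Monotone μ)
    (heq : Finset.univ.val.map lam = Finset.univ.val.map μ) (j : Fin n) :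
    (j : ℕ) + 1 ≤ (Finset.univ.filter (fun i => lam i ≤ μ j)).card := by
  have h1 : (Finset.univ.filter (fun i => lam i ≤ μ j)).card
      = Multiset.countP (fun r => r ≤ μ j) (Finset.univ.val.map lam) := by
    rw [Multiset.countP_map]; rfl
  have h2 : (Finset.univ.filter (fun i => μ i ≤ μ j)).card
      = Multiset.countP (fun r => r ≤ μ j) (Finset.univ.val.map μ) := by
    rw [Multiset.countP_map]; rfl
  rw [h1, heq, ← h2]
  calc (j : ℕ) + 1 = (Finset.Iic j).card := (Fin.card_Iic j).symm
    _ ≤ _ := by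
        apply Finset.card_le_card
        intro i hi
        simp only [Finset.mem_Iic] at hi
        simp only [Finset.mem_filter, Finset.mem_univ, true_and]
        exact hm hi

lemma finrank_span_orthonormal (n : ℕ) (b : OrthonormalBasis (Fin n) ℂ (EuclideanSpace ℂ (Fin n)))
    (S : Finset (Fin n)) :
    Module.finrank ℂ (Submodule.span ℂ (b '' (S : Set (Fin n)))) = S.card := by
  have li : LinearIndependent ℂ (fun i : (S : Set (Fin n)) => b i) :=
    b.orthonormal.linearIndependent.comp _ Subtype.coe_injective
  have himg : Set.range (fun i : (S : Set (Fin n)) => b i) = b '' (S : Set (Fin n)) :=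
    (Set.image_eq_range _ _).symm
  rw [← himg, finrank_span_eq_card li]
  simp

lemma exists_nonzero_mem_inf (n : ℕ) (V W : Submodule ℂ (EuclideanSpace ℂ (Fin n)))
    (h : n + 1 ≤ Module.finrank ℂ V + Module.finrank ℂ W) :
    ∃ x : EuclideanSpace ℂ (Fin n), x ≠ 0 ∧ x ∈ V ∧ x ∈ W := by
  have hdim := Submodule.finrank_sup_add_finrank_inf_eq V W
  have hsup : Module.finrank ℂ ↥(V ⊔ W) ≤ n := by
    have := Submodule.finrank_le (V ⊔ W)
    simpa [finrank_euclideanSpace_fin] using this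
  have hinf : 1 ≤ Module.finrank ℂ ↥(V ⊓ W) := by omega
  have : V ⊓ W ≠ ⊥ := by
    intro hbot
    rw [hbot] at hinf
    simp at hinf
  obtain ⟨x, hx, hxne⟩ := Submodule.exists_mem_ne_zero_of_ne_bot this
  exact ⟨x, hxne, hx.1, hx.2⟩

noncomputable def weylAuxOpNorm {n : ℕ} (M : Matrix (Fin n) (Fin n) ℂ) : ℝ :=
  ‖Matrix.toEuclideanCLM (𝕜 := ℂ) M‖

lemma weyl_one_sided (n : ℕ)
    (A B : Matrix (Fin n) (Fin n) ℂ) (hA : A.IsHermitian) (hB : B.IsHermitian)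
    (μA μB : Fin n → ℝ) (hmA : Monotone μA) (hmB : Monotone μB)
    (hrA : A.charpoly.roots = Finset.univ.val.map (fun j => (μA j : ℂ)))
    (hrB : B.charpoly.roots = Finset.univ.val.map (fun j => (μB j : ℂ)))
    (j : Fin n) : μA j - μB j ≤ weylAuxOpNorm (A - B) := by
  have mA := multiset_eq_of_roots n hA hrA
  have mB := multiset_eq_of_roots n hB hrB
  set S : Finset (Fin n) := Finset.univ.filter (fun i => μA j ≤ hA.eigenvalues i) with hS
  set T : Finset (Fin n) := Finset.univ.filter (fun i => hB.eigenvalues i ≤ μB j) with hTdef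
  have hScard : n - (j : ℕ) ≤ S.card := count_ge n hA.eigenvalues μA hmA mA j
  have hTcard : (j : ℕ) + 1 ≤ T.card := count_le n hB.eigenvalues μB hmB mB j
  set V := Submodule.span ℂ (hA.eigenvectorBasis '' (S : Set (Fin n))) with hV
  set W := Submodule.span ℂ (hB.eigenvectorBasis '' (T : Set (Fin n))) with hW
  have hdim : n + 1 ≤ Module.finrank ℂ V + Module.finrank ℂ W := by
    rw [hV, hW, finrank_span_orthonormal, finrank_span_orthonormal]
    have := j.isLt
    omega
  obtain ⟨x, hxne, hxV, hxW⟩ := exists_nonzero_mem_inf n V W hdim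
  obtain ⟨hAre, hAn⟩ := rayleigh_repr n hA S x hxV
  obtain ⟨hBre, hBn⟩ := rayleigh_repr n hB T x hxW
  -- lower bound for A
  have lbA : μA j * ‖x‖ ^ 2 ≤ Complex.re (inner ℂ x (Matrix.toEuclideanCLM (𝕜 := ℂ) A x) : ℂ) := by
    rw [hAre, hAn, Finset.mul_sum]
    apply Finset.sum_le_sum
    intro i hi
    have : μA j ≤ hA.eigenvalues i := (Finset.mem_filter.1 hi).2
    have hnn : (0:ℝ) ≤ ‖(inner ℂ (hA.eigenvectorBasis i) x : ℂ)‖ ^ 2 := by positivity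
    nlinarith
  have ubB : Complex.re (inner ℂ x (Matrix.toEuclideanCLM (𝕜 := ℂ) B x) : ℂ) ≤ μB j * ‖x‖ ^ 2 := by
    rw [hBre, hBn, Finset.mul_sum]
    apply Finset.sum_le_sum
    intro i hi
    have : hB.eigenvalues i ≤ μB j := (Finset.mem_filter.1 hi).2
    have hnn : (0:ℝ) ≤ ‖(inner ℂ (hB.eigenvectorBasis i) x : ℂ)‖ ^ 2 := by positivity
    nlinarith
  -- the difference
  set C := Matrix.toEuclideanCLM (𝕜 := ℂ) (A - B) with hC
  have hCsub : ∀ y, C y = Matrix.toEuclideanCLM (𝕜 := ℂ) A y - Matrix.toEuclideanCLM (𝕜 := ℂ) B y := by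
    intro y
    rw [hC, map_sub]
    rfl
  have hdiff : (μA j - μB j) * ‖x‖ ^ 2 ≤ Complex.re (inner ℂ x (C x) : ℂ) := by
    rw [hCsub, inner_sub_right]
    have : Complex.re ((inner ℂ x (Matrix.toEuclideanCLM (𝕜 := ℂ) A x) : ℂ)
        - (inner ℂ x (Matrix.toEuclideanCLM (𝕜 := ℂ) B x) : ℂ))
        = Complex.re (inner ℂ x (Matrix.toEuclideanCLM (𝕜 := ℂ) A x) : ℂ)
          - Complex.re (inner ℂ x (Matrix.toEuclideanCLM (𝕜 := ℂ) B x) : ℂ) := by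
      simp
    rw [this]
    nlinarith
  have hbound : Complex.re (inner ℂ x (C x) : ℂ) ≤ ‖C‖ * ‖x‖ ^ 2 := by
    calc Complex.re (inner ℂ x (C x) : ℂ) ≤ ‖(inner ℂ x (C x) : ℂ)‖ := Complex.re_le_norm _
      _ ≤ ‖x‖ * ‖C x‖ := norm_inner_le_norm _ _
      _ ≤ ‖x‖ * (‖C‖ * ‖x‖) := by
          apply mul_le_mul_of_nonneg_left (C.le_opNorm x) (norm_nonneg x)
      _ = ‖C‖ * ‖x‖ ^ 2 := by ring
  have hx2 : (0:ℝ) < ‖x‖ ^ 2 := pow_pos (norm_pos_iff.2 hxne) 2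
  have hfin : (μA j - μB j) * ‖x‖ ^ 2 ≤ ‖C‖ * ‖x‖ ^ 2 := le_trans hdiff hbound
  exact (mul_le_mul_iff_of_pos_right hx2).1 hfin


end WeylAux

/-- Weyl-type Lipschitz bound for increasingly ordered eigenvalues of Hermitian matrices:
if `μA` and `μB` are the nondecreasing enumerations (with multiplicity) of the (real)
eigenvalues of Hermitian matrices `A` and `B`, i.e. monotone tuples whose associated multisets
are the root multisets of the respective characteristic polynomials, then
`max_j |μA j - μB j| ≤ ‖A - B‖` in the operator norm. -/
theorem weyl_lipschitz_bound_ordered_eigenvalues (n : ℕ)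
    (A B : Matrix (Fin n) (Fin n) ℂ) (hA : A.IsHermitian) (hB : B.IsHermitian)
    (μA μB : Fin n → ℝ) (hmA : Monotone μA) (hmB : Monotone μB)
    (hrA : A.charpoly.roots = Finset.univ.val.map (fun j => (μA j : ℂ)))
    (hrB : B.charpoly.roots = Finset.univ.val.map (fun j => (μB j : ℂ))) :
    ∀ j : Fin n, |μA j - μB j| ≤ matrixOpNorm (A - B) := by
  intro j
  have hnorm : matrixOpNorm (B - A) = matrixOpNorm (A - B) := by
    unfold matrixOpNorm
    have : (B - A) = -(A - B) := (neg_sub A B).symm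
    rw [this, map_neg, norm_neg]
  rw [abs_sub_le_iff]
  constructor
  · exact weyl_one_sided n A B hA hB μA μB hmA hmB hrA hrB j
  · rw [← hnorm]
    exact weyl_one_sided n B A hB hA μB μA hmB hmA hrB hrA j
end

section
/- Continuous eigenvalues of Lipschitz families of normal matrices in several parameters are Lipschitz: let U ⊆ ℝ^q be open, let A : U → M_n(ℂ) be locally Lipschitz with respect to the operator norm and such that A(x) is normal for every x ∈ U, let V ⊆ U be open, and let λ : V → ℂ be a continuous function such that λ(x) is an eigenvalue of A(x) for every x ∈ V. Then λ is locally Lipschitz on V. -/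
open Matrix

section Aux

/-- Resolvent bound for normal operators on `ℂ^n`: `dist(λ, spec S) * ‖w‖ ≤ ‖(S - λ) w‖`. -/
lemma aux_resolvent {n : ℕ}
    (S : EuclideanSpace ℂ (Fin n) →L[ℂ] EuclideanSpace ℂ (Fin n))
    (hS : IsStarNormal S) (lam : ℂ) (w : EuclideanSpace ℂ (Fin n)) :
    Metric.infDist lam (spectrum ℂ S) * ‖w‖ ≤ ‖(S - algebraMap ℂ _ lam) w‖ := by
  haveI := hS
  by_cases hlam : lam ∈ spectrum ℂ S
  · rw [Metric.infDist_zero_of_mem hlam, zero_mul]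
    exact norm_nonneg _
  by_cases hne : (spectrum ℂ S).Nonempty
  swap
  · rw [Set.not_nonempty_iff_eq_empty] at hne
    rw [hne, Metric.infDist_empty, zero_mul]
    exact norm_nonneg _
  set d := Metric.infDist lam (spectrum ℂ S) with hd_def
  have hd : 0 < d := ((spectrum.isClosed (𝕜 := ℂ) S).notMem_iff_infDist_pos hne).mp hlam
  set f : ℂ → ℂ := fun z => (z - lam)⁻¹ with hf_def
  have hspec_ne : ∀ z ∈ spectrum ℂ S, z - lam ≠ 0 := by
    intro z hz
    exact sub_ne_zero.mpr (fun h => hlam (h ▸ hz))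
  have hf : ContinuousOn f (spectrum ℂ S) :=
    ((continuous_id.sub continuous_const).continuousOn).inv₀ hspec_ne
  have hsub : ContinuousOn (fun z : ℂ => z - lam) (spectrum ℂ S) :=
    (continuous_id.sub continuous_const).continuousOn
  have h1 : cfc (fun z : ℂ => z - lam) S = S - algebraMap ℂ _ lam := by
    rw [cfc_sub (fun z : ℂ => z) (fun _ : ℂ => lam) S, cfc_id' (R := ℂ) (a := S), cfc_const lam S]
  have hR : cfc f S * (S - algebraMap ℂ _ lam) = 1 := by
    rw [← h1, ← cfc_mul f (fun z : ℂ => z - lam) S hf hsub]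
    rw [show (fun z : ℂ => f z * (z - lam)) = fun z : ℂ => (z - lam)⁻¹ * (z - lam) from rfl]
    calc cfc (fun z : ℂ => (z - lam)⁻¹ * (z - lam)) S
        = cfc (1 : ℂ → ℂ) S := cfc_congr (fun z hz => inv_mul_cancel₀ (hspec_ne z hz))
      _ = 1 := cfc_one ℂ S
  have hnormR : ‖cfc f S‖ ≤ d⁻¹ := by
    apply norm_cfc_le (by positivity)
    intro z hz
    have hdz : d ≤ ‖z - lam‖ := by
      rw [hd_def]
      calc Metric.infDist lam (spectrum ℂ S) ≤ dist lam z := Metric.infDist_le_dist_of_mem hz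
        _ = ‖z - lam‖ := by rw [dist_eq_norm, norm_sub_rev]
    rw [hf_def]
    simp only [norm_inv]
    exact inv_anti₀ hd hdz
  have hw_eq : w = (cfc f S) ((S - algebraMap ℂ _ lam) w) := by
    have := congrArg (fun T : EuclideanSpace ℂ (Fin n) →L[ℂ] EuclideanSpace ℂ (Fin n) => T w) hR
    simpa [ContinuousLinearMap.mul_apply] using this.symm
  have hle : ‖w‖ ≤ d⁻¹ * ‖(S - algebraMap ℂ _ lam) w‖ := by
    calc ‖w‖ = ‖(cfc f S) ((S - algebraMap ℂ _ lam) w)‖ := by rw [← hw_eq]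
      _ ≤ ‖cfc f S‖ * ‖(S - algebraMap ℂ _ lam) w‖ := ContinuousLinearMap.le_opNorm _ _
      _ ≤ d⁻¹ * ‖(S - algebraMap ℂ _ lam) w‖ := by
          exact mul_le_mul_of_nonneg_right hnormR (norm_nonneg _)
  calc d * ‖w‖ ≤ d * (d⁻¹ * ‖(S - algebraMap ℂ _ lam) w‖) :=
        mul_le_mul_of_nonneg_left hle hd.le
    _ = ‖(S - algebraMap ℂ _ lam) w‖ := by field_simp

/-- Bauer–Fike for normal matrices: every eigenvalue of `B` is within `‖B - C‖` of the
spectrum of a normal matrix `C`. -/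
lemma aux_bauer_fike {n : ℕ} (B C : Matrix (Fin n) (Fin n) ℂ)
    (hC : C * Cᴴ = Cᴴ * C) (lam : ℂ) (v : Fin n → ℂ) (hv : v ≠ 0)
    (hBv : B *ᵥ v = lam • v) :
    ∃ mu ∈ spectrum ℂ C, dist lam mu ≤ matrixOpNorm (B - C) := by
  set Φ := Matrix.toEuclideanCLM (𝕜 := ℂ) (n := Fin n) with hΦ
  set w : EuclideanSpace ℂ (Fin n) := (WithLp.equiv 2 (Fin n → ℂ)).symm v with hw_def
  have hw : w ≠ 0 := by
    intro h
    apply hv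
    have := congrArg (WithLp.equiv 2 (Fin n → ℂ)) h
    simpa [hw_def] using this
  have hBw : Φ B w = lam • w := by
    rw [hw_def, hΦ, WithLp.equiv_symm_apply, Matrix.toEuclideanCLM_toLp]
    rw [hBv,
      WithLp.toLp_smul]
  haveI : IsStarNormal (Φ C) := by
    constructor
    rw [commute_iff_eq, ← map_star, ← _root_.map_mul, ← _root_.map_mul, star_eq_conjTranspose, hC]
  have hspec : spectrum ℂ (Φ C) = spectrum ℂ C := AlgEquiv.spectrum_eq Φ C
  haveI : Nontrivial (EuclideanSpace ℂ (Fin n) →L[ℂ] EuclideanSpace ℂ (Fin n)) := by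
    refine ⟨1, 0, fun h => hw ?_⟩
    calc w = (1 : EuclideanSpace ℂ (Fin n) →L[ℂ] EuclideanSpace ℂ (Fin n)) w := rfl
      _ = (0 : EuclideanSpace ℂ (Fin n) →L[ℂ] EuclideanSpace ℂ (Fin n)) w := by rw [h]
      _ = 0 := rfl
  have hne : (spectrum ℂ (Φ C)).Nonempty := spectrum.nonempty (Φ C)
  obtain ⟨mu, hmu, hmu_dist⟩ := (spectrum.isCompact (Φ C)).exists_infDist_eq_dist hne lam
  have hres := aux_resolvent (Φ C) ‹_› lam w
  have happ : (Φ C - algebraMap ℂ _ lam) w = (Φ (C - B)) w := by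
    rw [map_sub]
    simp only [ContinuousLinearMap.sub_apply]
    rw [hBw, Algebra.algebraMap_eq_smul_one]
    simp
  have hnorm_le : ‖(Φ C - algebraMap ℂ _ lam) w‖ ≤ matrixOpNorm (B - C) * ‖w‖ := by
    rw [happ]
    have : ‖Φ (C - B)‖ = matrixOpNorm (B - C) := by
      rw [matrixOpNorm, hΦ, (neg_sub B C).symm, map_neg, norm_neg]
    calc ‖(Φ (C - B)) w‖ ≤ ‖Φ (C - B)‖ * ‖w‖ := ContinuousLinearMap.le_opNorm _ _
      _ = matrixOpNorm (B - C) * ‖w‖ := by rw [this]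
  have hwpos : 0 < ‖w‖ := norm_pos_iff.mpr hw
  have hfinal : Metric.infDist lam (spectrum ℂ (Φ C)) ≤ matrixOpNorm (B - C) := by
    have h := hres.trans hnorm_le
    exact le_of_mul_le_mul_right h hwpos
  exact ⟨mu, hspec ▸ hmu, by rw [← hmu_dist] at *; exact hfinal⟩

/-- An eigenvalue of a matrix belongs to its spectrum. -/
lemma aux_mem_spectrum {n : ℕ} (B : Matrix (Fin n) (Fin n) ℂ) (lam : ℂ) (v : Fin n → ℂ)
    (hv : v ≠ 0) (hBv : B *ᵥ v = lam • v) : lam ∈ spectrum ℂ B := by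
  set Φ := Matrix.toEuclideanCLM (𝕜 := ℂ) (n := Fin n) with hΦ
  rw [← AlgEquiv.spectrum_eq Φ B]
  set w : EuclideanSpace ℂ (Fin n) := (WithLp.equiv 2 (Fin n → ℂ)).symm v with hw_def
  have hw : w ≠ 0 := by
    intro h
    apply hv
    have := congrArg (WithLp.equiv 2 (Fin n → ℂ)) h
    simpa [hw_def] using this
  have hBw : Φ B w = lam • w := by
    rw [hw_def, hΦ, WithLp.equiv_symm_apply, Matrix.toEuclideanCLM_toLp]
    rw [hBv,
      WithLp.toLp_smul]
  rw [spectrum.mem_iff]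
  rintro ⟨u, hu⟩
  apply hw
  have h0 : (algebraMap ℂ _ lam - Φ B) w = 0 := by
    simp only [ContinuousLinearMap.sub_apply]
    rw [hBw, Algebra.algebraMap_eq_smul_one]
    simp
  have : w = (↑u⁻¹ * ↑u : EuclideanSpace ℂ (Fin n) →L[ℂ] EuclideanSpace ℂ (Fin n)) w := by
    rw [u.inv_mul]; rfl
  rw [this, ContinuousLinearMap.mul_apply, hu, h0, map_zero]

/-- Chaining lemma: a continuous selection from finite sets that move Lipschitz-ly is
itself Lipschitz (over the interval `[0, 1]`). -/
lemma aux_chain {f : ℝ → ℂ} {S : ℝ → Set ℂ} {L : ℝ} (hL : 0 ≤ L)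
    (hf : ContinuousOn f (Set.Icc 0 1))
    (hfin : ∀ s ∈ Set.Icc (0:ℝ) 1, (S s).Finite)
    (hmem : ∀ s ∈ Set.Icc (0:ℝ) 1, f s ∈ S s)
    (hclose : ∀ s ∈ Set.Icc (0:ℝ) 1, ∀ t ∈ Set.Icc (0:ℝ) 1,
      ∃ mu ∈ S s, dist (f t) mu ≤ L * |t - s|) :
    dist (f 1) (f 0) ≤ L := by
  set T : Set ℝ := {t | t ∈ Set.Icc (0:ℝ) 1 ∧ dist (f t) (f 0) ≤ L * t} with hT_def
  have h0T : (0:ℝ) ∈ T := ⟨⟨le_refl 0, zero_le_one⟩, by simp⟩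
  have hTne : T.Nonempty := ⟨0, h0T⟩
  have hTbdd : BddAbove T := ⟨1, fun t ht => ht.1.2⟩
  have hTclosed : IsClosed T := by
    have : T = Set.Icc (0:ℝ) 1 ∩ (fun t => dist (f t) (f 0) - L * t) ⁻¹' Set.Iic 0 := by
      ext t; simp [hT_def, sub_nonpos]
    rw [this]
    have hcont : ContinuousOn (fun t => dist (f t) (f 0) - L * t) (Set.Icc 0 1) := by
      simp only [dist_eq_norm]
      exact ((hf.sub continuousOn_const).norm).sub
        ((continuous_const.mul continuous_id).continuousOn)
    exact hcont.preimage_isClosed_of_isClosed isClosed_Icc isClosed_Iic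
  set c := sSup T with hc_def
  have hcT : c ∈ T := hTclosed.csSup_mem hTne hTbdd
  have hc1 : c ≤ 1 := hcT.1.2
  have hkey : c = 1 := by
    by_contra hne1
    have hclt : c < 1 := lt_of_le_of_ne hc1 hne1
    obtain ⟨δ, hδ, hsep⟩ : ∃ δ > 0, ∀ mu ∈ S c, mu = f c ∨ δ ≤ dist (f c) mu := by
      set D := S c \ {f c} with hD_def
      by_cases hDne : D.Nonempty
      · have hDfin : D.Finite := (hfin c hcT.1).diff
        have hDclosed : IsClosed D := hDfin.isClosed
        have hfcD : f c ∉ D := fun h => h.2 rfl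
        have hpos : 0 < Metric.infDist (f c) D :=
          (hDclosed.notMem_iff_infDist_pos hDne).mp hfcD
        refine ⟨Metric.infDist (f c) D, hpos, fun mu hmu => ?_⟩
        by_cases hmu' : mu = f c
        · exact Or.inl hmu'
        · exact Or.inr (Metric.infDist_le_dist_of_mem ⟨hmu, hmu'⟩)
      · refine ⟨1, one_pos, fun mu hmu => Or.inl ?_⟩
        by_contra hmu'
        exact hDne ⟨mu, hmu, hmu'⟩
    have hcontc : ContinuousWithinAt f (Set.Icc 0 1) c := hf c hcT.1
    rw [Metric.continuousWithinAt_iff] at hcontc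
    obtain ⟨η, hη, hη'⟩ := hcontc (δ / 2) (by positivity)
    set η₂ := min η (δ / (2 * L + 2)) with hη₂_def
    have hη₂ : 0 < η₂ := lt_min hη (by positivity)
    set t := min 1 (c + η₂ / 2) with ht_def
    have htc : c < t := lt_min hclt (by linarith)
    have ht1 : t ≤ 1 := min_le_left _ _
    have ht0 : 0 ≤ t := le_trans hcT.1.1 htc.le
    have htIcc : t ∈ Set.Icc (0:ℝ) 1 := ⟨ht0, ht1⟩
    have htsub : t - c ≤ η₂ / 2 := by
      have : t ≤ c + η₂ / 2 := min_le_right _ _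
      linarith
    have htsub0 : 0 < t - c := by linarith
    have hdist_fc : dist (f t) (f c) < δ / 2 := by
      apply hη' htIcc
      rw [Real.dist_eq, abs_of_pos htsub0]
      have := min_le_left η (δ / (2 * L + 2))
      linarith
    obtain ⟨mu, hmuS, hmu_close⟩ := hclose c hcT.1 t htIcc
    have habs : |t - c| = t - c := abs_of_pos htsub0
    rw [habs] at hmu_close
    have hLtc : L * (t - c) < δ / 2 := by
      have h1 : t - c ≤ δ / (2 * L + 2) := by
        have := min_le_right η (δ / (2 * L + 2))
        linarith
      have hpos : (0:ℝ) < 2 * L + 2 := by linarith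
      have h2 : L * (t - c) ≤ L * (δ / (2 * L + 2)) :=
        mul_le_mul_of_nonneg_left h1 hL
      have h3 : L * (δ / (2 * L + 2)) < δ / 2 := by
        rw [mul_div_assoc'] at *
        rw [div_lt_div_iff₀ hpos (by norm_num : (0:ℝ) < 2)]
        nlinarith
      linarith
    have hmu_eq : mu = f c := by
      rcases hsep mu hmuS with h | h
      · exact h
      · exfalso
        have htri : dist (f c) mu ≤ dist (f c) (f t) + dist (f t) mu := dist_triangle _ _ _
        rw [dist_comm (f c) (f t)] at htri
        linarith
    have htT : t ∈ T := by
      refine ⟨htIcc, ?_⟩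
      have h1 : dist (f t) (f c) ≤ L * (t - c) := hmu_eq ▸ hmu_close
      have h2 : dist (f c) (f 0) ≤ L * c := hcT.2
      calc dist (f t) (f 0) ≤ dist (f t) (f c) + dist (f c) (f 0) := dist_triangle _ _ _
        _ ≤ L * (t - c) + L * c := add_le_add h1 h2
        _ = L * t := by ring
    have hle := le_csSup hTbdd htT
    rw [← hc_def] at hle
    linarith
  have h1T : (1:ℝ) ∈ T := hkey ▸ hcT
  simpa using h1T.2

end Aux

/-- Continuous eigenvalues of locally Lipschitz (operator norm) families of normal matrices in
several real parameters are locally Lipschitz: if `A : U → M_n(ℂ)` is locally Lipschitz on an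
open set `U ⊆ ℝ^q` with `A x` normal for every `x ∈ U`, `V ⊆ U` is open, and `λ : V → ℂ` is
continuous with `λ x` an eigenvalue of `A x` for every `x ∈ V`, then `λ` is locally Lipschitz
on `V`. -/
theorem continuous_eigenvalue_of_lipschitz_normal_family_is_lipschitz (n q : ℕ)
    (U V : Set (EuclideanSpace ℝ (Fin q))) (hU : IsOpen U) (hV : IsOpen V) (hVU : V ⊆ U)
    (A : EuclideanSpace ℝ (Fin q) → Matrix (Fin n) (Fin n) ℂ)
    (hnormal : ∀ x ∈ U, A x * (A x)ᴴ = (A x)ᴴ * A x)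
    (hLip : ∀ x ∈ U, ∃ K : ℝ, ∃ ε : ℝ, 0 < ε ∧ ∀ y ∈ U, ∀ z ∈ U,
      dist y x < ε → dist z x < ε → matrixOpNorm (A y - A z) ≤ K * dist y z)
    (l : EuclideanSpace ℝ (Fin q) → ℂ) (hl : ContinuousOn l V)
    (heig : ∀ x ∈ V, ∃ v : Fin n → ℂ, v ≠ 0 ∧ (A x) *ᵥ v = l x • v) :
    ∀ x ∈ V, ∃ K : ℝ, ∃ ε : ℝ, 0 < ε ∧ ∀ y ∈ V, ∀ z ∈ V,
      dist y x < ε → dist z x < ε → ‖l y - l z‖ ≤ K * dist y z := by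
  intro x hx
  obtain ⟨K, ε₀, hε₀, hK⟩ := hLip x (hVU hx)
  obtain ⟨εV, hεV, hball⟩ := Metric.isOpen_iff.mp hV x hx
  set K' := max K 0 with hK'_def
  have hK'0 : 0 ≤ K' := le_max_right _ _
  refine ⟨K', min ε₀ εV / 2, by positivity, ?_⟩
  intro y hy z hz hyx hzx
  set ε := min ε₀ εV / 2 with hε_def
  have hεε₀ : ε ≤ ε₀ := by
    rw [hε_def]
    have := min_le_left ε₀ εV
    linarith
  have hεεV : ε ≤ εV := by
    rw [hε_def]
    have := min_le_right ε₀ εV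
    linarith
  have hballV : Metric.ball x ε ⊆ V := fun p hp =>
    hball (Metric.mem_ball.mpr (lt_of_lt_of_le (Metric.mem_ball.mp hp) hεεV))
  set γ : ℝ → EuclideanSpace ℝ (Fin q) := fun t => z + t • (y - z) with hγ_def
  have hyball : y ∈ Metric.ball x ε := Metric.mem_ball.mpr hyx
  have hzball : z ∈ Metric.ball x ε := Metric.mem_ball.mpr hzx
  have hγmem : ∀ t ∈ Set.Icc (0:ℝ) 1, γ t ∈ Metric.ball x ε := fun t ht =>
    (convex_ball x ε).add_smul_sub_mem hzball hyball ht
  have hγV : ∀ t ∈ Set.Icc (0:ℝ) 1, γ t ∈ V := fun t ht => hballV (hγmem t ht)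
  have hγU : ∀ t ∈ Set.Icc (0:ℝ) 1, γ t ∈ U := fun t ht => hVU (hγV t ht)
  have hγdistx : ∀ t ∈ Set.Icc (0:ℝ) 1, dist (γ t) x < ε₀ := fun t ht =>
    lt_of_lt_of_le (Metric.mem_ball.mp (hγmem t ht)) hεε₀
  set c := dist y z with hc_def
  have hγdist : ∀ s t : ℝ, dist (γ t) (γ s) = |t - s| * c := by
    intro s t
    have hsub : γ t - γ s = (t - s) • (y - z) := by
      rw [hγ_def]
      simp only
      rw [sub_smul]
      abel
    rw [dist_eq_norm, hsub, norm_smul, Real.norm_eq_abs, hc_def, dist_eq_norm]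
  set f : ℝ → ℂ := fun t => l (γ t) with hf_def
  have hγcont : Continuous γ := by
    rw [hγ_def]
    exact continuous_const.add (continuous_id.smul continuous_const)
  have hfcont : ContinuousOn f (Set.Icc 0 1) := by
    apply hl.comp hγcont.continuousOn
    intro t ht
    exact hγV t ht
  have key : dist (f 1) (f 0) ≤ K' * c := by
    apply aux_chain (S := fun s => spectrum ℂ (A (γ s))) (mul_nonneg hK'0 dist_nonneg) hfcont
    · intro s _
      exact Matrix.finite_spectrum (A (γ s))
    · intro s hs
      obtain ⟨v, hv, hAv⟩ := heig (γ s) (hγV s hs)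
      exact aux_mem_spectrum (A (γ s)) (f s) v hv hAv
    · intro s hs t ht
      obtain ⟨v, hv, hAv⟩ := heig (γ t) (hγV t ht)
      obtain ⟨mu, hmu, hmu_dist⟩ :=
        aux_bauer_fike (A (γ t)) (A (γ s)) (hnormal (γ s) (hγU s hs)) (f t) v hv hAv
      refine ⟨mu, hmu, hmu_dist.trans ?_⟩
      have h1 : matrixOpNorm (A (γ t) - A (γ s)) ≤ K * dist (γ t) (γ s) :=
        hK (γ t) (hγU t ht) (γ s) (hγU s hs) (hγdistx t ht) (hγdistx s hs)
      have h2 : K * dist (γ t) (γ s) ≤ K' * dist (γ t) (γ s) :=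
        mul_le_mul_of_nonneg_right (le_max_left K 0) dist_nonneg
      calc matrixOpNorm (A (γ t) - A (γ s)) ≤ K' * dist (γ t) (γ s) := h1.trans h2
        _ = K' * c * |t - s| := by rw [hγdist s t]; ring
  have hγ1 : γ 1 = y := by rw [hγ_def]; simp
  have hγ0 : γ 0 = z := by rw [hγ_def]; simp
  have : dist (l y) (l z) ≤ K' * c := by
    rw [← hγ1, ← hγ0]
    exact key
  rw [Complex.dist_eq] at this
  exact this
end

section
/- The single eigenvalues cannot in general be chosen continuously in two real parameters: define A : ℂ → M_2(ℂ) by A(x) = [[0, x],[|x|, 0]]. Then A(x) is normal for every x ∈ ℂ, the map A is locally Lipschitz (indeed Lipschitz), the characteristic polynomial of A(x) is z² − x|x|, and for every neighborhood W of 0 in ℂ there do NOT exist continuous functions λ₁, λ₂ : W → ℂ such that for every x ∈ W the multiset {λ₁(x), λ₂(x)} equals the multiset of roots with multiplicity of z² − x|x|. -/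
set_option maxHeartbeats 1000000
set_option synthInstance.maxHeartbeats 1000000


open Matrix Polynomial

/-- The family of matrices `A(x) = [[0, x], [|x|, 0]]`, for `x ∈ ℂ ≅ ℝ²`. -/
noncomputable def Aex (x : ℂ) : Matrix (Fin 2) (Fin 2) ℂ :=
  !![0, x; (‖x‖ : ℂ), 0]

/-- The single eigenvalues cannot in general be chosen continuously in two real parameters:
for `A(x) = [[0, x], [|x|, 0]]`, every `A(x)` is normal, `A` is (globally) Lipschitz with
respect to the operator norm, the characteristic polynomial of `A(x)` is `z² - x·|x|`, and on
no neighborhood `W` of `0` in `ℂ` do there exist continuous functions `λ₁, λ₂ : W → ℂ`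
parameterizing the roots of `z² - x·|x|` with multiplicity. -/
theorem eigenvalues_not_continuously_choosable :
    (∀ x : ℂ, Aex x * (Aex x)ᴴ = (Aex x)ᴴ * Aex x) ∧
    (∃ K : ℝ, ∀ x y : ℂ, matrixOpNorm (Aex x - Aex y) ≤ K * ‖x - y‖) ∧
    (∀ x : ℂ, (Aex x).charpoly = X ^ 2 - C (x * (‖x‖ : ℂ))) ∧
    (∀ W : Set ℂ, W ∈ nhds (0 : ℂ) →
      ¬ ∃ l₁ l₂ : ℂ → ℂ, ContinuousOn l₁ W ∧ ContinuousOn l₂ W ∧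
        ∀ x ∈ W, (X ^ 2 - C (x * (‖x‖ : ℂ)) : Polynomial ℂ).roots =
          {l₁ x, l₂ x}) := by
  refine ⟨?_, ?_, ?_, ?_⟩
  · intro x
    have habs : ((‖x‖ : ℂ)) * (‖x‖ : ℂ) = (starRingEnd ℂ) x * x := by
      rw [← Complex.normSq_eq_conj_mul_self, ← Complex.sq_norm]; push_cast; ring
    ext i j
    fin_cases i <;> fin_cases j <;>
      simp [Aex, Matrix.mul_apply, Fin.sum_univ_two, Complex.mul_conj, Complex.mul_conj', habs]
    all_goals exact Complex.normSq_eq_conj_mul_self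
  · refine ⟨matrixOpNorm !![0,1;0,0] + matrixOpNorm !![0,0;1,0], fun x y => ?_⟩
    have hdecomp : Aex x - Aex y
        = (x - y) • !![0,1;0,0] + (((‖x‖ : ℂ)) - (‖y‖ : ℂ)) • !![0,0;1,0] := by
      ext i j; fin_cases i <;> fin_cases j <;> simp [Aex]
    rw [matrixOpNorm, hdecomp, map_add, _root_.map_smul, _root_.map_smul]
    refine (norm_add_le _ _).trans ?_
    refine (add_le_add (norm_smul_le (x - y) (Matrix.toEuclideanCLM (𝕜 := ℂ) !![0,1;0,0])) (norm_smul_le (((‖x‖ : ℂ)) - (‖y‖ : ℂ)) (Matrix.toEuclideanCLM (𝕜 := ℂ) !![0,0;1,0]))).trans ?_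
    have h1 : ‖((‖x‖ : ℂ)) - (‖y‖ : ℂ)‖ ≤ ‖x - y‖ := by
      rw [← Complex.ofReal_sub, Complex.norm_real]
      simpa using abs_norm_sub_norm_le x y
    have h2 : ‖x - y‖ = ‖x - y‖ := rfl
    have e1 : ‖x - y‖ * ‖Matrix.toEuclideanCLM (𝕜 := ℂ) !![0,1;0,0]‖
        ≤ ‖x - y‖ * matrixOpNorm !![0,1;0,0] := le_of_eq (by rw [h2, matrixOpNorm])
    have e2 : ‖((‖x‖ : ℂ)) - (‖y‖ : ℂ)‖ * ‖Matrix.toEuclideanCLM (𝕜 := ℂ) !![0,0;1,0]‖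
        ≤ ‖x - y‖ * matrixOpNorm !![0,0;1,0] :=
      mul_le_mul_of_nonneg_right h1 (norm_nonneg _)
    have := add_le_add e1 e2
    linarith
  · intro x
    simp [Matrix.charpoly, Matrix.det_fin_two, charmatrix_apply, Aex]
    ring
  · rintro W hW ⟨l₁, l₂, hc1, -, hroots⟩
    obtain ⟨ε, hε, hball⟩ := Metric.mem_nhds_iff.mp hW
    set r : ℝ := ε / 2 with hr
    have hrpos : 0 < r := by positivity
    set p : ℝ → ℂ := fun θ => (r : ℂ) * Complex.exp (θ * Complex.I) with hp
    have hpcont : Continuous p := by fun_prop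
    have habsr : ∀ θ : ℝ, ‖p θ‖ = r := by
      intro θ
      simp [hp, _root_.map_mul, Complex.norm_exp_ofReal_mul_I, Complex.norm_real,
        abs_of_pos hrpos]
    have hmem : ∀ θ : ℝ, p θ ∈ W := by
      intro θ
      apply hball
      rw [Metric.mem_ball, Complex.dist_eq, sub_zero, habsr θ]
      linarith
    have habs : ∀ θ : ℝ, (‖p θ‖ : ℂ) = (r : ℂ) := fun θ => by rw [habsr θ]
    have hsq : ∀ θ : ℝ, (l₁ (p θ)) ^ 2 = (r : ℂ) ^ 2 * Complex.exp (θ * Complex.I) := by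
      intro θ
      have hx := hroots (p θ) (hmem θ)
      have hmemroot : l₁ (p θ) ∈ (X ^ 2 - C (p θ * (‖p θ‖ : ℂ)) : Polynomial ℂ).roots := by
        rw [hx]; simp
      have hroot := (Polynomial.mem_roots'.mp hmemroot).2
      have := hroot
      simp only [Polynomial.IsRoot, Polynomial.eval_sub, Polynomial.eval_pow, Polynomial.eval_X,
        Polynomial.eval_C, sub_eq_zero] at this
      rw [this, habs θ, hp]; ring
    set g : ℝ → ℂ := fun θ => l₁ (p θ) * Complex.exp (-(θ / 2 : ℝ) * Complex.I) with hg
    have hgcont : Continuous g := by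
      have h1 : Continuous fun θ => l₁ (p θ) := hc1.comp_continuous hpcont hmem
      rw [hg]
      exact h1.mul (by fun_prop)
    have hgsq : ∀ θ : ℝ, g θ ^ 2 = (r : ℂ) ^ 2 := by
      intro θ
      have : g θ ^ 2 = (l₁ (p θ)) ^ 2 * Complex.exp (-(θ / 2 : ℝ) * Complex.I) ^ 2 := by
        rw [hg]; ring
      have e : Complex.exp (θ * Complex.I) * Complex.exp (-(θ / 2 : ℝ) * Complex.I) ^ 2 = 1 := by
        rw [sq, ← Complex.exp_add, ← Complex.exp_add,
          show (θ : ℂ) * Complex.I + (-((θ / 2 : ℝ) : ℂ) * Complex.I + -((θ / 2 : ℝ) : ℂ) * Complex.I) = 0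
            by push_cast; ring, Complex.exp_zero]
      rw [this, hsq θ, mul_assoc, e, mul_one]
    have hgval : ∀ θ : ℝ, g θ = (r : ℂ) ∨ g θ = -(r : ℂ) := by
      intro θ
      have h0 : (g θ - r) * (g θ + r) = 0 := by
        have := hgsq θ; ring_nf; ring_nf at this; rw [this]; ring
      rcases mul_eq_zero.mp h0 with h | h
      · left; linear_combination h
      · right; linear_combination h
    set u : ℝ → ℝ := fun θ => (g θ).re with hu
    have hucont : Continuous u := Complex.continuous_re.comp hgcont
    have huval : ∀ θ : ℝ, u θ = r ∨ u θ = -r := by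
      intro θ
      rcases hgval θ with h | h
      · left; rw [hu]; simp [h]
      · right; rw [hu]; simp [h]
    have hune : ∀ θ : ℝ, u θ ≠ 0 := by
      intro θ
      rcases huval θ with h | h <;> rw [h] <;> [exact ne_of_gt hrpos; exact ne_of_lt (by linarith)]
    -- endpoint values
    have hg0 : g 0 = l₁ ((r : ℂ)) := by
      simp [hg, hp]
    have hg2π : g (2 * Real.pi) = -l₁ ((r : ℂ)) := by
      have e1 : Complex.exp ((2 * Real.pi : ℝ) * Complex.I) = 1 := by
        push_cast; exact Complex.exp_two_pi_mul_I
      have e2 : Complex.exp (-(2 * Real.pi / 2 : ℝ) * Complex.I) = -1 := by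
        push_cast
        rw [show -(2 * (Real.pi : ℂ) / 2) * Complex.I = -(Real.pi * Complex.I) by ring,
          Complex.exp_neg, Complex.exp_pi_mul_I]
        norm_num
      rw [hg]
      simp only [hp]
      rw [e1, e2, mul_one]
      ring
    have hu2π : u (2 * Real.pi) = -u 0 := by
      rw [hu]; simp [hg0, hg2π]
    have hpi : (0 : ℝ) ≤ 2 * Real.pi := by positivity
    -- intermediate value
    have : ∃ θ ∈ Set.Icc (0 : ℝ) (2 * Real.pi), u θ = 0 := by
      rcases huval 0 with h | h
      · have h2 : u (2 * Real.pi) = -r := by rw [hu2π, h]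
        have hsub := intermediate_value_Icc' hpi hucont.continuousOn
        have : (0 : ℝ) ∈ Set.Icc (u (2 * Real.pi)) (u 0) := by
          rw [h, h2]; constructor <;> linarith
        obtain ⟨θ, hθ, hθ0⟩ := hsub this
        exact ⟨θ, hθ, hθ0⟩
      · have h2 : u (2 * Real.pi) = r := by rw [hu2π, h]; ring
        have hsub := intermediate_value_Icc hpi hucont.continuousOn
        have : (0 : ℝ) ∈ Set.Icc (u 0) (u (2 * Real.pi)) := by
          rw [h, h2]; constructor <;> linarith
        obtain ⟨θ, hθ, hθ0⟩ := hsub this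
        exact ⟨θ, hθ, hθ0⟩
    obtain ⟨θ, -, hθ0⟩ := this
    exact hune θ hθ0
end

section
/- Eigenvectors cannot be chosen with locally bounded derivatives: define A : ℝ² → M_2(ℝ) by A(x,y) = [[x, y],[y, −x]]; its eigenvalues are ±√(x²+y²). Then for every neighborhood W of the origin in ℝ² there does NOT exist a map v : W ∖ {0} → ℝ² such that v is differentiable at every point of W ∖ {0}, the derivative of v is bounded on W ∖ {0}, and for every p = (x,y) ∈ W ∖ {0} one has ‖v(p)‖ = 1 and A(p) v(p) = √(x²+y²) · v(p). -/
open Matrix Polynomial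

/-- The family of real symmetric matrices `A(x,y) = [[x, y], [y, -x]]`. -/
def Asym (p : ℝ × ℝ) : Matrix (Fin 2) (Fin 2) ℝ :=
  !![p.1, p.2; p.2, -p.1]

open Real

/-- Eigenvectors cannot be chosen with locally bounded derivatives: for
`A(x,y) = [[x, y], [y, -x]]` (whose eigenvalues are `±√(x²+y²)`), on no neighborhood `W` of
the origin does there exist a choice `v` of unit eigenvectors for the eigenvalue `√(x²+y²)`
on `W ∖ {0}` which is differentiable with bounded derivative on `W ∖ {0}`. -/
theorem eigenvectors_not_boundedly_differentiable :
    (∀ p : ℝ × ℝ, (Asym p).charpoly = X ^ 2 - C (p.1 ^ 2 + p.2 ^ 2)) ∧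
    ∀ W : Set (ℝ × ℝ), W ∈ nhds (0 : ℝ × ℝ) →
      ¬ ∃ v : ℝ × ℝ → (Fin 2 → ℝ),
          (∀ p ∈ W \ {(0 : ℝ × ℝ)}, DifferentiableAt ℝ v p) ∧
          (∃ C : ℝ, ∀ p ∈ W \ {(0 : ℝ × ℝ)}, ‖fderiv ℝ v p‖ ≤ C) ∧
          (∀ p ∈ W \ {(0 : ℝ × ℝ)},
            (v p 0) ^ 2 + (v p 1) ^ 2 = 1 ∧
            (Asym p) *ᵥ (v p) = Real.sqrt (p.1 ^ 2 + p.2 ^ 2) • v p) := by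
  constructor
  · intro p
    rw [Matrix.charpoly, Matrix.det_fin_two]
    simp [Asym, Matrix.charmatrix_apply_eq, Matrix.charmatrix_apply_ne, map_add]
    ring
  intro W hW
  rintro ⟨v, hdiff, -, heig⟩
  obtain ⟨r, hr, hball⟩ := Metric.mem_nhds_iff.mp hW
  set R : ℝ := r / 2 with hR
  have hR0 : 0 < R := by positivity
  -- the circle of radius R
  set γ : ℝ → ℝ × ℝ := fun θ => (R * Real.cos θ, R * Real.sin θ) with hγ
  have hmem : ∀ θ, γ θ ∈ W \ {(0 : ℝ × ℝ)} := by
    intro θ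
    constructor
    · apply hball
      rw [Metric.mem_ball, dist_zero_right, Prod.norm_def]
      simp only [Real.norm_eq_abs]
      have h1 : |R * Real.cos θ| ≤ R := by
        rw [abs_mul, abs_of_pos hR0]
        nlinarith [abs_cos_le_one θ, abs_nonneg (Real.cos θ)]
      have h2 : |R * Real.sin θ| ≤ R := by
        rw [abs_mul, abs_of_pos hR0]
        nlinarith [abs_sin_le_one θ, abs_nonneg (Real.sin θ)]
      have : R < r := by simp [hR]; linarith
      exact lt_of_le_of_lt (max_le h1 h2) this
    · simp only [Set.mem_singleton_iff, hγ, Prod.mk_eq_zero, not_and_or]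
      by_contra h
      push_neg at h
      obtain ⟨h1, h2⟩ := h
      have := Real.sin_sq_add_cos_sq θ
      have hc : Real.cos θ = 0 := by
        rcases mul_eq_zero.mp h1 with h | h
        · linarith
        · exact h
      have hs : Real.sin θ = 0 := by
        rcases mul_eq_zero.mp h2 with h | h
        · linarith
        · exact h
      rw [hs, hc] at this; norm_num at this
  -- sqrt of norm² on the circle
  have hsqrt : ∀ θ, Real.sqrt ((γ θ).1 ^ 2 + (γ θ).2 ^ 2) = R := by
    intro θ
    have : (γ θ).1 ^ 2 + (γ θ).2 ^ 2 = R ^ 2 := by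
      simp only [hγ]
      nlinarith [Real.sin_sq_add_cos_sq θ]
    rw [this, Real.sqrt_sq hR0.le]
  set a : ℝ → ℝ := fun θ => v (γ θ) 0 with ha
  set b : ℝ → ℝ := fun θ => v (γ θ) 1 with hb
  -- eigen equations
  have heq : ∀ θ, a θ * Real.sin (θ/2) = b θ * Real.cos (θ/2) ∧
      (a θ) ^ 2 + (b θ) ^ 2 = 1 := by
    intro θ
    obtain ⟨hunit, hmv⟩ := heig (γ θ) (hmem θ)
    rw [hsqrt θ] at hmv
    have h0 := congrFun hmv 0
    have h1 := congrFun hmv 1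
    simp only [Asym, Matrix.mulVec, dotProduct, Fin.sum_univ_two,
      Matrix.cons_val', Matrix.cons_val_zero, Matrix.cons_val_one, Matrix.head_cons,
      Matrix.empty_val', Matrix.cons_val_fin_one, Matrix.head_fin_const,
      Pi.smul_apply, smul_eq_mul] at h0 h1
    refine ⟨?_, hunit⟩
    have hsc : Real.sin (θ/2) ^ 2 + Real.cos (θ/2) ^ 2 = 1 := Real.sin_sq_add_cos_sq (θ/2)
    have hcθ : Real.cos θ = Real.cos (θ/2) ^ 2 - Real.sin (θ/2) ^ 2 := by
      have h2 : θ = 2 * (θ/2) := by ring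
      calc Real.cos θ = Real.cos (2 * (θ/2)) := by rw [← h2]
        _ = _ := by rw [Real.cos_two_mul]; nlinarith [hsc]
    have hsθ : Real.sin θ = 2 * Real.sin (θ/2) * Real.cos (θ/2) := by
      have h2 : θ = 2 * (θ/2) := by ring
      calc Real.sin θ = Real.sin (2 * (θ/2)) := by rw [← h2]
        _ = _ := Real.sin_two_mul (θ/2)
    simp only [Matrix.of_apply, Matrix.cons_val_zero, Matrix.cons_val_one,
      Matrix.head_cons] at h0 h1
    have hR' : R ≠ 0 := ne_of_gt hR0
    have e0 : (Real.cos (θ/2) ^ 2 - Real.sin (θ/2) ^ 2) * a θ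
        + (2 * Real.sin (θ/2) * Real.cos (θ/2)) * b θ = a θ := by
      apply mul_left_cancel₀ hR'
      rw [← hcθ, ← hsθ]
      linear_combination h0
    have e1 : (2 * Real.sin (θ/2) * Real.cos (θ/2)) * a θ
        - (Real.cos (θ/2) ^ 2 - Real.sin (θ/2) ^ 2) * b θ = b θ := by
      apply mul_left_cancel₀ hR'
      rw [← hcθ, ← hsθ]
      linear_combination h1
    linear_combination (-(Real.sin (θ/2))/2) * e0 + (Real.cos (θ/2)/2) * e1
      + (-(a θ * Real.sin (θ/2))/2 + (b θ * Real.cos (θ/2))/2) * hsc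
  -- f is ±1
  set f : ℝ → ℝ := fun θ => a θ * Real.cos (θ/2) + b θ * Real.sin (θ/2) with hf
  have hfsq : ∀ θ, f θ ^ 2 = 1 := by
    intro θ
    obtain ⟨hkey, hunit⟩ := heq θ
    have hsc : Real.sin (θ/2) ^ 2 + Real.cos (θ/2) ^ 2 = 1 := Real.sin_sq_add_cos_sq (θ/2)
    simp only [hf]
    nlinarith [hkey, hunit, hsc]
  -- continuity of f
  have hcont : Continuous f := by
    have hγc : Continuous γ := by fun_prop
    have hv : ∀ θ, ContinuousAt (fun q : ℝ × ℝ => v q) (γ θ) := fun θ =>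
      (hdiff (γ θ) (hmem θ)).continuousAt
    have hac : Continuous a := by
      rw [continuous_iff_continuousAt]
      intro θ
      exact ((continuous_apply (0 : Fin 2)).continuousAt.comp (hv θ)).comp hγc.continuousAt
    have hbc : Continuous b := by
      rw [continuous_iff_continuousAt]
      intro θ
      exact ((continuous_apply (1 : Fin 2)).continuousAt.comp (hv θ)).comp hγc.continuousAt
    fun_prop
  -- endpoint values
  have hγeq : γ (2 * π) = γ 0 := by
    simp [hγ, Real.cos_two_pi, Real.sin_two_pi]
  have hfend : f (2 * π) = - f 0 := by
    simp only [hf, ha, hb, hγeq]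
    rw [show (2 * π) / 2 = π by ring]
    rw [Real.cos_pi, Real.sin_pi]
    simp
  have hf0 : f 0 ^ 2 = 1 := hfsq 0
  -- IVT contradiction
  have h2π : (0:ℝ) ≤ 2 * π := by positivity
  have : (0:ℝ) ∈ f '' Set.Icc 0 (2*π) := by
    rcases le_or_gt (f 0) 0 with h | h
    · apply intermediate_value_Icc h2π hcont.continuousOn
      constructor
      · exact h
      · rw [hfend]; linarith
    · apply intermediate_value_Icc' h2π hcont.continuousOn
      constructor
      · rw [hfend]; linarith
      · exact h.le
  obtain ⟨θ, -, hθ⟩ := this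
  have := hfsq θ
  rw [hθ] at this
  norm_num at this
end
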